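/- arXiv:1207.1698 — 8 statements merged into one kernel-verified Lean document; each statement's English description precedes it below -/
import Mathlib

section
/- Let I ⊂ ℝ be an open interval, a, b ∈ I with a < b, let f : I → ℝ be a twice differentiable mapping such that f'' is integrable on [a,b], and let 0 ≤ λ ≤ 1. Then (λ − 1)·f((a+b)/2) − λ·(f(a)+f(b))/2 + (1/(b−a))·∫ₐᵇ f(x) dx = (b−a)² · ∫₀¹ k(t)·f''(t·a + (1−t)·b) dt, where k(t) = (1/2)·t·(t − λ) for 0 ≤ t ≤ 1/2 and k(t) = (1/2)·(1−t)·(1 − λ − t) for 1/2 ≤ t ≤ 1. -/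
open MeasureTheory Set

/-- Lemma (Sarikaya–Aktan): identity for twice differentiable functions. -/
theorem sarikaya_aktan_identity
    (I : Set ℝ) (hI : IsOpen I) (hI' : I.OrdConnected)
    (a b : ℝ) (ha : a ∈ I) (hb : b ∈ I) (hab : a < b)
    (f f' f'' : ℝ → ℝ)
    (hf' : ∀ x ∈ I, HasDerivAt f (f' x) x)
    (hf'' : ∀ x ∈ I, HasDerivAt f' (f'' x) x)
    (hint : IntervalIntegrable f'' volume a b)
    (lam : ℝ) (hlam0 : 0 ≤ lam) (hlam1 : lam ≤ 1) :
    (lam - 1) * f ((a + b) / 2) - lam * (f a + f b) / 2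
        + (1 / (b - a)) * ∫ x in a..b, f x
      = (b - a) ^ 2 *
        ∫ t in (0 : ℝ)..1,
          (if t ≤ 1 / 2 then (1 / 2) * t * (t - lam)
            else (1 / 2) * (1 - t) * (1 - lam - t)) * f'' (t * a + (1 - t) * b) := by
  have hne : a - b ≠ 0 := sub_ne_zero.mpr hab.ne
  have hIcc : Icc a b ⊆ I := hI'.out ha hb
  set φ : ℝ → ℝ := fun t => t * a + (1 - t) * b with hφdef
  have hφmem : ∀ t ∈ Icc (0:ℝ) 1, φ t ∈ I := by
    intro t ht
    apply hIcc
    simp only [hφdef, mem_Icc]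
    constructor <;> nlinarith [ht.1, ht.2, hab.le]
  have hφd : ∀ t : ℝ, HasDerivAt φ (a - b) t := by
    intro t
    have h1 : HasDerivAt (fun t : ℝ => t * a + (1 - t) * b) (1 * a + (0 - 1) * b) t :=
      ((hasDerivAt_id t).mul_const a).add
        (((hasDerivAt_const t (1:ℝ)).sub (hasDerivAt_id t)).mul_const b)
    convert h1 using 1
    ring
  have hφcont : Continuous φ := by fun_prop
  -- derivative facts
  have hg : ∀ t ∈ Icc (0:ℝ) 1, HasDerivAt (fun s => f (φ s)) (f' (φ t) * (a - b)) t := by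
    intro t ht
    exact (hf' (φ t) (hφmem t ht)).comp t (hφd t)
  have hG' : ∀ t ∈ Icc (0:ℝ) 1,
      HasDerivAt (fun s => f' (φ s) * (a - b)) (f'' (φ t) * (a - b) * (a - b)) t := by
    intro t ht
    exact ((hf'' (φ t) (hφmem t ht)).comp t (hφd t)).mul_const (a - b)
  -- continuity facts
  have hfc : ContinuousOn f I := fun x hx => (hf' x hx).continuousAt.continuousWithinAt
  have hf'c : ContinuousOn f' I := fun x hx => (hf'' x hx).continuousAt.continuousWithinAt
  have hgc : ContinuousOn (fun t => f (φ t)) (Icc (0:ℝ) 1) :=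
    hfc.comp hφcont.continuousOn hφmem
  have hG'c : ContinuousOn (fun t => f' (φ t) * (a - b)) (Icc (0:ℝ) 1) :=
    (hf'c.comp hφcont.continuousOn hφmem).mul continuousOn_const
  -- integrability of f'' ∘ φ on [0,1]
  have hint01 : IntervalIntegrable (fun t : ℝ => f'' (φ t)) volume 0 1 := by
    have h1 := hint.comp_add_right b
    have h2 := h1.comp_mul_left (c := a - b)
    rw [div_self hne, sub_self, zero_div] at h2
    have h3 : IntervalIntegrable (fun x : ℝ => f'' ((a - b) * x + b)) volume 1 0 := h2
    have key : (fun t : ℝ => f'' ((a - b) * t + b)) = fun t => f'' (φ t) := by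
      funext t; congr 1; simp only [hφdef]; ring
    rw [key] at h3
    exact h3.symm
  have hsub1 : uIcc (0:ℝ) (1/2) ⊆ uIcc (0:ℝ) 1 := by
    apply uIcc_subset_uIcc <;> simp [mem_uIcc] <;> norm_num
  have hsub2 : uIcc (1/2:ℝ) 1 ⊆ uIcc (0:ℝ) 1 := by
    apply uIcc_subset_uIcc <;> simp [mem_uIcc] <;> norm_num
  have hu1 : uIcc (0:ℝ) (1/2) = Icc (0:ℝ) (1/2) := uIcc_of_le (by norm_num)
  have hu2 : uIcc (1/2:ℝ) 1 = Icc (1/2:ℝ) 1 := uIcc_of_le (by norm_num)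
  have hu3 : uIcc (0:ℝ) 1 = Icc (0:ℝ) 1 := uIcc_of_le (by norm_num)
  have hsubIcc1 : Icc (0:ℝ) (1/2) ⊆ Icc (0:ℝ) 1 := Icc_subset_Icc le_rfl (by norm_num)
  have hsubIcc2 : Icc (1/2:ℝ) 1 ⊆ Icc (0:ℝ) 1 := Icc_subset_Icc (by norm_num) le_rfl
  have hintA : IntervalIntegrable (fun t : ℝ => f'' (φ t)) volume 0 (1/2) :=
    hint01.mono_set hsub1
  have hintB : IntervalIntegrable (fun t : ℝ => f'' (φ t)) volume (1/2) 1 :=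
    hint01.mono_set hsub2
  -- continuity of the kernel
  have hKcont : Continuous (fun t : ℝ =>
      if t ≤ 1/2 then (1/2)*t*(t-lam) else (1/2)*(1-t)*(1-lam-t)) := by
    apply Continuous.if_le (by fun_prop) (by fun_prop) continuous_id continuous_const
    intro x hx
    rw [show x = (1/2:ℝ) from hx]; ring
  -- integrability of kernel * f''∘φ on the pieces
  have hK1 : IntervalIntegrable (fun t : ℝ =>
      (if t ≤ 1/2 then (1/2)*t*(t-lam) else (1/2)*(1-t)*(1-lam-t)) * f'' (φ t))
      volume 0 (1/2) := hintA.continuousOn_mul hKcont.continuousOn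
  have hK2 : IntervalIntegrable (fun t : ℝ =>
      (if t ≤ 1/2 then (1/2)*t*(t-lam) else (1/2)*(1-t)*(1-lam-t)) * f'' (φ t))
      volume (1/2) 1 := hintB.continuousOn_mul hKcont.continuousOn
  -- split the main integral
  have hsplit : (∫ t in (0:ℝ)..(1/2),
        (if t ≤ 1/2 then (1/2)*t*(t-lam) else (1/2)*(1-t)*(1-lam-t)) * f'' (φ t))
      + (∫ t in (1/2:ℝ)..1,
        (if t ≤ 1/2 then (1/2)*t*(t-lam) else (1/2)*(1-t)*(1-lam-t)) * f'' (φ t))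
      = ∫ t in (0:ℝ)..1,
        (if t ≤ 1/2 then (1/2)*t*(t-lam) else (1/2)*(1-t)*(1-lam-t)) * f'' (φ t) :=
    intervalIntegral.integral_add_adjacent_intervals hK1 hK2
  -- replace if by branches on each piece
  have hA : (∫ t in (0:ℝ)..(1/2),
        (if t ≤ 1/2 then (1/2)*t*(t-lam) else (1/2)*(1-t)*(1-lam-t)) * f'' (φ t))
      = ∫ t in (0:ℝ)..(1/2), ((1/2)*t*(t-lam)) * f'' (φ t) := by
    apply intervalIntegral.integral_congr
    intro t ht
    rw [hu1] at ht
    dsimp only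
    rw [if_pos ht.2]
  have hB : (∫ t in (1/2:ℝ)..1,
        (if t ≤ 1/2 then (1/2)*t*(t-lam) else (1/2)*(1-t)*(1-lam-t)) * f'' (φ t))
      = ∫ t in (1/2:ℝ)..1, ((1/2)*(1-t)*(1-lam-t)) * f'' (φ t) := by
    apply intervalIntegral.integral_congr
    intro t ht
    rw [hu2] at ht
    dsimp only
    by_cases h : t ≤ 1/2
    · have ht2 : t = 1/2 := le_antisymm h ht.1
      subst ht2
      rw [if_pos le_rfl]
      ring_nf
    · rw [if_neg h]
  -- pull the constant (b-a)^2 inside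
  have hpullA : (∫ t in (0:ℝ)..(1/2), ((1/2)*t*(t-lam)) * (f'' (φ t) * (a-b) * (a-b)))
      = (b-a)^2 * ∫ t in (0:ℝ)..(1/2), ((1/2)*t*(t-lam)) * f'' (φ t) := by
    rw [← intervalIntegral.integral_const_mul]
    apply intervalIntegral.integral_congr
    intro t _
    ring
  have hpullB : (∫ t in (1/2:ℝ)..1, ((1/2)*(1-t)*(1-lam-t)) * (f'' (φ t) * (a-b) * (a-b)))
      = (b-a)^2 * ∫ t in (1/2:ℝ)..1, ((1/2)*(1-t)*(1-lam-t)) * f'' (φ t) := by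
    rw [← intervalIntegral.integral_const_mul]
    apply intervalIntegral.integral_congr
    intro t _
    ring
  -- elementary derivative facts for the kernel pieces
  have hkA : ∀ t : ℝ, HasDerivAt (fun t : ℝ => (1/2)*t*(t-lam)) (t - lam/2) t := by
    intro t
    have h : HasDerivAt (fun t : ℝ => (1/2)*t*(t-lam)) (1/2*1*(t-lam) + 1/2*t*1) t :=
      (((hasDerivAt_id t).const_mul (1/2:ℝ)).mul ((hasDerivAt_id t).sub_const lam))
    convert h using 1
    ring
  have hkA' : ∀ t : ℝ, HasDerivAt (fun t : ℝ => t - lam/2) 1 t :=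
    fun t => (hasDerivAt_id t).sub_const (lam/2)
  have hkB : ∀ t : ℝ, HasDerivAt (fun t : ℝ => (1/2)*(1-t)*(1-lam-t)) (t - 1 + lam/2) t := by
    intro t
    have h1 : HasDerivAt (fun t : ℝ => 1 - t) (-1) t := by
      simpa using (hasDerivAt_id' t).const_sub (1:ℝ)
    have h2 : HasDerivAt (fun t : ℝ => 1 - lam - t) (-1) t := by
      simpa using (hasDerivAt_id' t).const_sub (1-lam)
    have h3 : HasDerivAt (fun t : ℝ => (1/2)*(1-t)*(1-lam-t)) (1/2*(-1)*(1-lam-t) + 1/2*(1-t)*(-1)) t :=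
      (h1.const_mul (1/2:ℝ)).mul h2
    convert h3 using 1
    ring
  have hkB' : ∀ t : ℝ, HasDerivAt (fun t : ℝ => t - 1 + lam/2) 1 t := by
    intro t
    have h := ((hasDerivAt_id t).sub_const 1).add_const (lam/2)
    simpa using h
  have hG'iA : IntervalIntegrable (fun t => f' (φ t) * (a - b)) volume 0 (1/2) :=
    (by rw [hu1]; exact hG'c.mono hsubIcc1 :
      ContinuousOn (fun t => f' (φ t) * (a - b)) (uIcc (0:ℝ) (1/2))).intervalIntegrable
  have hG'iB : IntervalIntegrable (fun t => f' (φ t) * (a - b)) volume (1/2) 1 :=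
    (by rw [hu2]; exact hG'c.mono hsubIcc2 :
      ContinuousOn (fun t => f' (φ t) * (a - b)) (uIcc (1/2:ℝ) 1)).intervalIntegrable
  -- integration by parts, piece A
  have ibpA1 := intervalIntegral.integral_mul_deriv_eq_deriv_mul
    (a := (0:ℝ)) (b := (1/2:ℝ))
    (u := fun t : ℝ => (1/2)*t*(t-lam)) (u' := fun t : ℝ => t - lam/2)
    (v := fun t => f' (φ t) * (a - b)) (v' := fun t => f'' (φ t) * (a-b) * (a-b))
    (fun t _ => hkA t) (fun t ht => hG' t (hsubIcc1 (hu1 ▸ ht)))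
    ((by fun_prop : Continuous (fun t : ℝ => t - lam/2)).intervalIntegrable _ _)
    ((hintA.mul_const (a-b)).mul_const (a-b))
  have ibpA2 := intervalIntegral.integral_mul_deriv_eq_deriv_mul
    (a := (0:ℝ)) (b := (1/2:ℝ))
    (u := fun t : ℝ => t - lam/2) (u' := fun _ : ℝ => (1:ℝ))
    (v := fun t => f (φ t)) (v' := fun t => f' (φ t) * (a - b))
    (fun t _ => hkA' t) (fun t ht => hg t (hsubIcc1 (hu1 ▸ ht)))
    (continuous_const.intervalIntegrable _ _) hG'iA
  -- integration by parts, piece B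
  have ibpB1 := intervalIntegral.integral_mul_deriv_eq_deriv_mul
    (a := (1/2:ℝ)) (b := (1:ℝ))
    (u := fun t : ℝ => (1/2)*(1-t)*(1-lam-t)) (u' := fun t : ℝ => t - 1 + lam/2)
    (v := fun t => f' (φ t) * (a - b)) (v' := fun t => f'' (φ t) * (a-b) * (a-b))
    (fun t _ => hkB t) (fun t ht => hG' t (hsubIcc2 (hu2 ▸ ht)))
    ((by fun_prop : Continuous (fun t : ℝ => t - 1 + lam/2)).intervalIntegrable _ _)
    ((hintB.mul_const (a-b)).mul_const (a-b))
  have ibpB2 := intervalIntegral.integral_mul_deriv_eq_deriv_mul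
    (a := (1/2:ℝ)) (b := (1:ℝ))
    (u := fun t : ℝ => t - 1 + lam/2) (u' := fun _ : ℝ => (1:ℝ))
    (v := fun t => f (φ t)) (v' := fun t => f' (φ t) * (a - b))
    (fun t _ => hkB' t) (fun t ht => hg t (hsubIcc2 (hu2 ▸ ht)))
    (continuous_const.intervalIntegrable _ _) hG'iB
  beta_reduce at ibpA1 ibpA2 ibpB1 ibpB2
  -- joining the g-integrals
  have hone1 : (∫ t in (0:ℝ)..(1/2), (1:ℝ) * f (φ t)) = ∫ t in (0:ℝ)..(1/2), f (φ t) := by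
    simp
  have hone2 : (∫ t in (1/2:ℝ)..1, (1:ℝ) * f (φ t)) = ∫ t in (1/2:ℝ)..1, f (φ t) := by
    simp
  have hgint1 : IntervalIntegrable (fun t => f (φ t)) volume 0 (1/2) :=
    (by rw [hu1]; exact hgc.mono hsubIcc1 :
      ContinuousOn (fun t => f (φ t)) (uIcc (0:ℝ) (1/2))).intervalIntegrable
  have hgint2 : IntervalIntegrable (fun t => f (φ t)) volume (1/2) 1 :=
    (by rw [hu2]; exact hgc.mono hsubIcc2 :
      ContinuousOn (fun t => f (φ t)) (uIcc (1/2:ℝ) 1)).intervalIntegrable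
  have hgsplit : (∫ t in (0:ℝ)..(1/2), f (φ t)) + (∫ t in (1/2:ℝ)..1, f (φ t))
      = ∫ t in (0:ℝ)..1, f (φ t) :=
    intervalIntegral.integral_add_adjacent_intervals hgint1 hgint2
  -- change of variables for the g-integral
  have hsubst : (∫ t in (0:ℝ)..1, f (φ t)) = (1/(b-a)) * ∫ x in a..b, f x := by
    have h1 : (∫ t in (0:ℝ)..1, f (φ t)) = ∫ t in (0:ℝ)..1, f ((a-b) * t + b) := by
      apply intervalIntegral.integral_congr
      intro t _
      dsimp only
      congr 1
      simp only [hφdef]; ring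
    rw [h1, intervalIntegral.integral_comp_mul_add f hne b,
      show (a-b)*0+b = b by ring, show (a-b)*1+b = a by ring,
      intervalIntegral.integral_symm a b, smul_eq_mul,
      show (a-b:ℝ)⁻¹ = -(b-a)⁻¹ by rw [← neg_sub b a, inv_neg], one_div]
    ring
  -- values of φ at special points
  have hφ0 : f (φ 0) = f b := by norm_num [hφdef]
  have hφ1 : f (φ 1) = f a := by norm_num [hφdef]
  have hφh : f (φ (1/2)) = f ((a+b)/2) := by congr 1; simp only [hφdef]; ring
  have hφ1' : f' (φ 1) = f' a := by norm_num [hφdef]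
  rw [← hsplit, hA, hB]
  rw [hφ0, hφh] at ibpA2
  rw [hφ1, hφh] at ibpB2
  rw [hone1] at ibpA2
  rw [hone2] at ibpB2
  linear_combination hpullA + hpullB - ibpA1 - ibpB1 + ibpA2 + ibpB2 - hgsplit - hsubst
end

section
/- Let I ⊂ ℝ be an open interval, a, b ∈ I with a < b, f : I → ℝ a twice differentiable mapping such that f'' is integrable on [a,b], let q ≥ 1, and suppose |f''|^q belongs to the Godunova-Levin class Q(I). If 0 ≤ λ ≤ 1/2, then |(λ − 1)·f((a+b)/2) − λ·(f(a)+f(b))/2 + (1/(b−a))·∫ₐᵇ f(x) dx| ≤ ((b−a)²/2) · (λ³/3 + (1−3λ)/24)^(1 − 1/q) · { ( [λ² − (4λ−1)/8]·|f''(a)|^q + [(1−λ)·ln(2(1−λ)²) + (20λ − 8λ² − 5)/8]·|f''(b)|^q )^(1/q) + ( [(1−λ)·ln(2(1−λ)²) + (20λ − 8λ² − 5)/8]·|f''(a)|^q + [λ² − (4λ−1)/8]·|f''(b)|^q )^(1/q) }. -/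
open MeasureTheory Set Real
open scoped ENNReal

/-- A nonnegative function `g` belongs to the Godunova–Levin class `Q(I)` if for all
`x, y ∈ I` and `l ∈ (0,1)` one has `g (l*x + (1-l)*y) ≤ g x / l + g y / (1-l)`. -/
def GodunovaLevin (I : Set ℝ) (g : ℝ → ℝ) : Prop :=
  (∀ x ∈ I, 0 ≤ g x) ∧
    ∀ x ∈ I, ∀ y ∈ I, ∀ l : ℝ, 0 < l → l < 1 →
      g (l * x + (1 - l) * y) ≤ g x / l + g y / (1 - l)

lemma int_abs_tsub (lam : ℝ) (h0 : 0 ≤ lam) (h1 : lam ≤ 1/2) :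
    ∫ t in (0:ℝ)..(1/2), |t - lam| = lam^2 - (4*lam - 1)/8 := by
  have hd1 : ∀ t : ℝ, HasDerivAt (fun t => lam*t - t^2/2) (lam - t) t := by
    intro t
    have := ((hasDerivAt_id t).const_mul lam).sub ((hasDerivAt_pow 2 t).div_const 2)
    refine this.congr_deriv ?_; push_cast; ring
  have hd2 : ∀ t : ℝ, HasDerivAt (fun t => t^2/2 - lam*t) (t - lam) t := by
    intro t
    have := ((hasDerivAt_pow 2 t).div_const 2).sub ((hasDerivAt_id t).const_mul lam)
    refine this.congr_deriv ?_; push_cast; ring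
  have hsplit : ∫ t in (0:ℝ)..(1/2), |t - lam|
      = (∫ t in (0:ℝ)..lam, |t - lam|) + ∫ t in lam..(1/2), |t - lam| :=
    (intervalIntegral.integral_add_adjacent_intervals (by apply Continuous.intervalIntegrable; continuity)
      (by apply Continuous.intervalIntegrable; continuity)).symm
  have h1' : ∫ t in (0:ℝ)..lam, |t - lam| = ∫ t in (0:ℝ)..lam, (lam - t) := by
    apply intervalIntegral.integral_congr
    intro t ht
    rw [uIcc_of_le h0] at ht
    show |t - lam| = lam - t
    rw [abs_of_nonpos (by linarith [ht.2])]
    ring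
  have h2' : ∫ t in lam..(1/2), |t - lam| = ∫ t in lam..(1/2), (t - lam) := by
    apply intervalIntegral.integral_congr
    intro t ht
    rw [uIcc_of_le h1] at ht
    show |t - lam| = t - lam
    rw [abs_of_nonneg (by linarith [ht.1])]
  rw [hsplit, h1', h2',
    intervalIntegral.integral_eq_sub_of_hasDerivAt (fun t _ => hd1 t)
      (by apply Continuous.intervalIntegrable; continuity),
    intervalIntegral.integral_eq_sub_of_hasDerivAt (fun t _ => hd2 t)
      (by apply Continuous.intervalIntegrable; continuity)]
  ring

lemma int_w (lam : ℝ) (h0 : 0 ≤ lam) (h1 : lam ≤ 1/2) :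
    ∫ t in (0:ℝ)..(1/2), |t * (t - lam)| = lam^3/3 + (1 - 3*lam)/24 := by
  have hd1 : ∀ t : ℝ, HasDerivAt (fun t => lam*t^2/2 - t^3/3) (lam*t - t^2) t := by
    intro t
    have := (((hasDerivAt_pow 2 t).const_mul lam).div_const 2).sub ((hasDerivAt_pow 3 t).div_const 3)
    refine this.congr_deriv ?_; push_cast; ring
  have hd2 : ∀ t : ℝ, HasDerivAt (fun t => t^3/3 - lam*t^2/2) (t^2 - lam*t) t := by
    intro t
    have := ((hasDerivAt_pow 3 t).div_const 3).sub (((hasDerivAt_pow 2 t).const_mul lam).div_const 2)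
    refine this.congr_deriv ?_; push_cast; ring
  have hsplit : ∫ t in (0:ℝ)..(1/2), |t * (t - lam)|
      = (∫ t in (0:ℝ)..lam, |t * (t - lam)|) + ∫ t in lam..(1/2), |t * (t - lam)| :=
    (intervalIntegral.integral_add_adjacent_intervals (by apply Continuous.intervalIntegrable; continuity)
      (by apply Continuous.intervalIntegrable; continuity)).symm
  have h1' : ∫ t in (0:ℝ)..lam, |t * (t - lam)| = ∫ t in (0:ℝ)..lam, (lam*t - t^2) := by
    apply intervalIntegral.integral_congr
    intro t ht
    rw [uIcc_of_le h0] at ht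
    show |t * (t - lam)| = lam*t - t^2
    rw [abs_of_nonpos (mul_nonpos_of_nonneg_of_nonpos ht.1 (by linarith [ht.2]))]
    ring
  have h2' : ∫ t in lam..(1/2), |t * (t - lam)| = ∫ t in lam..(1/2), (t^2 - lam*t) := by
    apply intervalIntegral.integral_congr
    intro t ht
    rw [uIcc_of_le h1] at ht
    show |t * (t - lam)| = t^2 - lam*t
    rw [abs_of_nonneg (mul_nonneg (by linarith [ht.1]) (by linarith [ht.1]))]
    ring
  rw [hsplit, h1', h2',
    intervalIntegral.integral_eq_sub_of_hasDerivAt (fun t _ => hd1 t)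
      (by apply Continuous.intervalIntegrable; continuity),
    intervalIntegral.integral_eq_sub_of_hasDerivAt (fun t _ => hd2 t)
      (by apply Continuous.intervalIntegrable; continuity)]
  ring

lemma int_w_div (lam : ℝ) (h0 : 0 ≤ lam) (h1 : lam ≤ 1/2) :
    ∫ t in (0:ℝ)..(1/2), |t * (t - lam)|/(1-t)
      = (1-lam)*Real.log (2*(1-lam)^2) + (20*lam - 8*lam^2 - 5)/8 := by
  -- antiderivative on [0,lam]: F1 t = t + t^2/2 - lam*t + (1-lam)*log(1-t), F1' = (1+t-lam) - (1-lam)/(1-t)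
  have hlog : ∀ t ∈ Set.Icc (0:ℝ) (1/2), HasDerivAt (fun t => Real.log (1-t)) (-(1/(1-t))) t := by
    intro t ht
    have h : (1:ℝ) - t ≠ 0 := by simp only [Set.mem_Icc] at ht; intro h'; linarith [ht.2]
    have := (Real.hasDerivAt_log h).comp t ((hasDerivAt_id t).const_sub 1)
    refine this.congr_deriv ?_
    simp [div_eq_mul_inv]
  have hd1 : ∀ t ∈ Set.Icc (0:ℝ) lam, HasDerivAt
      (fun t => t + t^2/2 - lam*t + (1-lam)*Real.log (1-t))
      ((1 + t - lam) - (1-lam)/(1-t)) t := by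
    intro t ht
    simp only [Set.mem_Icc] at ht
    have := (((hasDerivAt_id t).add ((hasDerivAt_pow 2 t).div_const 2)).sub
      ((hasDerivAt_id t).const_mul lam)).add
      ((hlog t ⟨ht.1, by linarith [ht.2]⟩).const_mul (1-lam))
    refine this.congr_deriv ?_
    push_cast; field_simp; ring
  have hd2 : ∀ t ∈ Set.Icc lam (1/2), HasDerivAt
      (fun t => lam*t - t - t^2/2 - (1-lam)*Real.log (1-t))
      ((lam - 1 - t) + (1-lam)/(1-t)) t := by
    intro t ht
    simp only [Set.mem_Icc] at ht
    have := ((((hasDerivAt_id t).const_mul lam).sub (hasDerivAt_id t)).sub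
      ((hasDerivAt_pow 2 t).div_const 2)).sub
      ((hlog t ⟨by linarith [ht.1], ht.2⟩).const_mul (1-lam))
    refine this.congr_deriv ?_
    push_cast; field_simp; ring
  have hcont1 : ContinuousOn (fun t : ℝ => (1 + t - lam) - (1-lam)/(1-t)) (Set.uIcc 0 lam) := by
    apply ContinuousOn.sub (by fun_prop)
    apply ContinuousOn.div continuousOn_const (by fun_prop)
    intro t ht
    rw [uIcc_of_le h0, Set.mem_Icc] at ht
    intro h'; linarith [ht.2]
  have hcont2 : ContinuousOn (fun t : ℝ => (lam - 1 - t) + (1-lam)/(1-t)) (Set.uIcc lam (1/2)) := by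
    apply ContinuousOn.add (by fun_prop)
    apply ContinuousOn.div continuousOn_const (by fun_prop)
    intro t ht
    rw [uIcc_of_le h1, Set.mem_Icc] at ht
    intro h'; linarith [ht.2]
  have hsplit : ∫ t in (0:ℝ)..(1/2), |t * (t - lam)|/(1-t)
      = (∫ t in (0:ℝ)..lam, |t * (t - lam)|/(1-t)) + ∫ t in lam..(1/2), |t * (t - lam)|/(1-t) := by
    refine (intervalIntegral.integral_add_adjacent_intervals ?_ ?_).symm
    · apply ContinuousOn.intervalIntegrable
      apply ContinuousOn.div (by fun_prop) (by fun_prop)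
      intro t ht
      rw [uIcc_of_le h0, Set.mem_Icc] at ht
      intro h'; linarith [ht.2]
    · apply ContinuousOn.intervalIntegrable
      apply ContinuousOn.div (by fun_prop) (by fun_prop)
      intro t ht
      rw [uIcc_of_le h1, Set.mem_Icc] at ht
      intro h'; linarith [ht.2]
  have h1' : ∫ t in (0:ℝ)..lam, |t * (t - lam)|/(1-t)
      = ∫ t in (0:ℝ)..lam, ((1 + t - lam) - (1-lam)/(1-t)) := by
    apply intervalIntegral.integral_congr
    intro t ht
    rw [uIcc_of_le h0, Set.mem_Icc] at ht
    show |t * (t - lam)|/(1-t) = (1 + t - lam) - (1-lam)/(1-t)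
    have h1t : (1:ℝ) - t > 0 := by linarith [ht.2]
    rw [abs_of_nonpos (mul_nonpos_of_nonneg_of_nonpos ht.1 (by linarith [ht.2]))]
    field_simp
    ring
  have h2' : ∫ t in lam..(1/2), |t * (t - lam)|/(1-t)
      = ∫ t in lam..(1/2), ((lam - 1 - t) + (1-lam)/(1-t)) := by
    apply intervalIntegral.integral_congr
    intro t ht
    rw [uIcc_of_le h1, Set.mem_Icc] at ht
    show |t * (t - lam)|/(1-t) = (lam - 1 - t) + (1-lam)/(1-t)
    have h1t : (1:ℝ) - t > 0 := by linarith [ht.2]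
    rw [abs_of_nonneg (mul_nonneg (by linarith [ht.1]) (by linarith [ht.1]))]
    field_simp
    ring
  rw [hsplit, h1', h2',
    intervalIntegral.integral_eq_sub_of_hasDerivAt (fun t ht => hd1 t (by rwa [uIcc_of_le h0] at ht))
      (hcont1.intervalIntegrable),
    intervalIntegral.integral_eq_sub_of_hasDerivAt (fun t ht => hd2 t (by rwa [uIcc_of_le h1] at ht))
      (hcont2.intervalIntegrable)]
  have e1 : Real.log (1 - lam) = Real.log (1-lam) := rfl
  have hpos : (0:ℝ) < 1 - lam := by linarith
  have hlog2 : Real.log (2*(1-lam)^2) = Real.log 2 + 2 * Real.log (1-lam) := by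
    rw [Real.log_mul (by norm_num) (by positivity), Real.log_pow]
    push_cast; ring
  have hloghalf : Real.log (1 - (1:ℝ)/2) = - Real.log 2 := by
    rw [show (1:ℝ) - 1/2 = 2⁻¹ by norm_num, Real.log_inv]
  rw [hlog2, hloghalf, show (1:ℝ)-0 = 1 by norm_num, Real.log_one]
  ring

lemma weighted_power_mean (μ : Measure ℝ) (q : ℝ) (hq : 1 ≤ q)
    (w φ : ℝ → ℝ) (hw : Continuous w) (hw0 : ∀ t, 0 ≤ w t) (hφ0 : ∀ t, 0 ≤ φ t)
    (hφm : AEStronglyMeasurable φ μ)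
    (hw_int : Integrable w μ)
    (hint : Integrable (fun t => w t * φ t ^ q) μ) :
    ∫ t, w t * φ t ∂μ
      ≤ (∫ t, w t ∂μ) ^ (1 - 1/q) * (∫ t, w t * φ t ^ q ∂μ) ^ (1/q) := by
  rcases eq_or_lt_of_le hq with hq1 | hq1
  · rw [← hq1]
    simp only [sub_self, Real.rpow_zero, one_mul, div_one, Real.rpow_one]
    exact le_refl _
  · have hq0 : (0:ℝ) < q := by linarith
    set p : ℝ := q / (q - 1) with hp_def
    have hp1 : 1 < p := by
      rw [hp_def, lt_div_iff₀ (by linarith)]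
      linarith
    have hp0 : (0:ℝ) < p := by linarith
    have hpq : p.HolderConjugate q := (Real.HolderConjugate.conjExponent hq1).symm
    have hne1 : q - 1 ≠ 0 := by linarith
    have hinv : 1 / p = 1 - 1 / q := by
      rw [hp_def]
      field_simp
    have hexp0 : (0:ℝ) < 1 - 1/q := by rw [← hinv]; positivity
    set f : ℝ → ℝ := fun t => w t ^ (1 - 1/q) with hf_def
    set g : ℝ → ℝ := fun t => w t ^ (1/q) * φ t with hg_def
    have key1 : ∀ t, f t * g t = w t * φ t := by
      intro t
      rcases eq_or_lt_of_le (hw0 t) with h | h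
      · show w t ^ (1 - 1/q) * (w t ^ (1/q) * φ t) = w t * φ t
        rw [← h, Real.zero_rpow hexp0.ne', Real.zero_rpow (by positivity : (1/q : ℝ) ≠ 0)]
        ring
      · simp only [hf_def, hg_def, ← mul_assoc]
        rw [← Real.rpow_add h]
        norm_num
    have key2 : ∀ t, f t ^ p = w t := by
      intro t
      simp only [hf_def]
      have hne : q - 1 ≠ 0 := by linarith
      rw [← Real.rpow_mul (hw0 t), show (1 - 1/q) * p = 1 by
        rw [hp_def]; field_simp, Real.rpow_one]
    have key3 : ∀ t, g t ^ q = w t * φ t ^ q := by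
      intro t
      simp only [hg_def]
      rw [Real.mul_rpow (Real.rpow_nonneg (hw0 t) _) (hφ0 t),
        ← Real.rpow_mul (hw0 t), show (1/q) * q = 1 by field_simp, Real.rpow_one]
    have hwm : AEStronglyMeasurable w μ := hw.aestronglyMeasurable
    have hgc : Continuous (fun t => w t ^ (1/q)) :=
      hw.rpow_const (fun x => Or.inr (by positivity))
    have hgm : AEStronglyMeasurable g μ := hgc.aestronglyMeasurable.mul hφm
    -- Memℒp f (ofReal p)
    have hMf : MemLp f (ENNReal.ofReal p) μ := by
      have hne : ENNReal.ofReal (1/p) ≠ 0 := by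
        rw [Ne, ENNReal.ofReal_eq_zero, not_le]
        positivity
      have h := (memLp_norm_rpow_iff hwm hne ENNReal.ofReal_ne_top).mpr
        (memLp_one_iff_integrable.mpr hw_int)
      have e1 : (ENNReal.ofReal (1/p)).toReal = 1/p := ENNReal.toReal_ofReal (by positivity)
      have e2 : (1 : ℝ≥0∞) / ENNReal.ofReal (1/p) = ENNReal.ofReal p := by
        rw [one_div, one_div, ENNReal.ofReal_inv_of_pos hp0, inv_inv]
      rw [e1, e2] at h
      have e3 : (fun x => ‖w x‖ ^ (1/p)) = f := by
        funext t
        rw [Real.norm_of_nonneg (hw0 t), hinv]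
      rwa [e3] at h
    -- Memℒp g (ofReal q)
    have hMg : MemLp g (ENNReal.ofReal q) μ := by
      have hne : ENNReal.ofReal q ≠ 0 := by
        rw [Ne, ENNReal.ofReal_eq_zero, not_le]
        positivity
      apply (memLp_norm_rpow_iff hgm hne ENNReal.ofReal_ne_top).mp
      have e4 : ENNReal.ofReal q / ENNReal.ofReal q = 1 :=
        ENNReal.div_self hne ENNReal.ofReal_ne_top
      rw [e4]
      have e5 : (fun x => ‖g x‖ ^ (ENNReal.ofReal q).toReal) = fun t => w t * φ t ^ q := by
        funext t
        rw [ENNReal.toReal_ofReal hq0.le,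
          Real.norm_of_nonneg (mul_nonneg (Real.rpow_nonneg (hw0 t) _) (hφ0 t)), key3]
      rw [e5]
      exact memLp_one_iff_integrable.mpr hint
    have H := MeasureTheory.integral_mul_le_Lp_mul_Lq_of_nonneg hpq
      (Filter.Eventually.of_forall (fun t => Real.rpow_nonneg (hw0 t) _))
      (Filter.Eventually.of_forall (fun t => mul_nonneg (Real.rpow_nonneg (hw0 t) _) (hφ0 t)))
      hMf hMg
    simp only [hf_def, hg_def] at key1 key2 key3; simp only [key1, key2, key3] at H
    rwa [hinv] at H

lemma core (q : ℝ) (hq : 1 ≤ q) (lam : ℝ) (h0 : 0 ≤ lam) (h1 : lam ≤ 1/2)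
    (A B : ℝ) (hA : 0 ≤ A) (hB : 0 ≤ B) (φ : ℝ → ℝ) (hφ0 : ∀ t, 0 ≤ φ t)
    (hφm : AEStronglyMeasurable φ (volume.restrict (Ioc (0:ℝ) (1/2))))
    (hbound : ∀ t ∈ Ioc (0:ℝ) (1/2), φ t ^ q ≤ A / t + B / (1 - t)) :
    ∫ t in (0:ℝ)..(1/2), |t * (t - lam)| * φ t
      ≤ (lam^3/3 + (1 - 3*lam)/24) ^ (1 - 1/q) *
        ((lam^2 - (4*lam - 1)/8) * A
          + ((1-lam)*Real.log (2*(1-lam)^2) + (20*lam - 8*lam^2 - 5)/8) * B) ^ (1/q) := by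
  have hq0 : (0:ℝ) < q := by linarith
  set w : ℝ → ℝ := fun t => |t * (t - lam)| with hw_def
  have hwc : Continuous w := by fun_prop
  have hw0 : ∀ t, 0 ≤ w t := fun t => abs_nonneg _
  set μ := volume.restrict (Ioc (0:ℝ) (1/2)) with hμ_def
  set G : ℝ → ℝ := fun t => A * |t - lam| + B * (w t / (1 - t)) with hG_def
  have hGc : ContinuousOn G (Icc (0:ℝ) (1/2)) := by
    apply ContinuousOn.add (by fun_prop)
    apply ContinuousOn.mul continuousOn_const
    apply ContinuousOn.div hwc.continuousOn (by fun_prop)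
    intro t ht
    rw [Set.mem_Icc] at ht
    intro h'; linarith [ht.2]
  have hG_int : Integrable G μ :=
    (hGc.integrableOn_Icc).mono_set Ioc_subset_Icc_self
  have hptwise : ∀ t ∈ Ioc (0:ℝ) (1/2), w t * φ t ^ q ≤ G t := by
    intro t ht
    have ht0 : 0 < t := ht.1
    have ht2 : t ≤ 1/2 := ht.2
    have key : w t * (A / t + B / (1 - t)) = G t := by
      have hwt : w t = t * |t - lam| := by
        rw [hw_def]
        show |t * (t - lam)| = t * |t - lam|
        rw [abs_mul, abs_of_pos ht0]
      rw [hG_def]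
      show w t * (A / t + B / (1 - t)) = A * |t - lam| + B * (w t / (1 - t))
      rw [mul_add]
      congr 1
      · rw [hwt]
        field_simp
      · ring
    calc w t * φ t ^ q ≤ w t * (A / t + B / (1 - t)) :=
          mul_le_mul_of_nonneg_left (hbound t ht) (hw0 t)
      _ = G t := key
  have hφqm : AEStronglyMeasurable (fun t => φ t ^ q) μ :=
    (Real.continuous_rpow_const hq0.le).comp_aestronglyMeasurable hφm
  have hwφqm : AEStronglyMeasurable (fun t => w t * φ t ^ q) μ :=
    hwc.aestronglyMeasurable.mul hφqm
  have hwφq_int : Integrable (fun t => w t * φ t ^ q) μ := by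
    apply Integrable.mono' hG_int hwφqm
    rw [hμ_def, ae_restrict_iff' measurableSet_Ioc]
    apply Filter.Eventually.of_forall
    intro t ht
    rw [Real.norm_of_nonneg (mul_nonneg (hw0 t) (Real.rpow_nonneg (hφ0 t) q))]
    exact hptwise t ht
  have hw_int : Integrable w μ :=
    (hwc.continuousOn.integrableOn_Icc).mono_set Ioc_subset_Icc_self
  -- interval integral to set integral
  have hconv : ∀ h : ℝ → ℝ, ∫ t in (0:ℝ)..(1/2), h t = ∫ t, h t ∂μ := by
    intro h
    rw [intervalIntegral.integral_of_le (by norm_num : (0:ℝ) ≤ 1/2), hμ_def]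
  have hstep1 : ∫ t, w t * φ t ∂μ
      ≤ (∫ t, w t ∂μ) ^ (1 - 1/q) * (∫ t, w t * φ t ^ q ∂μ) ^ (1/q) :=
    weighted_power_mean μ q hq w φ hwc hw0 hφ0 hφm hw_int hwφq_int
  have hIw : ∫ t, w t ∂μ = lam^3/3 + (1 - 3*lam)/24 := by
    rw [← hconv w]
    exact int_w lam h0 h1
  have hstep2 : ∫ t, w t * φ t ^ q ∂μ
      ≤ (lam^2 - (4*lam - 1)/8) * A
          + ((1-lam)*Real.log (2*(1-lam)^2) + (20*lam - 8*lam^2 - 5)/8) * B := by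
    have hmono : ∫ t, w t * φ t ^ q ∂μ ≤ ∫ t, G t ∂μ := by
      apply integral_mono_ae hwφq_int hG_int
      filter_upwards [ae_restrict_mem measurableSet_Ioc] with t ht using hptwise t ht
    have hGeq : ∫ t, G t ∂μ
        = A * (lam^2 - (4*lam - 1)/8)
          + B * ((1-lam)*Real.log (2*(1-lam)^2) + (20*lam - 8*lam^2 - 5)/8) := by
      have i1 : Integrable (fun t => A * |t - lam|) μ := by
        apply Integrable.const_mul
        exact ((continuous_abs.comp (by fun_prop)).continuousOn.integrableOn_Icc).mono_set
          Ioc_subset_Icc_self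
      have i2 : Integrable (fun t => B * (w t / (1 - t))) μ := by
        apply Integrable.const_mul
        have : ContinuousOn (fun t => w t / (1 - t)) (Icc (0:ℝ) (1/2)) := by
          apply ContinuousOn.div hwc.continuousOn (by fun_prop)
          intro t ht
          rw [Set.mem_Icc] at ht
          intro h'; linarith [ht.2]
        exact (this.integrableOn_Icc).mono_set Ioc_subset_Icc_self
      rw [hG_def]
      show ∫ t, (A * |t - lam| + B * (w t / (1 - t))) ∂μ = _
      rw [integral_add i1 i2, integral_const_mul, integral_const_mul,
        ← hconv (fun t => |t - lam|), ← hconv (fun t => w t / (1 - t)),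
        int_abs_tsub lam h0 h1]
      congr 1
      rw [int_w_div lam h0 h1]
    rw [hGeq] at hmono
    calc ∫ t, w t * φ t ^ q ∂μ ≤ _ := hmono
      _ = _ := by ring
  rw [hconv]
  refine hstep1.trans ?_
  rw [hIw]
  have hI0 : (0:ℝ) ≤ lam^3/3 + (1 - 3*lam)/24 := by
    nlinarith [mul_nonneg (mul_nonneg h0 h0) h0, sq_nonneg (lam*2 - 1/2),
      mul_nonneg h0 (sub_nonneg.mpr h1), sq_nonneg lam]
  apply mul_le_mul_of_nonneg_left _ (Real.rpow_nonneg hI0 _)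
  exact Real.rpow_le_rpow
    (integral_nonneg (fun t => mul_nonneg (hw0 t) (Real.rpow_nonneg (hφ0 t) q)))
    hstep2 (by positivity)

lemma ibp_identity
    (I : Set ℝ) (hI : IsOpen I) (hI' : I.OrdConnected)
    (a b : ℝ) (ha : a ∈ I) (hb : b ∈ I) (hab : a < b)
    (f f' f'' : ℝ → ℝ)
    (hf' : ∀ x ∈ I, HasDerivAt f (f' x) x)
    (hf'' : ∀ x ∈ I, HasDerivAt f' (f'' x) x)
    (hint : IntervalIntegrable f'' volume a b)
    (lam : ℝ) :
    (∫ s in a..((a+b)/2), ((lam-1)*((a+b)/2-s) - lam*(b-s)/2 + (b-s)^2/(2*(b-a))) * f'' s)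
      + ∫ s in ((a+b)/2)..b, (-(lam*(b-s)/2) + (b-s)^2/(2*(b-a))) * f'' s
    = (lam - 1) * f ((a+b)/2) - lam * (f a + f b) / 2 + (1/(b-a)) * ∫ x in a..b, f x := by
  set m : ℝ := (a+b)/2 with hm_def
  have hd : (0:ℝ) < b - a := by linarith
  have hdne : b - a ≠ 0 := hd.ne'
  have ham : a ≤ m := by rw [hm_def]; linarith
  have hmb : m ≤ b := by rw [hm_def]; linarith
  have hsub : Set.Icc a b ⊆ I := hI'.out ha hb
  have hmemI : ∀ x ∈ Set.Icc a b, x ∈ I := fun x hx => hsub hx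
  have hsub1 : Set.uIcc a m ⊆ Set.Icc a b := by
    rw [Set.uIcc_of_le ham]
    exact Set.Icc_subset_Icc le_rfl hmb
  have hsub2 : Set.uIcc m b ⊆ Set.Icc a b := by
    rw [Set.uIcc_of_le hmb]
    exact Set.Icc_subset_Icc ham le_rfl
  have hsub1' : Set.uIcc a m ⊆ Set.uIcc a b := by
    rw [Set.uIcc_of_le hab.le]
    exact hsub1
  have hsub2' : Set.uIcc m b ⊆ Set.uIcc a b := by
    rw [Set.uIcc_of_le hab.le]
    exact hsub2
  have hf'cont : ContinuousOn f' (Set.Icc a b) :=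
    fun x hx => ((hf'' x (hmemI x hx)).continuousAt).continuousWithinAt
  have hfcont : ContinuousOn f (Set.Icc a b) :=
    fun x hx => ((hf' x (hmemI x hx)).continuousAt).continuousWithinAt
  set K1 : ℝ → ℝ := fun s => (lam-1)*(m-s) - lam*(b-s)/2 + (b-s)^2/(2*(b-a)) with hK1_def
  set K1' : ℝ → ℝ := fun s => (1-lam) + lam/2 - (b-s)/(b-a) with hK1'_def
  set K2 : ℝ → ℝ := fun s => -(lam*(b-s)/2) + (b-s)^2/(2*(b-a)) with hK2_def
  set K2' : ℝ → ℝ := fun s => lam/2 - (b-s)/(b-a) with hK2'_def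
  have hbs : ∀ s : ℝ, HasDerivAt (fun s : ℝ => (b-s)^2/(2*(b-a))) (-((b-s)/(b-a))) s := by
    intro s
    have := (((hasDerivAt_id s).const_sub b).pow 2).div_const (2*(b-a))
    refine this.congr_deriv ?_
    simp only [id]; field_simp
    ring
  have hlam2 : ∀ s : ℝ, HasDerivAt (fun s : ℝ => lam*(b-s)/2) (-(lam/2)) s := by
    intro s
    have := (((hasDerivAt_id s).const_sub b).const_mul lam).div_const 2
    refine this.congr_deriv ?_; ring
  have hK1d : ∀ s : ℝ, HasDerivAt K1 (K1' s) s := by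
    intro s
    have h1 : HasDerivAt (fun s : ℝ => (lam-1)*(m-s)) (-(lam-1)) s := by
      have := ((hasDerivAt_id s).const_sub m).const_mul (lam-1)
      refine this.congr_deriv ?_; ring
    have := (h1.sub (hlam2 s)).add (hbs s)
    refine this.congr_deriv ?_
    rw [hK1'_def]
    ring
  have hK2d : ∀ s : ℝ, HasDerivAt K2 (K2' s) s := by
    intro s
    have := ((hlam2 s).neg).add (hbs s)
    refine this.congr_deriv ?_
    rw [hK2'_def]
    ring
  have hK1'd : ∀ x : ℝ, HasDerivAt K1' (1/(b-a)) x := by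
    intro x
    have h0 := ((hasDerivAt_id x).const_sub b).div_const (b-a)
    have h1 := (hasDerivAt_const x ((1-lam) + lam/2)).sub h0
    refine h1.congr_deriv ?_
    field_simp; ring
  have hK2'd : ∀ x : ℝ, HasDerivAt K2' (1/(b-a)) x := by
    intro x
    have h0 := ((hasDerivAt_id x).const_sub b).div_const (b-a)
    have h1 := (hasDerivAt_const x (lam/2)).sub h0
    refine h1.congr_deriv ?_
    field_simp; ring
  have hK1c : Continuous K1' := by rw [hK1'_def]; fun_prop
  have hK2c : Continuous K2' := by rw [hK2'_def]; fun_prop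
  have ibp1 : ∫ s in a..m, K1 s * f'' s
      = K1 m * f' m - K1 a * f' a - ∫ s in a..m, K1' s * f' s := by
    apply intervalIntegral.integral_mul_deriv_eq_deriv_mul
    · exact fun x _ => hK1d x
    · exact fun x hx => hf'' x (hmemI x (hsub1 hx))
    · exact hK1c.intervalIntegrable _ _
    · exact hint.mono_set hsub1'
  have ibp2 : ∫ s in a..m, K1' s * f' s
      = K1' m * f m - K1' a * f a - ∫ s in a..m, (1/(b-a)) * f s := by
    apply intervalIntegral.integral_mul_deriv_eq_deriv_mul
    · exact fun x _ => hK1'd x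
    · exact fun x hx => hf' x (hmemI x (hsub1 hx))
    · exact intervalIntegrable_const
    · exact (hf'cont.mono hsub1).intervalIntegrable
  have ibp3 : ∫ s in m..b, K2 s * f'' s
      = K2 b * f' b - K2 m * f' m - ∫ s in m..b, K2' s * f' s := by
    apply intervalIntegral.integral_mul_deriv_eq_deriv_mul
    · exact fun x _ => hK2d x
    · exact fun x hx => hf'' x (hmemI x (hsub2 hx))
    · exact hK2c.intervalIntegrable _ _
    · exact hint.mono_set hsub2'
  have ibp4 : ∫ s in m..b, K2' s * f' s
      = K2' b * f b - K2' m * f m - ∫ s in m..b, (1/(b-a)) * f s := by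
    apply intervalIntegral.integral_mul_deriv_eq_deriv_mul
    · exact fun x _ => hK2'd x
    · exact fun x hx => hf' x (hmemI x (hsub2 hx))
    · exact intervalIntegrable_const
    · exact (hf'cont.mono hsub2).intervalIntegrable
  have e1 : K1 a = 0 := by
    rw [hK1_def]
    show (lam-1)*(m-a) - lam*(b-a)/2 + (b-a)^2/(2*(b-a)) = 0
    rw [hm_def]
    field_simp
    ring
  have e2 : K2 b = 0 := by
    rw [hK2_def]
    show -(lam*(b-b)/2) + (b-b)^2/(2*(b-a)) = 0
    simp
  have e3 : K1 m = K2 m := by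
    rw [hK1_def, hK2_def]
    show (lam-1)*(m-m) - lam*(b-m)/2 + (b-m)^2/(2*(b-a))
        = -(lam*(b-m)/2) + (b-m)^2/(2*(b-a))
    ring
  have e4 : K1' m = 1/2 - lam/2 := by
    rw [hK1'_def]
    show (1-lam) + lam/2 - (b-m)/(b-a) = 1/2 - lam/2
    rw [hm_def]
    field_simp
    ring
  have e5 : K1' a = -(lam/2) := by
    rw [hK1'_def]
    show (1-lam) + lam/2 - (b-a)/(b-a) = -(lam/2)
    rw [div_self hdne]
    ring
  have e6 : K2' b = lam/2 := by
    rw [hK2'_def]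
    show lam/2 - (b-b)/(b-a) = lam/2
    simp
  have e7 : K2' m = lam/2 - 1/2 := by
    rw [hK2'_def]
    show lam/2 - (b-m)/(b-a) = lam/2 - 1/2
    rw [hm_def]
    field_simp
    ring
  have hadd : (∫ s in a..m, f s) + ∫ s in m..b, f s = ∫ s in a..b, f s :=
    intervalIntegral.integral_add_adjacent_intervals ((hfcont.mono hsub1).intervalIntegrable)
      ((hfcont.mono hsub2).intervalIntegrable)
  rw [ibp1, ibp2, ibp3, ibp4, e1, e2, e3, e4, e5, e6, e7,
    intervalIntegral.integral_const_mul, intervalIntegral.integral_const_mul,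
    ← hadd]
  ring



theorem godunova_levin_power_mean_ineq_first_case
    (I : Set ℝ) (hI : IsOpen I) (hI' : I.OrdConnected)
    (a b : ℝ) (ha : a ∈ I) (hb : b ∈ I) (hab : a < b)
    (f f' f'' : ℝ → ℝ)
    (hf' : ∀ x ∈ I, HasDerivAt f (f' x) x)
    (hf'' : ∀ x ∈ I, HasDerivAt f' (f'' x) x)
    (hint : IntervalIntegrable f'' volume a b)
    (q : ℝ) (hq : 1 ≤ q)
    (hQ : GodunovaLevin I (fun x => |f'' x| ^ q))
    (lam : ℝ) (hlam0 : 0 ≤ lam) (hlam1 : lam ≤ 1 / 2) :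
    |(lam - 1) * f ((a + b) / 2) - lam * (f a + f b) / 2
        + (1 / (b - a)) * ∫ x in a..b, f x|
      ≤ ((b - a) ^ 2 / 2) * (lam ^ 3 / 3 + (1 - 3 * lam) / 24) ^ (1 - 1 / q) *
        (((lam ^ 2 - (4 * lam - 1) / 8) * |f'' a| ^ q
            + ((1 - lam) * Real.log (2 * (1 - lam) ^ 2)
                + (20 * lam - 8 * lam ^ 2 - 5) / 8) * |f'' b| ^ q) ^ (1 / q)
          + (((1 - lam) * Real.log (2 * (1 - lam) ^ 2)
                + (20 * lam - 8 * lam ^ 2 - 5) / 8) * |f'' a| ^ q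
            + (lam ^ 2 - (4 * lam - 1) / 8) * |f'' b| ^ q) ^ (1 / q)) := by
  have hd : (0:ℝ) < b - a := by linarith
  have hdne : b - a ≠ 0 := hd.ne'
  set m : ℝ := (a+b)/2 with hm_def
  have ham : a ≤ m := by rw [hm_def]; linarith
  have hmb : m ≤ b := by rw [hm_def]; linarith
  have hsub : Set.Icc a b ⊆ I := hI'.out ha hb
  -- the two kernel integrands
  set F1 : ℝ → ℝ := fun s => |((lam-1)*(m-s) - lam*(b-s)/2 + (b-s)^2/(2*(b-a))) * f'' s|
    with hF1_def
  set F2 : ℝ → ℝ := fun s => |(-(lam*(b-s)/2) + (b-s)^2/(2*(b-a))) * f'' s| with hF2_def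
  -- measurability of |f'' ∘ affine|
  have hf''meas : ∀ c d : ℝ, (∀ t ∈ Ioc (0:ℝ) (1/2), c*t + d ∈ Set.Icc a b) →
      AEStronglyMeasurable (fun t => |f'' (c*t + d)|) (volume.restrict (Ioc (0:ℝ) (1/2))) := by
    intro c d hcd
    have h1 : Measurable (fun t : ℝ => |deriv f' (c*t + d)|) :=
      ((measurable_deriv f').comp (by fun_prop)).abs
    apply h1.aestronglyMeasurable.congr
    filter_upwards [ae_restrict_mem measurableSet_Ioc] with t ht
    have : HasDerivAt f' (f'' (c*t + d)) (c*t + d) := hf'' _ (hsub (hcd t ht))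
    rw [this.deriv]
  -- bound for T2
  have hT2 : |∫ s in m..b, (-(lam*(b-s)/2) + (b-s)^2/(2*(b-a))) * f'' s|
      ≤ ((b-a)^2/2) * ((lam^3/3 + (1 - 3*lam)/24) ^ (1 - 1/q) *
        ((lam^2 - (4*lam - 1)/8) * |f'' a| ^ q
          + ((1-lam)*Real.log (2*(1-lam)^2) + (20*lam - 8*lam^2 - 5)/8) * |f'' b| ^ q) ^ (1/q)) := by
    have habs : |∫ s in m..b, (-(lam*(b-s)/2) + (b-s)^2/(2*(b-a))) * f'' s|
        ≤ ∫ s in m..b, F2 s := by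
      rw [hF2_def]
      exact intervalIntegral.abs_integral_le_integral_abs hmb
    have hcomp := intervalIntegral.integral_comp_mul_add (f := F2) (a := (0:ℝ)) (b := 1/2)
      (c := -(b-a)) (neg_ne_zero.mpr hdne) b
    rw [show -(b-a)*0 + b = b by ring, show -(b-a)*(1/2) + b = m by rw [hm_def]; ring,
      intervalIntegral.integral_symm m b, smul_eq_mul] at hcomp
    have hsubst : ∫ s in m..b, F2 s = (b-a) * ∫ t in (0:ℝ)..(1/2), F2 (-(b-a)*t + b) := by
      rw [hcomp, inv_neg, mul_neg, neg_mul, neg_neg, ← mul_assoc, mul_inv_cancel₀ hdne, one_mul]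
    have hptF2 : ∀ t : ℝ, F2 (-(b-a)*t + b)
        = ((b-a)/2) * (|t * (t - lam)| * |f'' (t*a + (1-t)*b)|) := by
      intro t
      rw [hF2_def]
      show |(-(lam*(b - (-(b-a)*t + b))/2) + (b - (-(b-a)*t + b))^2/(2*(b-a)))
          * f'' (-(b-a)*t + b)| = _
      rw [show b - (-(b-a)*t + b) = (b-a)*t by ring]
      rw [show -(lam*((b-a)*t)/2) + ((b-a)*t)^2/(2*(b-a)) = ((b-a)/2) * (t * (t - lam)) by
        field_simp; ring]
      rw [show -(b-a)*t + b = t*a + (1-t)*b by ring]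
      rw [abs_mul, abs_mul, abs_of_pos (by linarith : (0:ℝ) < (b-a)/2)]
      ring
    have hφ : ∫ t in (0:ℝ)..(1/2), F2 (-(b-a)*t + b)
        = ((b-a)/2) * ∫ t in (0:ℝ)..(1/2), |t * (t - lam)| * |f'' (t*a + (1-t)*b)| := by
      rw [← intervalIntegral.integral_const_mul]
      apply intervalIntegral.integral_congr
      intro t _
      exact hptF2 t
    have hcore := core q hq lam hlam0 hlam1 (|f'' a| ^ q) (|f'' b| ^ q)
      (Real.rpow_nonneg (abs_nonneg _) q) (Real.rpow_nonneg (abs_nonneg _) q)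
      (fun t => |f'' (t*a + (1-t)*b)|) (fun t => abs_nonneg _)
      (by
        have := hf''meas (a - b) b (fun t ht => by
          constructor
          · nlinarith [ht.1.le, ht.2]
          · nlinarith [ht.1.le, ht.2])
        apply this.congr
        apply Filter.Eventually.of_forall
        intro t
        show |f'' ((a-b)*t + b)| = |f'' (t*a + (1-t)*b)|
        rw [show (a-b)*t + b = t*a + (1-t)*b by ring])
      (by
        intro t ht
        have h1t : t < 1 := by have := ht.2; linarith
        have h := hQ.2 a ha b hb t ht.1 h1t
        show |f'' (t*a + (1-t)*b)| ^ q ≤ |f'' a| ^ q / t + |f'' b| ^ q / (1 - t)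
        exact h)
    calc |∫ s in m..b, (-(lam*(b-s)/2) + (b-s)^2/(2*(b-a))) * f'' s|
        ≤ ∫ s in m..b, F2 s := habs
      _ = (b-a) * (((b-a)/2) * ∫ t in (0:ℝ)..(1/2), |t * (t - lam)| * |f'' (t*a + (1-t)*b)|) := by
          rw [hsubst, hφ]
      _ ≤ (b-a) * (((b-a)/2) * ((lam^3/3 + (1 - 3*lam)/24) ^ (1 - 1/q) *
            ((lam^2 - (4*lam - 1)/8) * |f'' a| ^ q
              + ((1-lam)*Real.log (2*(1-lam)^2) + (20*lam - 8*lam^2 - 5)/8) * |f'' b| ^ q) ^ (1/q))) := by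
          apply mul_le_mul_of_nonneg_left _ hd.le
          exact mul_le_mul_of_nonneg_left hcore (by linarith)
      _ = _ := by ring
  -- bound for T1
  have hT1 : |∫ s in a..m, ((lam-1)*(m-s) - lam*(b-s)/2 + (b-s)^2/(2*(b-a))) * f'' s|
      ≤ ((b-a)^2/2) * ((lam^3/3 + (1 - 3*lam)/24) ^ (1 - 1/q) *
        ((lam^2 - (4*lam - 1)/8) * |f'' b| ^ q
          + ((1-lam)*Real.log (2*(1-lam)^2) + (20*lam - 8*lam^2 - 5)/8) * |f'' a| ^ q) ^ (1/q)) := by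
    have habs : |∫ s in a..m, ((lam-1)*(m-s) - lam*(b-s)/2 + (b-s)^2/(2*(b-a))) * f'' s|
        ≤ ∫ s in a..m, F1 s := by
      rw [hF1_def]
      exact intervalIntegral.abs_integral_le_integral_abs ham
    have hcomp := intervalIntegral.integral_comp_mul_add (f := F1) (a := (0:ℝ)) (b := 1/2)
      (c := b-a) hdne a
    rw [show (b-a)*0 + a = a by ring, show (b-a)*(1/2) + a = m by rw [hm_def]; ring,
      smul_eq_mul] at hcomp
    have hsubst : ∫ s in a..m, F1 s = (b-a) * ∫ t in (0:ℝ)..(1/2), F1 ((b-a)*t + a) := by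
      rw [hcomp, ← mul_assoc, mul_inv_cancel₀ hdne, one_mul]
    have hptF1 : ∀ t : ℝ, F1 ((b-a)*t + a)
        = ((b-a)/2) * (|t * (t - lam)| * |f'' (t*b + (1-t)*a)|) := by
      intro t
      rw [hF1_def]
      show |((lam-1)*(m - ((b-a)*t + a)) - lam*(b - ((b-a)*t + a))/2
          + (b - ((b-a)*t + a))^2/(2*(b-a))) * f'' ((b-a)*t + a)| = _
      rw [show (lam-1)*(m - ((b-a)*t + a)) - lam*(b - ((b-a)*t + a))/2
          + (b - ((b-a)*t + a))^2/(2*(b-a)) = ((b-a)/2) * (t * (t - lam)) by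
        rw [hm_def]; field_simp; ring]
      rw [show (b-a)*t + a = t*b + (1-t)*a by ring]
      rw [abs_mul, abs_mul, abs_of_pos (by linarith : (0:ℝ) < (b-a)/2)]
      ring
    have hφ : ∫ t in (0:ℝ)..(1/2), F1 ((b-a)*t + a)
        = ((b-a)/2) * ∫ t in (0:ℝ)..(1/2), |t * (t - lam)| * |f'' (t*b + (1-t)*a)| := by
      rw [← intervalIntegral.integral_const_mul]
      apply intervalIntegral.integral_congr
      intro t _
      exact hptF1 t
    have hcore := core q hq lam hlam0 hlam1 (|f'' b| ^ q) (|f'' a| ^ q)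
      (Real.rpow_nonneg (abs_nonneg _) q) (Real.rpow_nonneg (abs_nonneg _) q)
      (fun t => |f'' (t*b + (1-t)*a)|) (fun t => abs_nonneg _)
      (by
        have := hf''meas (b - a) a (fun t ht => by
          constructor
          · nlinarith [ht.1.le, ht.2]
          · nlinarith [ht.1.le, ht.2])
        apply this.congr
        apply Filter.Eventually.of_forall
        intro t
        show |f'' ((b-a)*t + a)| = |f'' (t*b + (1-t)*a)|
        rw [show (b-a)*t + a = t*b + (1-t)*a by ring])
      (by
        intro t ht
        have h1t : t < 1 := by have := ht.2; linarith
        have h := hQ.2 b hb a ha t ht.1 h1t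
        show |f'' (t*b + (1-t)*a)| ^ q ≤ |f'' b| ^ q / t + |f'' a| ^ q / (1 - t)
        exact h)
    calc |∫ s in a..m, ((lam-1)*(m-s) - lam*(b-s)/2 + (b-s)^2/(2*(b-a))) * f'' s|
        ≤ ∫ s in a..m, F1 s := habs
      _ = (b-a) * (((b-a)/2) * ∫ t in (0:ℝ)..(1/2), |t * (t - lam)| * |f'' (t*b + (1-t)*a)|) := by
          rw [hsubst, hφ]
      _ ≤ (b-a) * (((b-a)/2) * ((lam^3/3 + (1 - 3*lam)/24) ^ (1 - 1/q) *
            ((lam^2 - (4*lam - 1)/8) * |f'' b| ^ q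
              + ((1-lam)*Real.log (2*(1-lam)^2) + (20*lam - 8*lam^2 - 5)/8) * |f'' a| ^ q) ^ (1/q))) := by
          apply mul_le_mul_of_nonneg_left _ hd.le
          exact mul_le_mul_of_nonneg_left hcore (by linarith)
      _ = _ := by ring
  -- combine
  have hid := ibp_identity I hI hI' a b ha hb hab f f' f'' hf' hf'' hint lam
  rw [← hm_def] at hid
  calc |(lam - 1) * f m - lam * (f a + f b) / 2 + (1 / (b - a)) * ∫ x in a..b, f x|
      = |(∫ s in a..m, ((lam-1)*(m-s) - lam*(b-s)/2 + (b-s)^2/(2*(b-a))) * f'' s)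
          + ∫ s in m..b, (-(lam*(b-s)/2) + (b-s)^2/(2*(b-a))) * f'' s| := by rw [hid]
    _ ≤ |∫ s in a..m, ((lam-1)*(m-s) - lam*(b-s)/2 + (b-s)^2/(2*(b-a))) * f'' s|
          + |∫ s in m..b, (-(lam*(b-s)/2) + (b-s)^2/(2*(b-a))) * f'' s| := abs_add_le _ _
    _ ≤ _ := add_le_add hT1 hT2
    _ = _ := by ring
end

section
/- Let I ⊂ ℝ be an open interval, a, b ∈ I with a < b, f : I → ℝ a twice differentiable mapping such that f'' is integrable on [a,b], let q ≥ 1, and suppose |f''|^q belongs to the Godunova-Levin class Q(I). If 1/2 ≤ λ ≤ 1, then |(λ − 1)·f((a+b)/2) − λ·(f(a)+f(b))/2 + (1/(b−a))·∫ₐᵇ f(x) dx| ≤ ((b−a)²/2) · ((3λ−1)/24)^(1 − 1/q) · { ( ((4λ−1)/8)·|f''(a)|^q + [(5−4λ)/8 − (λ−1)·ln(1/2)]·|f''(b)|^q )^(1/q) + ( [(5−4λ)/8 − (λ−1)·ln(1/2)]·|f''(a)|^q + ((4λ−1)/8)·|f''(b)|^q )^(1/q) }. -/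
open MeasureTheory Set Real

set_option maxHeartbeats 1000000

lemma GLaux.master_left {a b : ℝ} (hab : a < b) (al be de ga : ℝ) :
    ∫ x in a..(a+b)/2, (al + be*(x-a) + de*(x-a)^2 + ga*(b-x)⁻¹) =
      al*(b-a)/2 + be*(b-a)^2/8 + de*(b-a)^3/24 + ga*Real.log 2 := by
  have hm' : a ≤ (a+b)/2 := by linarith
  have huIcc : (uIcc a ((a+b)/2)) = Icc a ((a+b)/2) := uIcc_of_le hm'
  have key : ∀ x ∈ (uIcc a ((a+b)/2)),
      HasDerivAt (fun y => al*(y-a) + be*(y-a)^2/2 + de*(y-a)^3/3 - ga*Real.log (b-y))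
        (al + be*(x-a) + de*(x-a)^2 + ga*(b-x)⁻¹) x := by
    intro x hx
    rw [huIcc] at hx
    have hbx : (0:ℝ) < b - x := by
      rcases hx with ⟨h1, h2⟩; linarith
    have h1 : HasDerivAt (fun y : ℝ => y - a) 1 x := (hasDerivAt_id x).sub_const a
    have hA : HasDerivAt (fun y : ℝ => al*(y-a)) (al * 1) x := h1.const_mul al
    have hB : HasDerivAt (fun y : ℝ => be*(y-a)^2/2)
        (be * (2 * (x-a)^1 * 1) / 2) x := ((h1.pow 2).const_mul be).div_const 2
    have hC : HasDerivAt (fun y : ℝ => de*(y-a)^3/3)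
        (de * (3 * (x-a)^2 * 1) / 3) x := ((h1.pow 3).const_mul de).div_const 3
    have hby : HasDerivAt (fun y : ℝ => b - y) (-1) x := by
      simpa using (hasDerivAt_id x).const_sub b
    have hD : HasDerivAt (fun y : ℝ => ga*Real.log (b-y)) (ga * ((b-x)⁻¹ * (-1))) x :=
      ((Real.hasDerivAt_log hbx.ne').comp x hby).const_mul ga
    have := ((hA.add hB).add hC).sub hD
    refine this.congr_deriv ?_
    ring
  have hcont : ContinuousOn (fun x => al + be*(x-a) + de*(x-a)^2 + ga*(b-x)⁻¹) (uIcc a ((a+b)/2)) := by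
    rw [huIcc]
    apply ContinuousOn.add
    · fun_prop
    · apply ContinuousOn.mul continuousOn_const
      apply ContinuousOn.inv₀ (by fun_prop)
      intro x hx
      rcases hx with ⟨h1, h2⟩
      have : x < b := by linarith
      exact sub_ne_zero.2 (by linarith)
  rw [intervalIntegral.integral_eq_sub_of_hasDerivAt key (hcont.intervalIntegrable)]
  have hba : (0:ℝ) < b - a := by linarith
  have hb2 : (0:ℝ) < b - (a+b)/2 := by linarith
  have hlog : Real.log (b - (a+b)/2) = Real.log (b-a) - Real.log 2 := by
    rw [show b - (a+b)/2 = (b-a)/2 by ring, Real.log_div hba.ne' two_ne_zero]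
  simp only [hlog]
  ring

lemma GLaux.master_right {a b : ℝ} (hab : a < b) (al be de ga : ℝ) :
    ∫ x in ((a+b)/2)..b, (al + be*(b-x) + de*(b-x)^2 + ga*(x-a)⁻¹) =
      al*(b-a)/2 + be*(b-a)^2/8 + de*(b-a)^3/24 + ga*Real.log 2 := by
  have hm' : (a+b)/2 ≤ b := by linarith
  have huIcc : (uIcc ((a+b)/2) b) = Icc ((a+b)/2) b := uIcc_of_le hm'
  have key : ∀ x ∈ (uIcc ((a+b)/2) b),
      HasDerivAt (fun y => -(al*(b-y)) - be*(b-y)^2/2 - de*(b-y)^3/3 + ga*Real.log (y-a))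
        (al + be*(b-x) + de*(b-x)^2 + ga*(x-a)⁻¹) x := by
    intro x hx
    rw [huIcc] at hx
    have hxa : (0:ℝ) < x - a := by rcases hx with ⟨h1, h2⟩; linarith
    have h1 : HasDerivAt (fun y : ℝ => y - a) 1 x := (hasDerivAt_id x).sub_const a
    have hby : HasDerivAt (fun y : ℝ => b - y) (-1) x := by
      simpa using (hasDerivAt_id x).const_sub b
    have hA : HasDerivAt (fun y : ℝ => -(al*(b-y))) (-(al * (-1))) x := (hby.const_mul al).neg
    have hB : HasDerivAt (fun y : ℝ => be*(b-y)^2/2)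
        (be * (2 * (b-x)^1 * (-1)) / 2) x := ((hby.pow 2).const_mul be).div_const 2
    have hC : HasDerivAt (fun y : ℝ => de*(b-y)^3/3)
        (de * (3 * (b-x)^2 * (-1)) / 3) x := ((hby.pow 3).const_mul de).div_const 3
    have hD : HasDerivAt (fun y : ℝ => ga*Real.log (y-a)) (ga * ((x-a)⁻¹ * 1)) x := by
      have := ((Real.hasDerivAt_log hxa.ne').comp x h1).const_mul ga; exact this
    have := ((hA.sub hB).sub hC).add hD
    refine this.congr_deriv ?_
    ring
  have hcont : ContinuousOn (fun x => al + be*(b-x) + de*(b-x)^2 + ga*(x-a)⁻¹)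
      (uIcc ((a+b)/2) b) := by
    rw [huIcc]
    apply ContinuousOn.add
    · fun_prop
    · apply ContinuousOn.mul continuousOn_const
      apply ContinuousOn.inv₀ (by fun_prop)
      intro x hx
      rcases hx with ⟨h1, h2⟩
      have : a < x := by linarith
      exact sub_ne_zero.2 (by linarith)
  rw [intervalIntegral.integral_eq_sub_of_hasDerivAt key (hcont.intervalIntegrable)]
  have hba : (0:ℝ) < b - a := by linarith
  have hlog : Real.log ((a+b)/2 - a) = Real.log (b-a) - Real.log 2 := by
    rw [show (a+b)/2 - a = (b-a)/2 by ring, Real.log_div hba.ne' two_ne_zero]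
  simp only [hlog]
  ring

lemma GLaux.powmean {c d q : ℝ} (hq : 1 ≤ q) {w g : ℝ → ℝ}
    (hwc : ContinuousOn w (Icc c d)) (hw0 : ∀ x ∈ Icc c d, 0 ≤ w x)
    (hg0 : ∀ x, 0 ≤ g x)
    (hgm : AEStronglyMeasurable g (volume.restrict (Ioc c d)))
    (hwg : IntegrableOn (fun x => w x * g x) (Ioc c d))
    (hwgq : IntegrableOn (fun x => w x * g x ^ q) (Ioc c d)) :
    ∫ x in Ioc c d, w x * g x ≤
      (∫ x in Ioc c d, w x) ^ (1 - 1/q) * (∫ x in Ioc c d, w x * g x ^ q) ^ (1/q) := by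
  rcases eq_or_lt_of_le hq with h1 | h1
  · subst h1
    norm_num
  have hq0 : 0 < q := by linarith
  set p : ℝ := q / (q - 1) with hp
  have hpq : p.HolderConjugate q := by
    rw [Real.holderConjugate_iff]
    constructor
    · rw [hp]
      rw [one_lt_div (by linarith)]
      linarith
    · rw [hp]
      field_simp
      ring
  set μ := volume.restrict (Ioc c d) with hμ
  haveI : IsFiniteMeasure μ := by
    constructor
    rw [hμ, Measure.restrict_apply_univ]
    exact measure_Ioc_lt_top
  have hwae : ∀ᵐ x ∂μ, 0 ≤ w x := by
    filter_upwards [ae_restrict_mem measurableSet_Ioc] with x hx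
    exact hw0 x (Ioc_subset_Icc_self hx)
  set F : ℝ → ℝ := fun x => w x ^ (1/p) with hF
  set G : ℝ → ℝ := fun x => w x ^ (1/q) * g x with hG
  have hinv : 1/p + 1/q = 1 := by
    have := hpq.inv_add_inv_eq_one
    rw [one_div, one_div]
    exact this
  have hFG : (fun x => w x * g x) =ᵐ[μ] fun x => F x * G x := by
    filter_upwards [hwae] with x hx
    rw [hF, hG]
    dsimp only
    rw [show w x ^ (1/p) * (w x ^ (1/q) * g x) = w x ^ (1/p) * w x ^ (1/q) * g x by ring,
      ← Real.rpow_add' hx (by rw [hinv]; norm_num), hinv, Real.rpow_one]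
  have hFp : (fun x => F x ^ p) =ᵐ[μ] w := by
    filter_upwards [hwae] with x hx
    rw [hF]
    dsimp only
    rw [← Real.rpow_mul hx, one_div, inv_mul_cancel₀ hpq.ne_zero, Real.rpow_one]
  have hGq : (fun x => G x ^ q) =ᵐ[μ] fun x => w x * g x ^ q := by
    filter_upwards [hwae] with x hx
    rw [hG]
    dsimp only
    rw [Real.mul_rpow (Real.rpow_nonneg hx _) (hg0 x), ← Real.rpow_mul hx, one_div,
      inv_mul_cancel₀ hq0.ne', Real.rpow_one]
  have hFc : ContinuousOn F (Icc c d) :=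
    hwc.rpow_const (fun x hx => Or.inr hpq.one_div_nonneg)
  have hFmeas : AEStronglyMeasurable F μ :=
    (hFc.mono Ioc_subset_Icc_self).aestronglyMeasurable measurableSet_Ioc
  have hGmeas : AEStronglyMeasurable G μ :=
    (((hwc.rpow_const (fun x hx => Or.inr (one_div_nonneg.2 hq0.le))).mono
      Ioc_subset_Icc_self).aestronglyMeasurable measurableSet_Ioc).mul hgm
  obtain ⟨C, hC⟩ := isCompact_Icc.exists_bound_of_continuousOn hFc
  have hFmem : MemLp F (ENNReal.ofReal p) μ := by
    apply MemLp.of_bound hFmeas C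
    filter_upwards [ae_restrict_mem measurableSet_Ioc] with x hx
    exact hC x (Ioc_subset_Icc_self hx)
  have hGq_int : Integrable (fun x => ‖G x‖ ^ q) μ := by
    apply hwgq.congr
    filter_upwards [hGq, hwae] with x hx hwx
    have : 0 ≤ G x := mul_nonneg (Real.rpow_nonneg hwx _) (hg0 x)
    rw [Real.norm_of_nonneg this, hx]
  have hGmem : MemLp G (ENNReal.ofReal q) μ := by
    have hqne : ENNReal.ofReal q ≠ 0 := by
      simp [ENNReal.ofReal_eq_zero]; linarith
    have hqnt : ENNReal.ofReal q ≠ ⊤ := ENNReal.ofReal_ne_top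
    rw [← memLp_norm_rpow_iff hGmeas hqne hqnt]
    rw [ENNReal.toReal_ofReal hq0.le, ENNReal.div_self hqne hqnt, memLp_one_iff_integrable]
    exact hGq_int
  calc ∫ x in Ioc c d, w x * g x = ∫ x, F x * G x ∂μ := integral_congr_ae hFG
    _ ≤ (∫ x, F x ^ p ∂μ) ^ (1/p) * (∫ x, G x ^ q ∂μ) ^ (1/q) := by
        apply integral_mul_le_Lp_mul_Lq_of_nonneg hpq _ _ hFmem hGmem
        · filter_upwards [hwae] with x hx using Real.rpow_nonneg hx _
        · filter_upwards [hwae] with x hx using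
            mul_nonneg (Real.rpow_nonneg hx _) (hg0 x)
    _ = (∫ x in Ioc c d, w x) ^ (1 - 1/q) * (∫ x in Ioc c d, w x * g x ^ q) ^ (1/q) := by
        rw [integral_congr_ae hFp, integral_congr_ae hGq]
        congr 2
        have := hpq.symm.one_sub_inv
        rw [one_div, one_div, this]

lemma GLaux.identity {I : Set ℝ} (hI' : I.OrdConnected)
    {a b : ℝ} (ha : a ∈ I) (hb : b ∈ I) (hab : a < b)
    {f f' f'' : ℝ → ℝ}
    (hf' : ∀ x ∈ I, HasDerivAt f (f' x) x)
    (hf'' : ∀ x ∈ I, HasDerivAt f' (f'' x) x)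
    (hint : IntervalIntegrable f'' volume a b)
    (lam : ℝ) :
    (lam - 1) * f ((a + b) / 2) - lam * (f a + f b) / 2 + (1 / (b - a)) * ∫ x in a..b, f x
      = -(∫ x in a..(a+b)/2, (lam/2*(x-a) - (x-a)^2/(2*(b-a))) * f'' x)
        - ∫ x in ((a+b)/2)..b, (lam/2*(b-x) - (b-x)^2/(2*(b-a))) * f'' x := by
  have hba : (0:ℝ) < b - a := by linarith
  set m : ℝ := (a+b)/2 with hm
  have ham : a ≤ m := by rw [hm]; linarith
  have hmb : m ≤ b := by rw [hm]; linarith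
  have hsub : Icc a b ⊆ I := hI'.out ha hb
  have hsub1 : uIcc a m ⊆ Icc a b := by
    rw [uIcc_of_le ham]; exact Icc_subset_Icc le_rfl hmb
  have hsub2 : uIcc m b ⊆ Icc a b := by
    rw [uIcc_of_le hmb]; exact Icc_subset_Icc ham le_rfl
  have hfc : ContinuousOn f (Icc a b) := fun x hx =>
    ((hf' x (hsub hx)).continuousAt).continuousWithinAt
  have hf'c : ContinuousOn f' (Icc a b) := fun x hx =>
    ((hf'' x (hsub hx)).continuousAt).continuousWithinAt
  have hint1 : IntervalIntegrable f'' volume a m :=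
    hint.mono_set (uIcc_subset_uIcc left_mem_uIcc (by rw [uIcc_of_le hab.le]; exact ⟨ham, hmb⟩))
  have hint2 : IntervalIntegrable f'' volume m b :=
    hint.mono_set (uIcc_subset_uIcc (by rw [uIcc_of_le hab.le]; exact ⟨ham, hmb⟩) right_mem_uIcc)
  have hf'i1 : IntervalIntegrable f' volume a m := (hf'c.mono hsub1).intervalIntegrable
  have hf'i2 : IntervalIntegrable f' volume m b := (hf'c.mono hsub2).intervalIntegrable
  have hfi1 : IntervalIntegrable f volume a m := (hfc.mono hsub1).intervalIntegrable
  have hfi2 : IntervalIntegrable f volume m b := (hfc.mono hsub2).intervalIntegrable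
  -- derivative facts for kernels
  have hd1 : ∀ x : ℝ, HasDerivAt (fun y => (y-a)^2/(2*(b-a)) - lam/2*(y-a))
      ((x-a)/(b-a) - lam/2) x := by
    intro x
    have h1 : HasDerivAt (fun y : ℝ => y - a) 1 x := (hasDerivAt_id x).sub_const a
    have := ((h1.pow 2).div_const (2*(b-a))).sub (h1.const_mul (lam/2))
    refine this.congr_deriv ?_
    field_simp
    ring
  have hd1' : ∀ x : ℝ, HasDerivAt (fun y => (y-a)/(b-a) - lam/2) (1/(b-a)) x := by
    intro x
    have h1 : HasDerivAt (fun y : ℝ => y - a) 1 x := (hasDerivAt_id x).sub_const a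
    simpa using (h1.div_const (b-a)).sub_const (lam/2)
  have hd2 : ∀ x : ℝ, HasDerivAt (fun y => (b-y)^2/(2*(b-a)) - lam/2*(b-y))
      (-((b-x)/(b-a)) + lam/2) x := by
    intro x
    have h1 : HasDerivAt (fun y : ℝ => b - y) (-1) x := by
      simpa using (hasDerivAt_id x).const_sub b
    have := ((h1.pow 2).div_const (2*(b-a))).sub (h1.const_mul (lam/2))
    refine this.congr_deriv ?_
    field_simp
    ring
  have hd2' : ∀ x : ℝ, HasDerivAt (fun y => -((b-y)/(b-a)) + lam/2) (1/(b-a)) x := by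
    intro x
    have h1 : HasDerivAt (fun y : ℝ => b - y) (-1) x := by
      simpa using (hasDerivAt_id x).const_sub b
    have := ((h1.div_const (b-a)).neg).add_const (lam/2)
    refine this.congr_deriv ?_
    field_simp
  -- IBP on [a,m]
  have ibp1 : ∫ x in a..m, ((x-a)^2/(2*(b-a)) - lam/2*(x-a)) * f'' x
      = ((m-a)^2/(2*(b-a)) - lam/2*(m-a)) * f' m - ((a-a)^2/(2*(b-a)) - lam/2*(a-a)) * f' a
        - ∫ x in a..m, ((x-a)/(b-a) - lam/2) * f' x := by
    apply intervalIntegral.integral_mul_deriv_eq_deriv_mul (fun x hx => hd1 x)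
      (fun x hx => hf'' x (hsub (hsub1 hx)))
      (ContinuousOn.intervalIntegrable (by fun_prop)) hint1
  have ibp1' : ∫ x in a..m, ((x-a)/(b-a) - lam/2) * f' x
      = ((m-a)/(b-a) - lam/2) * f m - ((a-a)/(b-a) - lam/2) * f a
        - ∫ x in a..m, (1/(b-a)) * f x := by
    apply intervalIntegral.integral_mul_deriv_eq_deriv_mul (fun x hx => hd1' x)
      (fun x hx => hf' x (hsub (hsub1 hx)))
      (ContinuousOn.intervalIntegrable (by fun_prop)) hf'i1
  have ibp2 : ∫ x in m..b, ((b-x)^2/(2*(b-a)) - lam/2*(b-x)) * f'' x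
      = ((b-b)^2/(2*(b-a)) - lam/2*(b-b)) * f' b - ((b-m)^2/(2*(b-a)) - lam/2*(b-m)) * f' m
        - ∫ x in m..b, (-((b-x)/(b-a)) + lam/2) * f' x := by
    apply intervalIntegral.integral_mul_deriv_eq_deriv_mul (fun x hx => hd2 x)
      (fun x hx => hf'' x (hsub (hsub2 hx)))
      (ContinuousOn.intervalIntegrable (by fun_prop)) hint2
  have ibp2' : ∫ x in m..b, (-((b-x)/(b-a)) + lam/2) * f' x
      = (-((b-b)/(b-a)) + lam/2) * f b - (-((b-m)/(b-a)) + lam/2) * f m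
        - ∫ x in m..b, (1/(b-a)) * f x := by
    apply intervalIntegral.integral_mul_deriv_eq_deriv_mul (fun x hx => hd2' x)
      (fun x hx => hf' x (hsub (hsub2 hx)))
      (ContinuousOn.intervalIntegrable (by fun_prop)) hf'i2
  have hsplit : (∫ x in a..m, f x) + ∫ x in m..b, f x = ∫ x in a..b, f x :=
    intervalIntegral.integral_add_adjacent_intervals hfi1 hfi2
  -- rewrite kernels: w = -K
  have e1 : ∫ x in a..m, (lam/2*(x-a) - (x-a)^2/(2*(b-a))) * f'' x
      = -∫ x in a..m, ((x-a)^2/(2*(b-a)) - lam/2*(x-a)) * f'' x := by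
    rw [← intervalIntegral.integral_neg]
    congr 1; funext x; ring
  have e2 : ∫ x in m..b, (lam/2*(b-x) - (b-x)^2/(2*(b-a))) * f'' x
      = -∫ x in m..b, ((b-x)^2/(2*(b-a)) - lam/2*(b-x)) * f'' x := by
    rw [← intervalIntegral.integral_neg]
    congr 1; funext x; ring
  have hci1 : ∫ x in a..m, (1/(b-a)) * f x = (1/(b-a)) * ∫ x in a..m, f x :=
    intervalIntegral.integral_const_mul _ _
  have hci2 : ∫ x in m..b, (1/(b-a)) * f x = (1/(b-a)) * ∫ x in m..b, f x :=
    intervalIntegral.integral_const_mul _ _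
  rw [e1, e2, ibp1, ibp2, ibp1', ibp2', hci1, hci2, ← hsplit]
  have hmm : m - a = (b-a)/2 := by rw [hm]; ring
  have hbm : b - m = (b-a)/2 := by rw [hm]; ring
  rw [hmm, hbm]
  field_simp
  ring


theorem godunova_levin_power_mean_ineq_second_case
    (I : Set ℝ) (hI : IsOpen I) (hI' : I.OrdConnected)
    (a b : ℝ) (ha : a ∈ I) (hb : b ∈ I) (hab : a < b)
    (f f' f'' : ℝ → ℝ)
    (hf' : ∀ x ∈ I, HasDerivAt f (f' x) x)
    (hf'' : ∀ x ∈ I, HasDerivAt f' (f'' x) x)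
    (hint : IntervalIntegrable f'' volume a b)
    (q : ℝ) (hq : 1 ≤ q)
    (hQ : GodunovaLevin I (fun x => |f'' x| ^ q))
    (lam : ℝ) (hlam0 : 1 / 2 ≤ lam) (hlam1 : lam ≤ 1) :
    |(lam - 1) * f ((a + b) / 2) - lam * (f a + f b) / 2
        + (1 / (b - a)) * ∫ x in a..b, f x|
      ≤ ((b - a) ^ 2 / 2) * ((3 * lam - 1) / 24) ^ (1 - 1 / q) *
        ((((4 * lam - 1) / 8) * |f'' a| ^ q
            + ((5 - 4 * lam) / 8 - (lam - 1) * Real.log (1 / 2)) * |f'' b| ^ q) ^ (1 / q)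
          + (((5 - 4 * lam) / 8 - (lam - 1) * Real.log (1 / 2)) * |f'' a| ^ q
            + ((4 * lam - 1) / 8) * |f'' b| ^ q) ^ (1 / q)) := by
  have hba : (0:ℝ) < b - a := by linarith
  have hq0 : (0:ℝ) < q := by linarith
  set m : ℝ := (a+b)/2 with hm
  have ham : a ≤ m := by rw [hm]; linarith
  have hmb : m ≤ b := by rw [hm]; linarith
  have hamlt : a < m := by rw [hm]; linarith
  have hmblt : m < b := by rw [hm]; linarith
  have hsub : Icc a b ⊆ I := hI'.out ha hb
  set A : ℝ := |f'' a| ^ q with hA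
  set B : ℝ := |f'' b| ^ q with hB
  have hA0 : 0 ≤ A := Real.rpow_nonneg (abs_nonneg _) _
  have hB0 : 0 ≤ B := Real.rpow_nonneg (abs_nonneg _) _
  set w₁ : ℝ → ℝ := fun x => lam/2*(x-a) - (x-a)^2/(2*(b-a)) with hw₁
  set w₂ : ℝ → ℝ := fun x => lam/2*(b-x) - (b-x)^2/(2*(b-a)) with hw₂
  -- kernel nonnegativity
  have hw₁0 : ∀ x ∈ Icc a m, 0 ≤ w₁ x := by
    rintro x ⟨h1, h2⟩
    rw [hw₁]
    dsimp only
    rw [hm] at h2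
    rw [sub_nonneg, div_le_iff₀ (by linarith : (0:ℝ) < 2*(b-a))]
    nlinarith [mul_le_mul_of_nonneg_left (show 2*(x-a) ≤ b-a by linarith)
        (show (0:ℝ) ≤ x - a by linarith),
      mul_nonneg (mul_nonneg (show (0:ℝ) ≤ lam - 1/2 by linarith)
        (show (0:ℝ) ≤ x - a by linarith)) hba.le]
  have hw₂0 : ∀ x ∈ Icc m b, 0 ≤ w₂ x := by
    rintro x ⟨h1, h2⟩
    rw [hw₂]
    dsimp only
    rw [hm] at h1
    rw [sub_nonneg, div_le_iff₀ (by linarith : (0:ℝ) < 2*(b-a))]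
    nlinarith [mul_le_mul_of_nonneg_left (show 2*(b-x) ≤ b-a by linarith)
        (show (0:ℝ) ≤ b - x by linarith),
      mul_nonneg (mul_nonneg (show (0:ℝ) ≤ lam - 1/2 by linarith)
        (show (0:ℝ) ≤ b - x by linarith)) hba.le]
  -- integrability of f'' on halves
  have hint1 : IntervalIntegrable f'' volume a m :=
    hint.mono_set (uIcc_subset_uIcc left_mem_uIcc (by rw [uIcc_of_le hab.le]; exact ⟨ham, hmb⟩))
  have hint2 : IntervalIntegrable f'' volume m b :=
    hint.mono_set (uIcc_subset_uIcc (by rw [uIcc_of_le hab.le]; exact ⟨ham, hmb⟩) right_mem_uIcc)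
  have habs : ∀ x : ℝ, (0:ℝ) ≤ |f'' x| ^ q := fun x => Real.rpow_nonneg (abs_nonneg _) _
  -- measurability
  have hrpow_cont : Continuous (fun t : ℝ => t ^ q) :=
    continuous_iff_continuousAt.2 fun x => Real.continuousAt_rpow_const x q (Or.inr hq0.le)
  have hmeas1 : AEStronglyMeasurable (fun x => |f'' x|) (volume.restrict (Ioc a m)) := by
    simpa [Real.norm_eq_abs] using hint1.1.aestronglyMeasurable.norm
  have hmeas2 : AEStronglyMeasurable (fun x => |f'' x|) (volume.restrict (Ioc m b)) := by
    simpa [Real.norm_eq_abs] using hint2.1.aestronglyMeasurable.norm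
  have hmeasq1 : AEStronglyMeasurable (fun x => |f'' x| ^ q) (volume.restrict (Ioc a m)) :=
    hrpow_cont.comp_aestronglyMeasurable hmeas1
  have hmeasq2 : AEStronglyMeasurable (fun x => |f'' x| ^ q) (volume.restrict (Ioc m b)) :=
    hrpow_cont.comp_aestronglyMeasurable hmeas2
  -- majorants
  set M₁ : ℝ → ℝ := fun x => (A*(-(lam-1)*(b-a)/2) + B*(lam*(b-a)/2)) + ((A-B)/2)*(x-a)
      + 0*(x-a)^2 + (A*(lam-1)*(b-a)^2/2)*(b-x)⁻¹ with hM₁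
  set M₂ : ℝ → ℝ := fun x => (A*(lam*(b-a)/2) + B*(-(lam-1)*(b-a)/2)) + ((B-A)/2)*(b-x)
      + 0*(b-x)^2 + (B*(lam-1)*(b-a)^2/2)*(x-a)⁻¹ with hM₂
  have hM₁c : ContinuousOn M₁ (Icc a m) := by
    rw [hM₁]
    apply ContinuousOn.add
    · fun_prop
    · apply ContinuousOn.mul continuousOn_const
      apply ContinuousOn.inv₀ (by fun_prop)
      rintro x ⟨h1, h2⟩
      exact sub_ne_zero.2 (by linarith)
  have hM₂c : ContinuousOn M₂ (Icc m b) := by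
    rw [hM₂]
    apply ContinuousOn.add
    · fun_prop
    · apply ContinuousOn.mul continuousOn_const
      apply ContinuousOn.inv₀ (by fun_prop)
      rintro x ⟨h1, h2⟩
      exact sub_ne_zero.2 (by linarith)
  have hM₁int : IntegrableOn M₁ (Ioc a m) :=
    ((hM₁c.mono (by rw [uIcc_of_le ham])).intervalIntegrable).1
  have hM₂int : IntegrableOn M₂ (Ioc m b) :=
    ((hM₂c.mono (by rw [uIcc_of_le hmb])).intervalIntegrable).1
  -- pointwise Godunova-Levin bounds
  have hpt1 : ∀ x ∈ Ioc a m, w₁ x * |f'' x| ^ q ≤ M₁ x := by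
    rintro x ⟨h1, h2⟩
    have hxb : x < b := lt_of_le_of_lt h2 hmblt
    set t : ℝ := (b-x)/(b-a) with ht
    have ht0 : 0 < t := div_pos (by linarith) hba
    have ht1 : t < 1 := by rw [ht, div_lt_one hba]; linarith
    have hx : t * a + (1 - t) * b = x := by rw [ht]; field_simp; ring
    have hGL := hQ.2 a ha b hb t ht0 ht1
    rw [hx] at hGL
    have hw : 0 ≤ w₁ x := hw₁0 x ⟨h1.le, h2⟩
    calc w₁ x * |f'' x| ^ q ≤ w₁ x * (A / t + B / (1 - t)) :=
          mul_le_mul_of_nonneg_left hGL hw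
      _ = M₁ x := by
          rw [hw₁, hM₁, ht]
          have h1' : x - a ≠ 0 := sub_ne_zero.2 h1.ne'
          have h2' : b - x ≠ 0 := sub_ne_zero.2 hxb.ne'
          have h3' : (1:ℝ) - (b-x)/(b-a) = (x-a)/(b-a) := by
            field_simp
            ring
          dsimp only
          rw [h3']
          field_simp
          ring
  -- pointwise bound on right half (on Ioo)
  have hpt2 : ∀ x ∈ Ioo m b, w₂ x * |f'' x| ^ q ≤ M₂ x := by
    rintro x ⟨h1, h2⟩
    have hax : a < x := lt_of_lt_of_le hamlt h1.le
    set t : ℝ := (b-x)/(b-a) with ht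
    have ht0 : 0 < t := div_pos (by linarith) hba
    have ht1 : t < 1 := by rw [ht, div_lt_one hba]; linarith
    have hx : t * a + (1 - t) * b = x := by rw [ht]; field_simp; ring
    have hGL := hQ.2 a ha b hb t ht0 ht1
    rw [hx] at hGL
    have hw : 0 ≤ w₂ x := hw₂0 x ⟨h1.le, h2.le⟩
    calc w₂ x * |f'' x| ^ q ≤ w₂ x * (A / t + B / (1 - t)) :=
          mul_le_mul_of_nonneg_left hGL hw
      _ = M₂ x := by
          rw [hw₂, hM₂, ht]
          have h1' : x - a ≠ 0 := sub_ne_zero.2 hax.ne'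
          have h2' : b - x ≠ 0 := sub_ne_zero.2 h2.ne'
          have h3' : (1:ℝ) - (b-x)/(b-a) = (x-a)/(b-a) := by
            field_simp
            ring
          dsimp only
          rw [h3']
          field_simp
          ring
  have hae2 : ∀ᵐ x ∂(volume.restrict (Ioc m b)), w₂ x * |f'' x| ^ q ≤ M₂ x := by
    rw [(Measure.restrict_congr_set Ioo_ae_eq_Ioc).symm]
    filter_upwards [ae_restrict_mem measurableSet_Ioo] with x hx
    exact hpt2 x hx
  -- continuity of kernels
  have hw₁cont : Continuous w₁ := by rw [hw₁]; fun_prop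
  have hw₂cont : Continuous w₂ := by rw [hw₂]; fun_prop
  -- integrability of products
  have hwgi1 : IntegrableOn (fun x => w₁ x * |f'' x|) (Ioc a m) :=
    (hint1.abs.continuousOn_mul hw₁cont.continuousOn).1
  have hwgi2 : IntegrableOn (fun x => w₂ x * |f'' x|) (Ioc m b) :=
    (hint2.abs.continuousOn_mul hw₂cont.continuousOn).1
  have hwgq1 : IntegrableOn (fun x => w₁ x * |f'' x| ^ q) (Ioc a m) := by
    apply Integrable.mono' hM₁int
      (hw₁cont.aestronglyMeasurable.mul hmeasq1)
    filter_upwards [ae_restrict_mem measurableSet_Ioc] with x hx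
    simp only [Real.norm_eq_abs, Pi.mul_apply]
    rw [abs_of_nonneg (mul_nonneg (hw₁0 x (Ioc_subset_Icc_self hx)) (habs x))]
    exact hpt1 x hx
  have hwgq2 : IntegrableOn (fun x => w₂ x * |f'' x| ^ q) (Ioc m b) := by
    apply Integrable.mono' hM₂int
      (hw₂cont.aestronglyMeasurable.mul hmeasq2)
    filter_upwards [hae2, ae_restrict_mem measurableSet_Ioc] with x hx hx'
    simp only [Real.norm_eq_abs, Pi.mul_apply]
    rw [abs_of_nonneg (mul_nonneg (hw₂0 x (Ioc_subset_Icc_self hx')) (habs x))]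
    exact hx
  -- monotone comparison with majorants
  have hmono1 : ∫ x in Ioc a m, w₁ x * |f'' x| ^ q ≤ ∫ x in Ioc a m, M₁ x :=
    setIntegral_mono_on hwgq1 hM₁int measurableSet_Ioc hpt1
  have hmono2 : ∫ x in Ioc m b, w₂ x * |f'' x| ^ q ≤ ∫ x in Ioc m b, M₂ x :=
    setIntegral_mono_ae_restrict hwgq2 hM₂int hae2
  -- integral computations
  have hCval1 : ∫ x in Ioc a m, w₁ x = (b-a)^2/2 * ((3*lam-1)/24) := by
    rw [← intervalIntegral.integral_of_le ham]
    have : ∫ x in a..m, w₁ x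
        = ∫ x in a..m, ((0:ℝ) + lam/2*(x-a) + (-(1/(2*(b-a))))*(x-a)^2 + 0*(b-x)⁻¹) := by
      apply intervalIntegral.integral_congr
      intro x hx
      rw [hw₁]; dsimp only; ring
    rw [this, hm, GLaux.master_left hab]
    field_simp
    ring
  have hCval2 : ∫ x in Ioc m b, w₂ x = (b-a)^2/2 * ((3*lam-1)/24) := by
    rw [← intervalIntegral.integral_of_le hmb]
    have : ∫ x in m..b, w₂ x
        = ∫ x in m..b, ((0:ℝ) + lam/2*(b-x) + (-(1/(2*(b-a))))*(b-x)^2 + 0*(x-a)⁻¹) := by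
      apply intervalIntegral.integral_congr
      intro x hx
      rw [hw₂]; dsimp only; ring
    rw [this, hm, GLaux.master_right hab]
    field_simp
    ring
  have hV1 : ∫ x in Ioc a m, M₁ x
      = (b-a)^2/2 * (((5-4*lam)/8 - (lam-1)*(-Real.log 2))*A + ((4*lam-1)/8)*B) := by
    rw [← intervalIntegral.integral_of_le ham, hM₁, hm, GLaux.master_left hab]
    ring
  have hV2 : ∫ x in Ioc m b, M₂ x
      = (b-a)^2/2 * (((4*lam-1)/8)*A + ((5-4*lam)/8 - (lam-1)*(-Real.log 2))*B) := by
    rw [← intervalIntegral.integral_of_le hmb, hM₂, hm, GLaux.master_right hab]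
    ring
  -- power mean
  have hpm1 := GLaux.powmean (c := a) (d := m) hq (hw₁cont.continuousOn) hw₁0
      (fun x => abs_nonneg (f'' x)) hmeas1 hwgi1 hwgq1
  have hpm2 := GLaux.powmean (c := m) (d := b) hq (hw₂cont.continuousOn) hw₂0
      (fun x => abs_nonneg (f'' x)) hmeas2 hwgi2 hwgq2
  have hq10 : (0:ℝ) ≤ 1/q := by positivity
  have hWq10 : (0:ℝ) ≤ ∫ x in Ioc a m, w₁ x * |f'' x| ^ q :=
    setIntegral_nonneg measurableSet_Ioc
      (fun x hx => mul_nonneg (hw₁0 x (Ioc_subset_Icc_self hx)) (habs x))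
  have hWq20 : (0:ℝ) ≤ ∫ x in Ioc m b, w₂ x * |f'' x| ^ q :=
    setIntegral_nonneg measurableSet_Ioc
      (fun x hx => mul_nonneg (hw₂0 x (Ioc_subset_Icc_self hx)) (habs x))
  have hS1 : ∫ x in Ioc a m, w₁ x * |f'' x|
      ≤ ((b-a)^2/2 * ((3*lam-1)/24)) ^ (1-1/q)
        * ((b-a)^2/2 * (((5-4*lam)/8 - (lam-1)*(-Real.log 2))*A + ((4*lam-1)/8)*B)) ^ (1/q) := by
    refine hpm1.trans ?_
    rw [hCval1]
    exact mul_le_mul_of_nonneg_left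
      (Real.rpow_le_rpow hWq10 (hmono1.trans (le_of_eq hV1)) hq10)
      (Real.rpow_nonneg (mul_nonneg (by positivity) (by linarith)) _)
  have hS2 : ∫ x in Ioc m b, w₂ x * |f'' x|
      ≤ ((b-a)^2/2 * ((3*lam-1)/24)) ^ (1-1/q)
        * ((b-a)^2/2 * (((4*lam-1)/8)*A + ((5-4*lam)/8 - (lam-1)*(-Real.log 2))*B)) ^ (1/q) := by
    refine hpm2.trans ?_
    rw [hCval2]
    exact mul_le_mul_of_nonneg_left
      (Real.rpow_le_rpow hWq20 (hmono2.trans (le_of_eq hV2)) hq10)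
      (Real.rpow_nonneg (mul_nonneg (by positivity) (by linarith)) _)
  -- identity
  have hid := GLaux.identity hI' ha hb hab hf' hf'' hint lam
  rw [← hm] at hid
  have hid' : (lam - 1) * f m - lam * (f a + f b) / 2 + 1 / (b - a) * ∫ x in a..b, f x
      = -(∫ x in a..m, w₁ x * f'' x) - ∫ x in m..b, w₂ x * f'' x := hid
  rw [hid']
  -- abs bounds
  have key1 : |∫ x in a..m, w₁ x * f'' x| ≤ ∫ x in Ioc a m, w₁ x * |f'' x| := by
    refine (intervalIntegral.abs_integral_le_integral_abs ham).trans (le_of_eq ?_)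
    rw [← intervalIntegral.integral_of_le ham]
    apply intervalIntegral.integral_congr
    intro x hx
    rw [uIcc_of_le ham] at hx
    show |w₁ x * f'' x| = w₁ x * |f'' x|
    rw [abs_mul, abs_of_nonneg (hw₁0 x hx)]
  have key2 : |∫ x in m..b, w₂ x * f'' x| ≤ ∫ x in Ioc m b, w₂ x * |f'' x| := by
    refine (intervalIntegral.abs_integral_le_integral_abs hmb).trans (le_of_eq ?_)
    rw [← intervalIntegral.integral_of_le hmb]
    apply intervalIntegral.integral_congr
    intro x hx
    rw [uIcc_of_le hmb] at hx
    show |w₂ x * f'' x| = w₂ x * |f'' x|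
    rw [abs_mul, abs_of_nonneg (hw₂0 x hx)]
  -- final algebra
  have hlog : Real.log (1/2 : ℝ) = -Real.log 2 := by rw [one_div, Real.log_inv]
  rw [hlog]
  have hH : (0:ℝ) < (b-a)^2/2 := by positivity
  have hc0 : (0:ℝ) ≤ (3*lam-1)/24 := by linarith
  have hcoef : (0:ℝ) ≤ (5-4*lam)/8 - (lam-1)*(-Real.log 2) := by
    have hlt : Real.log 2 < 0.6931471808 := Real.log_two_lt_d9
    have h0 : (0:ℝ) ≤ Real.log 2 := Real.log_nonneg (by norm_num)
    nlinarith [mul_nonneg (show (0:ℝ) ≤ 1 - lam by linarith)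
      (show (0:ℝ) ≤ 0.6931471808 - Real.log 2 by linarith)]
  have hA1f0 : (0:ℝ) ≤ ((4*lam-1)/8)*A + ((5-4*lam)/8 - (lam-1)*(-Real.log 2))*B :=
    add_nonneg (mul_nonneg (by linarith) hA0) (mul_nonneg hcoef hB0)
  have hA2f0 : (0:ℝ) ≤ ((5-4*lam)/8 - (lam-1)*(-Real.log 2))*A + ((4*lam-1)/8)*B :=
    add_nonneg (mul_nonneg hcoef hA0) (mul_nonneg (by linarith) hB0)
  have key : ∀ X : ℝ, 0 ≤ X →
      ((b-a)^2/2 * ((3*lam-1)/24)) ^ (1-1/q) * ((b-a)^2/2 * X) ^ (1/q)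
        = (b-a)^2/2 * (((3*lam-1)/24)^(1-1/q) * X^(1/q)) := by
    intro X hX
    rw [Real.mul_rpow hH.le hc0, Real.mul_rpow hH.le hX,
      show ((b-a)^2/2)^(1-1/q) * ((3*lam-1)/24)^(1-1/q) * (((b-a)^2/2)^(1/q) * X^(1/q))
        = (((b-a)^2/2)^(1-1/q) * ((b-a)^2/2)^(1/q)) * (((3*lam-1)/24)^(1-1/q) * X^(1/q)) from
        by ring,
      ← Real.rpow_add hH, show (1-1/q) + 1/q = 1 from by ring, Real.rpow_one]
  calc |-(∫ x in a..m, w₁ x * f'' x) - ∫ x in m..b, w₂ x * f'' x|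
      ≤ |∫ x in a..m, w₁ x * f'' x| + |∫ x in m..b, w₂ x * f'' x| := by
        rw [show -(∫ x in a..m, w₁ x * f'' x) - ∫ x in m..b, w₂ x * f'' x
          = -((∫ x in a..m, w₁ x * f'' x) + ∫ x in m..b, w₂ x * f'' x) from by ring, abs_neg]
        exact abs_add_le _ _
    _ ≤ (∫ x in Ioc a m, w₁ x * |f'' x|) + ∫ x in Ioc m b, w₂ x * |f'' x| :=
        add_le_add key1 key2
    _ ≤ ((b-a)^2/2 * ((3*lam-1)/24)) ^ (1-1/q)
          * ((b-a)^2/2 * (((5-4*lam)/8 - (lam-1)*(-Real.log 2))*A + ((4*lam-1)/8)*B)) ^ (1/q)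
        + ((b-a)^2/2 * ((3*lam-1)/24)) ^ (1-1/q)
          * ((b-a)^2/2 * (((4*lam-1)/8)*A + ((5-4*lam)/8 - (lam-1)*(-Real.log 2))*B)) ^ (1/q) :=
        add_le_add hS1 hS2
    _ = (b - a) ^ 2 / 2 * ((3 * lam - 1) / 24) ^ (1 - 1 / q) *
        (((4 * lam - 1) / 8 * A + ((5 - 4 * lam) / 8 - (lam - 1) * -Real.log 2) * B) ^ (1 / q)
          + (((5 - 4 * lam) / 8 - (lam - 1) * -Real.log 2) * A
            + (4 * lam - 1) / 8 * B) ^ (1 / q)) := by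
        rw [key _ hA2f0, key _ hA1f0]
        ring
end

section
/- Let I ⊂ ℝ be an open interval, a, b ∈ I with a < b, f : I → ℝ a twice differentiable mapping such that f'' is integrable on [a,b], and suppose |f''| belongs to the Godunova-Levin class Q(I). If 0 ≤ λ ≤ 1/2, then |(λ − 1)·f((a+b)/2) − λ·(f(a)+f(b))/2 + (1/(b−a))·∫ₐᵇ f(x) dx| ≤ ((b−a)²/2) · [(1−λ)·ln(2(1−λ)²) + (16λ − 4)/8] · (|f''(a)| + |f''(b)|). -/
open MeasureTheory Set Real

set_option maxHeartbeats 2000000 in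
theorem godunova_levin_corollary_first_case
    (I : Set ℝ) (hI : IsOpen I) (hI' : I.OrdConnected)
    (a b : ℝ) (ha : a ∈ I) (hb : b ∈ I) (hab : a < b)
    (f f' f'' : ℝ → ℝ)
    (hf' : ∀ x ∈ I, HasDerivAt f (f' x) x)
    (hf'' : ∀ x ∈ I, HasDerivAt f' (f'' x) x)
    (hint : IntervalIntegrable f'' volume a b)
    (hQ : GodunovaLevin I (fun x => |f'' x|))
    (lam : ℝ) (hlam0 : 0 ≤ lam) (hlam1 : lam ≤ 1 / 2) :
    |(lam - 1) * f ((a + b) / 2) - lam * (f a + f b) / 2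
        + (1 / (b - a)) * ∫ x in a..b, f x|
      ≤ ((b - a) ^ 2 / 2) *
          ((1 - lam) * Real.log (2 * (1 - lam) ^ 2) + (16 * lam - 4) / 8) *
          (|f'' a| + |f'' b|) := by
  have hba : (0:ℝ) < b - a := sub_pos.2 hab
  have h1lam : (0:ℝ) < 1 - lam := by linarith
  set m : ℝ := (a + b) / 2 with hm_def
  have ham : a < m := by rw [hm_def]; linarith
  have hmb : m < b := by rw [hm_def]; linarith
  have hIcc : Icc a b ⊆ I := hI'.out ha hb
  have hsub1 : uIcc a m ⊆ Icc a b := by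
    rw [uIcc_of_le ham.le]; exact Icc_subset_Icc le_rfl hmb.le
  have hsub2 : uIcc m b ⊆ Icc a b := by
    rw [uIcc_of_le hmb.le]; exact Icc_subset_Icc ham.le le_rfl
  have hfd : ∀ x ∈ Icc a b, HasDerivAt f (f' x) x := fun x hx => hf' x (hIcc hx)
  have hfd' : ∀ x ∈ Icc a b, HasDerivAt f' (f'' x) x := fun x hx => hf'' x (hIcc hx)
  have contf : ContinuousOn f (Icc a b) := fun x hx => ((hfd x hx).continuousAt).continuousWithinAt
  have contf' : ContinuousOn f' (Icc a b) := fun x hx =>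
    ((hfd' x hx).continuousAt).continuousWithinAt
  have intf1 : IntervalIntegrable f volume a m := (contf.mono hsub1).intervalIntegrable
  have intf2 : IntervalIntegrable f volume m b := (contf.mono hsub2).intervalIntegrable
  have intf'1 : IntervalIntegrable f' volume a m := (contf'.mono hsub1).intervalIntegrable
  have intf'2 : IntervalIntegrable f' volume m b := (contf'.mono hsub2).intervalIntegrable
  have intf''1 : IntervalIntegrable f'' volume a m := hint.mono_set (by
    rw [uIcc_of_le ham.le, uIcc_of_le hab.le]; exact Icc_subset_Icc le_rfl hmb.le)
  have intf''2 : IntervalIntegrable f'' volume m b := hint.mono_set (by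
    rw [uIcc_of_le hmb.le, uIcc_of_le hab.le]; exact Icc_subset_Icc ham.le le_rfl)
  -- ### Step 1 : the integral identity
  have P1 : (∫ x in a..m, ((x - a) * ((x - a) - lam * (b - a)) / 2) * f'' x)
      = ((m - a) * ((m - a) - lam * (b - a)) / 2) * f' m
        - ((a - a) * ((a - a) - lam * (b - a)) / 2) * f' a
        - ∫ x in a..m, ((x - a) - lam * (b - a) / 2) * f' x := by
    apply intervalIntegral.integral_mul_deriv_eq_deriv_mul
    · intro x hx
      have h0 : HasDerivAt (fun x : ℝ => (x - a) * ((x - a) - lam * (b - a)) / 2)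
          ((1 * ((x - a) - lam * (b - a)) + (x - a) * 1) / 2) x :=
        (((hasDerivAt_id x).sub_const a).mul
          (((hasDerivAt_id x).sub_const a).sub_const _)).div_const 2
      refine h0.congr_deriv ?_; ring
    · exact fun x hx => hfd' x (hsub1 hx)
    · exact (((continuous_id.sub continuous_const).sub
        continuous_const).continuousOn).intervalIntegrable
    · exact intf''1
  have P2 : (∫ x in a..m, ((x - a) - lam * (b - a) / 2) * f' x)
      = ((m - a) - lam * (b - a) / 2) * f m
        - ((a - a) - lam * (b - a) / 2) * f a
        - ∫ x in a..m, 1 * f x := by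
    apply intervalIntegral.integral_mul_deriv_eq_deriv_mul
    · intro x hx
      exact ((hasDerivAt_id x).sub_const a).sub_const _
    · exact fun x hx => hfd x (hsub1 hx)
    · exact continuous_const.continuousOn.intervalIntegrable
    · exact intf'1
  have Q1 : (∫ x in m..b, ((b - x) * ((b - x) - lam * (b - a)) / 2) * f'' x)
      = ((b - b) * ((b - b) - lam * (b - a)) / 2) * f' b
        - ((b - m) * ((b - m) - lam * (b - a)) / 2) * f' m
        - ∫ x in m..b, (-(b - x) + lam * (b - a) / 2) * f' x := by
    apply intervalIntegral.integral_mul_deriv_eq_deriv_mul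
    · intro x hx
      have h0 : HasDerivAt (fun x : ℝ => (b - x) * ((b - x) - lam * (b - a)) / 2)
          (((-1) * ((b - x) - lam * (b - a)) + (b - x) * (-1)) / 2) x := by
        have h1 : HasDerivAt (fun x : ℝ => b - x) (-1) x := by
          simpa using (hasDerivAt_id x).const_sub b
        exact (h1.mul (h1.sub_const _)).div_const 2
      refine h0.congr_deriv ?_; ring
    · exact fun x hx => hfd' x (hsub2 hx)
    · exact ((continuous_const.sub
        continuous_id).neg.add continuous_const).continuousOn.intervalIntegrable
    · exact intf''2
  have Q2 : (∫ x in m..b, (-(b - x) + lam * (b - a) / 2) * f' x)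
      = (-(b - b) + lam * (b - a) / 2) * f b
        - (-(b - m) + lam * (b - a) / 2) * f m
        - ∫ x in m..b, 1 * f x := by
    apply intervalIntegral.integral_mul_deriv_eq_deriv_mul
    · intro x hx
      have h1 : HasDerivAt (fun x : ℝ => -(b - x) + lam * (b - a) / 2) (-(-1)) x :=
        (((hasDerivAt_id x).const_sub b).neg).add_const _
      refine h1.congr_deriv ?_
      norm_num
    · exact fun x hx => hfd x (hsub2 hx)
    · exact continuous_const.continuousOn.intervalIntegrable
    · exact intf'2
  have hsplit : (∫ x in a..m, f x) + (∫ x in m..b, f x) = ∫ x in a..b, f x :=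
    intervalIntegral.integral_add_adjacent_intervals intf1 intf2
  have key : (lam - 1) * f m - lam * (f a + f b) / 2 + (1 / (b - a)) * ∫ x in a..b, f x
      = (1 / (b - a)) *
        ((∫ x in a..m, ((x - a) * ((x - a) - lam * (b - a)) / 2) * f'' x)
          + ∫ x in m..b, ((b - x) * ((b - x) - lam * (b - a)) / 2) * f'' x) := by
    rw [P1, P2, Q1, Q2, ← hsplit]
    simp only [one_mul]
    have hmm : m - a = (b - a) / 2 := by rw [hm_def]; ring
    have hbm : b - m = (b - a) / 2 := by rw [hm_def]; ring
    rw [hmm, hbm]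
    field_simp
    ring
  -- ### split points and antiderivatives
  set c : ℝ := a + lam * (b - a) with hc_def
  have hmul1 : 0 ≤ lam * (b - a) := mul_nonneg hlam0 hba.le
  have hmul2 : lam * (b - a) ≤ 1/2 * (b - a) := mul_le_mul_of_nonneg_right hlam1 hba.le
  have hac : a ≤ c := by rw [hc_def]; linarith
  have hcm : c ≤ m := by rw [hc_def, hm_def]; linarith
  set d : ℝ := b - lam * (b - a) with hd_def
  have hmd : m ≤ d := by rw [hd_def, hm_def]; linarith
  have hdb : d ≤ b := by rw [hd_def]; linarith
  set Psi : ℝ → ℝ := fun y =>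
    -(y - a)^2/4 - (1 - lam)*(b - a)*(y - a)/2 - ((b - a)^2*(1 - lam)/2)*Real.log (b - y)
    with hPsi_def
  have hPsiD : ∀ x ∈ Icc a m, HasDerivAt Psi ((x - a)*(x - a - lam*(b - a))/(2*(b - x))) x := by
    intro x hx
    have hbx : (0:ℝ) < b - x := by have := hx.2; simp only [hm_def] at this ⊢; linarith
    have l1 : HasDerivAt (fun y : ℝ => Real.log (b - y)) ((-1)/(b - x)) x :=
      ((hasDerivAt_id x).const_sub b).log (ne_of_gt hbx)
    have D := (((((hasDerivAt_id x).sub_const a).pow 2).neg.div_const 4).sub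
        ((((hasDerivAt_id x).sub_const a).const_mul ((1 - lam)*(b - a))).div_const 2)).sub
        (l1.const_mul ((b - a)^2*(1 - lam)/2))
    rw [hPsi_def]
    refine D.congr_deriv ?_
    push_cast
    simp only [id_eq]
    field_simp
    ring
  set Phi : ℝ → ℝ := fun y =>
    (b - y)^2/4 + (1 - lam)*(b - a)*(b - y)/2 + ((b - a)^2*(1 - lam)/2)*Real.log (y - a)
    with hPhi_def
  have hPhiD : ∀ x ∈ Icc m b, HasDerivAt Phi ((b - x)*(b - x - lam*(b - a))/(2*(x - a))) x := by
    intro x hx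
    have hxa : (0:ℝ) < x - a := by have := hx.1; simp only [hm_def] at this; linarith
    have l1 : HasDerivAt (fun y : ℝ => Real.log (y - a)) (1/(x - a)) x :=
      ((hasDerivAt_id x).sub_const a).log (ne_of_gt hxa)
    have D := (((((hasDerivAt_id x).const_sub b).pow 2).div_const 4).add
        ((((hasDerivAt_id x).const_sub b).const_mul ((1 - lam)*(b - a))).div_const 2)).add
        (l1.const_mul ((b - a)^2*(1 - lam)/2))
    rw [hPhi_def]
    refine D.congr_deriv ?_
    push_cast
    simp only [id_eq]
    field_simp
    ring
  have contdiv1 : ∀ (g : ℝ → ℝ), Continuous g → ∀ u v : ℝ, u ≤ v → v ≤ m →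
      IntervalIntegrable (fun x => g x/(2*(b - x))) volume u v := by
    intro g hg u v huv hv
    apply ContinuousOn.intervalIntegrable
    apply ContinuousOn.div hg.continuousOn (by fun_prop)
    intro x hx
    rw [uIcc_of_le huv] at hx
    have : x < b := lt_of_le_of_lt (le_trans hx.2 hv) hmb
    exact ne_of_gt (by linarith)
  have contdiv2 : ∀ (g : ℝ → ℝ), Continuous g → ∀ u v : ℝ, m ≤ u → u ≤ v →
      IntervalIntegrable (fun x => g x/(2*(x - a))) volume u v := by
    intro g hg u v hu huv
    apply ContinuousOn.intervalIntegrable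
    apply ContinuousOn.div hg.continuousOn (by fun_prop)
    intro x hx
    rw [uIcc_of_le huv] at hx
    have : a < x := lt_of_lt_of_le ham (le_trans hu hx.1)
    exact ne_of_gt (by linarith)
  -- ### left half : evaluation of the two bounding integrals
  have F1 : ∫ x in a..c, (x - a)*(x - a - lam*(b - a))/(2*(b - x)) = Psi c - Psi a := by
    apply intervalIntegral.integral_eq_sub_of_hasDerivAt
    · intro x hx
      rw [uIcc_of_le hac] at hx
      exact hPsiD x ⟨hx.1, le_trans hx.2 hcm⟩
    · exact contdiv1 _ (by fun_prop) a c hac (le_trans hcm le_rfl)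
  have F2 : ∫ x in c..m, (x - a)*(x - a - lam*(b - a))/(2*(b - x)) = Psi m - Psi c := by
    apply intervalIntegral.integral_eq_sub_of_hasDerivAt
    · intro x hx
      rw [uIcc_of_le hcm] at hx
      exact hPsiD x ⟨le_trans hac hx.1, hx.2⟩
    · exact contdiv1 _ (by fun_prop) c m hcm le_rfl
  have G1 : ∫ x in a..c, (x - a)*|x - a - lam*(b - a)|/(2*(b - x)) = -(Psi c - Psi a) := by
    rw [← F1, ← intervalIntegral.integral_neg]
    apply intervalIntegral.integral_congr
    intro x hx
    rw [uIcc_of_le hac] at hx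
    have hs : x - a - lam*(b - a) ≤ 0 := by
      have := hx.2; rw [hc_def] at this; linarith
    simp only [abs_of_nonpos hs]; ring
  have G2 : ∫ x in c..m, (x - a)*|x - a - lam*(b - a)|/(2*(b - x)) = Psi m - Psi c := by
    rw [← F2]
    apply intervalIntegral.integral_congr
    intro x hx
    rw [uIcc_of_le hcm] at hx
    have hs : 0 ≤ x - a - lam*(b - a) := by
      have := hx.1; rw [hc_def] at this; linarith
    simp only [abs_of_nonneg hs]
  have hlogc : Real.log (b - c) = Real.log (1 - lam) + Real.log (b - a) := by
    rw [show b - c = (1 - lam)*(b - a) from by rw [hc_def]; ring,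
      Real.log_mul (ne_of_gt h1lam) (ne_of_gt hba)]
  have hlogm : Real.log (b - m) = Real.log (b - a) - Real.log 2 := by
    rw [show b - m = (b - a)/2 from by rw [hm_def]; ring, Real.log_div (ne_of_gt hba) two_ne_zero]
  have hlogma : Real.log (m - a) = Real.log (b - a) - Real.log 2 := by
    rw [show m - a = (b - a)/2 from by rw [hm_def]; ring, Real.log_div (ne_of_gt hba) two_ne_zero]
  have hlogd : Real.log (d - a) = Real.log (1 - lam) + Real.log (b - a) := by
    rw [show d - a = (1 - lam)*(b - a) from by rw [hd_def]; ring,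
      Real.log_mul (ne_of_gt h1lam) (ne_of_gt hba)]
  have IT1 : (∫ x in a..m, (x - a)*|x - a - lam*(b - a)|/(2*(b - x)))
      = (b - a)^2*(5*lam/4 - lam^2/2 - 5/16)
        + (b - a)^2*(1 - lam)/2*(Real.log 2 + 2*Real.log (1 - lam)) := by
    rw [← intervalIntegral.integral_add_adjacent_intervals
      (contdiv1 _ (by fun_prop) a c hac hcm) (contdiv1 _ (by fun_prop) c m hcm le_rfl), G1, G2]
    simp only [hPsi_def]
    rw [hlogc, hlogm, hc_def, hm_def]
    ring
  have IT2 : (∫ x in a..m, |x - a - lam*(b - a)|/2)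
      = (b - a)^2*(lam^2/2 - lam/4 + 1/16) := by
    have F3 : ∫ x in a..c, -(x - a - lam*(b - a))/2
        = (-(c - a - lam*(b - a))^2/4) - (-(a - a - lam*(b - a))^2/4) := by
      apply intervalIntegral.integral_eq_sub_of_hasDerivAt
        (f := fun y : ℝ => -(y - a - lam*(b - a))^2/4)
      · intro x hx
        have D := ((((hasDerivAt_id x).sub_const a).sub_const
          (lam*(b - a))).pow 2).neg.div_const 4
        refine D.congr_deriv ?_
        push_cast
        simp only [id_eq]
        ring
      · exact (by fun_prop : Continuous fun x : ℝ =>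
          -(x - a - lam*(b - a))/2).continuousOn.intervalIntegrable
    have F4 : ∫ x in c..m, (x - a - lam*(b - a))/2
        = ((m - a - lam*(b - a))^2/4) - ((c - a - lam*(b - a))^2/4) := by
      apply intervalIntegral.integral_eq_sub_of_hasDerivAt
        (f := fun y : ℝ => (y - a - lam*(b - a))^2/4)
      · intro x hx
        have D := ((((hasDerivAt_id x).sub_const a).sub_const (lam*(b - a))).pow 2).div_const 4
        refine D.congr_deriv ?_
        push_cast
        simp only [id_eq]
        ring
      · exact (by fun_prop : Continuous fun x : ℝ =>
          (x - a - lam*(b - a))/2).continuousOn.intervalIntegrable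
    have G3 : ∫ x in a..c, |x - a - lam*(b - a)|/2 = ∫ x in a..c, -(x - a - lam*(b - a))/2 := by
      apply intervalIntegral.integral_congr
      intro x hx
      rw [uIcc_of_le hac] at hx
      have hs : x - a - lam*(b - a) ≤ 0 := by
        have := hx.2; rw [hc_def] at this; linarith
      simp only [abs_of_nonpos hs]
    have G4 : ∫ x in c..m, |x - a - lam*(b - a)|/2 = ∫ x in c..m, (x - a - lam*(b - a))/2 := by
      apply intervalIntegral.integral_congr
      intro x hx
      rw [uIcc_of_le hcm] at hx
      have hs : 0 ≤ x - a - lam*(b - a) := by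
        have := hx.1; rw [hc_def] at this; linarith
      simp only [abs_of_nonneg hs]
    have i1 : IntervalIntegrable (fun x => |x - a - lam*(b - a)|/2) volume a c :=
      (by fun_prop : Continuous fun x : ℝ =>
        |x - a - lam*(b - a)|/2).continuousOn.intervalIntegrable
    have i2 : IntervalIntegrable (fun x => |x - a - lam*(b - a)|/2) volume c m :=
      (by fun_prop : Continuous fun x : ℝ =>
        |x - a - lam*(b - a)|/2).continuousOn.intervalIntegrable
    rw [← intervalIntegral.integral_add_adjacent_intervals i1 i2, G3, G4, F3, F4]
    simp only [hc_def, hm_def]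
    ring
  -- ### right half : evaluation of the two bounding integrals
  have F5 : ∫ x in m..d, (b - x)*(b - x - lam*(b - a))/(2*(x - a)) = Phi d - Phi m := by
    apply intervalIntegral.integral_eq_sub_of_hasDerivAt
    · intro x hx
      rw [uIcc_of_le hmd] at hx
      exact hPhiD x ⟨hx.1, le_trans hx.2 hdb⟩
    · exact contdiv2 _ (by fun_prop) m d le_rfl hmd
  have F6 : ∫ x in d..b, (b - x)*(b - x - lam*(b - a))/(2*(x - a)) = Phi b - Phi d := by
    apply intervalIntegral.integral_eq_sub_of_hasDerivAt
    · intro x hx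
      rw [uIcc_of_le hdb] at hx
      exact hPhiD x ⟨le_trans hmd hx.1, hx.2⟩
    · exact contdiv2 _ (by fun_prop) d b hmd hdb
  have G5 : ∫ x in m..d, (b - x)*|b - x - lam*(b - a)|/(2*(x - a)) = Phi d - Phi m := by
    rw [← F5]
    apply intervalIntegral.integral_congr
    intro x hx
    rw [uIcc_of_le hmd] at hx
    have hs : 0 ≤ b - x - lam*(b - a) := by
      have := hx.2; rw [hd_def] at this; linarith
    simp only [abs_of_nonneg hs]
  have G6 : ∫ x in d..b, (b - x)*|b - x - lam*(b - a)|/(2*(x - a)) = -(Phi b - Phi d) := by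
    rw [← F6, ← intervalIntegral.integral_neg]
    apply intervalIntegral.integral_congr
    intro x hx
    rw [uIcc_of_le hdb] at hx
    have hs : b - x - lam*(b - a) ≤ 0 := by
      have := hx.1; rw [hd_def] at this; linarith
    simp only [abs_of_nonpos hs]; ring
  have IT3 : (∫ x in m..b, (b - x)*|b - x - lam*(b - a)|/(2*(x - a)))
      = (b - a)^2*(5*lam/4 - lam^2/2 - 5/16)
        + (b - a)^2*(1 - lam)/2*(Real.log 2 + 2*Real.log (1 - lam)) := by
    rw [← intervalIntegral.integral_add_adjacent_intervals
      (contdiv2 _ (by fun_prop) m d le_rfl hmd) (contdiv2 _ (by fun_prop) d b hmd hdb), G5, G6]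
    simp only [hPhi_def]
    rw [hlogd, hlogma, hd_def, hm_def]
    ring
  have IT4 : (∫ x in m..b, |b - x - lam*(b - a)|/2)
      = (b - a)^2*(lam^2/2 - lam/4 + 1/16) := by
    have F7 : ∫ x in m..d, (b - x - lam*(b - a))/2
        = (-(b - d - lam*(b - a))^2/4) - (-(b - m - lam*(b - a))^2/4) := by
      apply intervalIntegral.integral_eq_sub_of_hasDerivAt
        (f := fun y : ℝ => -(b - y - lam*(b - a))^2/4)
      · intro x hx
        have D := ((((hasDerivAt_id x).const_sub b).sub_const
          (lam*(b - a))).pow 2).neg.div_const 4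
        refine D.congr_deriv ?_
        push_cast
        simp only [id_eq]
        ring
      · exact (by fun_prop : Continuous fun x : ℝ =>
          (b - x - lam*(b - a))/2).continuousOn.intervalIntegrable
    have F8 : ∫ x in d..b, -(b - x - lam*(b - a))/2
        = ((b - b - lam*(b - a))^2/4) - ((b - d - lam*(b - a))^2/4) := by
      apply intervalIntegral.integral_eq_sub_of_hasDerivAt
        (f := fun y : ℝ => (b - y - lam*(b - a))^2/4)
      · intro x hx
        have D := ((((hasDerivAt_id x).const_sub b).sub_const (lam*(b - a))).pow 2).div_const 4
        refine D.congr_deriv ?_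
        push_cast
        simp only [id_eq]
        ring
      · exact (by fun_prop : Continuous fun x : ℝ =>
          -(b - x - lam*(b - a))/2).continuousOn.intervalIntegrable
    have G7 : ∫ x in m..d, |b - x - lam*(b - a)|/2 = ∫ x in m..d, (b - x - lam*(b - a))/2 := by
      apply intervalIntegral.integral_congr
      intro x hx
      rw [uIcc_of_le hmd] at hx
      have hs : 0 ≤ b - x - lam*(b - a) := by
        have := hx.2; rw [hd_def] at this; linarith
      simp only [abs_of_nonneg hs]
    have G8 : ∫ x in d..b, |b - x - lam*(b - a)|/2 = ∫ x in d..b, -(b - x - lam*(b - a))/2 := by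
      apply intervalIntegral.integral_congr
      intro x hx
      rw [uIcc_of_le hdb] at hx
      have hs : b - x - lam*(b - a) ≤ 0 := by
        have := hx.1; rw [hd_def] at this; linarith
      simp only [abs_of_nonpos hs]
    have i1 : IntervalIntegrable (fun x => |b - x - lam*(b - a)|/2) volume m d :=
      (by fun_prop : Continuous fun x : ℝ =>
        |b - x - lam*(b - a)|/2).continuousOn.intervalIntegrable
    have i2 : IntervalIntegrable (fun x => |b - x - lam*(b - a)|/2) volume d b :=
      (by fun_prop : Continuous fun x : ℝ =>
        |b - x - lam*(b - a)|/2).continuousOn.intervalIntegrable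
    rw [← intervalIntegral.integral_add_adjacent_intervals i1 i2, G7, G8, F7, F8]
    simp only [hd_def, hm_def]
    ring
  -- ### pointwise bounds from the Godunova-Levin property
  have ptw1 : ∀ x ∈ Icc a m, |((x - a) * ((x - a) - lam * (b - a)) / 2) * f'' x|
      ≤ |f'' a| * (b - a) * ((x - a)*|x - a - lam*(b - a)|/(2*(b - x)))
        + |f'' b| * (b - a) * (|x - a - lam*(b - a)|/2) := by
    intro x hx
    obtain ⟨hx1, hx2⟩ := hx
    have hxb : x < b := lt_of_le_of_lt hx2 hmb
    rcases eq_or_lt_of_le hx1 with heq | hax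
    · rw [show ((x - a) * ((x - a) - lam * (b - a)) / 2) * f'' x = 0 from by
        rw [← heq]; ring, abs_zero]
      apply add_nonneg
      · apply mul_nonneg (mul_nonneg (abs_nonneg _) hba.le)
        apply div_nonneg (mul_nonneg (by linarith) (abs_nonneg _)) (by linarith)
      · apply mul_nonneg (mul_nonneg (abs_nonneg _) hba.le)
        exact div_nonneg (abs_nonneg _) (by norm_num)
    · have hl0 : 0 < (b - x)/(b - a) := div_pos (by linarith) hba
      have hl1 : (b - x)/(b - a) < 1 := (div_lt_one hba).2 (by linarith)
      have hG : |f'' x| ≤ |f'' a| / ((b - x)/(b - a)) + |f'' b| / (1 - (b - x)/(b - a)) := by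
        have h0 := hQ.2 a ha b hb ((b - x)/(b - a)) hl0 hl1
        simpa [show (b - x)/(b - a) * a + (1 - (b - x)/(b - a)) * b = x from by
          field_simp; ring] using h0
      calc |((x - a) * ((x - a) - lam * (b - a)) / 2) * f'' x|
          = ((x - a)*|x - a - lam*(b - a)|/2) * |f'' x| := by
            rw [abs_mul, abs_div, abs_mul, abs_of_nonneg (by linarith : (0:ℝ) ≤ x - a)]
            norm_num
        _ ≤ ((x - a)*|x - a - lam*(b - a)|/2) *
              (|f'' a| / ((b - x)/(b - a)) + |f'' b| / (1 - (b - x)/(b - a))) := by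
            apply mul_le_mul_of_nonneg_left hG
            exact div_nonneg (mul_nonneg (by linarith) (abs_nonneg _)) (by norm_num)
        _ = |f'' a| * (b - a) * ((x - a)*|x - a - lam*(b - a)|/(2*(b - x)))
              + |f'' b| * (b - a) * (|x - a - lam*(b - a)|/2) := by
            have hbx' : b - x ≠ 0 := ne_of_gt (by linarith)
            have hxa' : x - a ≠ 0 := ne_of_gt (by linarith)
            rw [show 1 - (b - x)/(b - a) = (x - a)/(b - a) from by field_simp; ring]
            generalize |x - a - lam*(b - a)| = q
            field_simp
  have ptw2 : ∀ x ∈ Icc m b, |((b - x) * ((b - x) - lam * (b - a)) / 2) * f'' x|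
      ≤ |f'' a| * (b - a) * (|b - x - lam*(b - a)|/2)
        + |f'' b| * (b - a) * ((b - x)*|b - x - lam*(b - a)|/(2*(x - a))) := by
    intro x hx
    obtain ⟨hx1, hx2⟩ := hx
    have hax : a < x := lt_of_lt_of_le ham hx1
    rcases eq_or_lt_of_le hx2 with heq | hxb
    · rw [show ((b - x) * ((b - x) - lam * (b - a)) / 2) * f'' x = 0 from by
        rw [heq]; ring, abs_zero]
      apply add_nonneg
      · apply mul_nonneg (mul_nonneg (abs_nonneg _) hba.le)
        exact div_nonneg (abs_nonneg _) (by norm_num)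
      · apply mul_nonneg (mul_nonneg (abs_nonneg _) hba.le)
        apply div_nonneg (mul_nonneg (by linarith) (abs_nonneg _)) (by linarith)
    · have hl0 : 0 < (b - x)/(b - a) := div_pos (by linarith) hba
      have hl1 : (b - x)/(b - a) < 1 := (div_lt_one hba).2 (by linarith)
      have hG : |f'' x| ≤ |f'' a| / ((b - x)/(b - a)) + |f'' b| / (1 - (b - x)/(b - a)) := by
        have h0 := hQ.2 a ha b hb ((b - x)/(b - a)) hl0 hl1
        simpa [show (b - x)/(b - a) * a + (1 - (b - x)/(b - a)) * b = x from by
          field_simp; ring] using h0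
      calc |((b - x) * ((b - x) - lam * (b - a)) / 2) * f'' x|
          = ((b - x)*|b - x - lam*(b - a)|/2) * |f'' x| := by
            rw [abs_mul, abs_div, abs_mul, abs_of_nonneg (by linarith : (0:ℝ) ≤ b - x)]
            norm_num
        _ ≤ ((b - x)*|b - x - lam*(b - a)|/2) *
              (|f'' a| / ((b - x)/(b - a)) + |f'' b| / (1 - (b - x)/(b - a))) := by
            apply mul_le_mul_of_nonneg_left hG
            exact div_nonneg (mul_nonneg (by linarith) (abs_nonneg _)) (by norm_num)
        _ = |f'' a| * (b - a) * (|b - x - lam*(b - a)|/2)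
              + |f'' b| * (b - a) * ((b - x)*|b - x - lam*(b - a)|/(2*(x - a))) := by
            have hbx' : b - x ≠ 0 := ne_of_gt (by linarith)
            have hxa' : x - a ≠ 0 := ne_of_gt (by linarith)
            rw [show 1 - (b - x)/(b - a) = (x - a)/(b - a) from by field_simp; ring]
            generalize |b - x - lam*(b - a)| = q
            field_simp
  -- ### integral bounds for the two halves
  have contK1 : ContinuousOn (fun x : ℝ => (x - a) * ((x - a) - lam * (b - a)) / 2) (uIcc a m) :=
    (by fun_prop : Continuous fun x : ℝ => (x - a) * ((x - a) - lam * (b - a)) / 2).continuousOn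
  have contK2 : ContinuousOn (fun x : ℝ => (b - x) * ((b - x) - lam * (b - a)) / 2) (uIcc m b) :=
    (by fun_prop : Continuous fun x : ℝ => (b - x) * ((b - x) - lam * (b - a)) / 2).continuousOn
  have intabs1 : IntervalIntegrable
      (fun x => |((x - a) * ((x - a) - lam * (b - a)) / 2) * f'' x|) volume a m :=
    (intf''1.continuousOn_mul contK1).abs
  have intabs2 : IntervalIntegrable
      (fun x => |((b - x) * ((b - x) - lam * (b - a)) / 2) * f'' x|) volume m b :=
    (intf''2.continuousOn_mul contK2).abs
  have iA1 : IntervalIntegrable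
      (fun x => |f'' a| * (b - a) * ((x - a)*|x - a - lam*(b - a)|/(2*(b - x)))) volume a m :=
    (contdiv1 (fun x => (x - a)*|x - a - lam*(b - a)|) (by fun_prop) a m ham.le le_rfl).const_mul _
  have iB1 : IntervalIntegrable
      (fun x => |f'' b| * (b - a) * (|x - a - lam*(b - a)|/2)) volume a m :=
    ((by fun_prop : Continuous fun x : ℝ =>
      |x - a - lam*(b - a)|/2).continuousOn.intervalIntegrable).const_mul _
  have iA2 : IntervalIntegrable
      (fun x => |f'' a| * (b - a) * (|b - x - lam*(b - a)|/2)) volume m b :=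
    ((by fun_prop : Continuous fun x : ℝ =>
      |b - x - lam*(b - a)|/2).continuousOn.intervalIntegrable).const_mul _
  have iB2 : IntervalIntegrable
      (fun x => |f'' b| * (b - a) * ((b - x)*|b - x - lam*(b - a)|/(2*(x - a)))) volume m b :=
    (contdiv2 (fun x => (b - x)*|b - x - lam*(b - a)|) (by fun_prop) m b le_rfl hmb.le).const_mul _
  have S1 : |∫ x in a..m, ((x - a) * ((x - a) - lam * (b - a)) / 2) * f'' x|
      ≤ |f'' a| * (b - a) * ((b - a)^2*(5*lam/4 - lam^2/2 - 5/16)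
          + (b - a)^2*(1 - lam)/2*(Real.log 2 + 2*Real.log (1 - lam)))
        + |f'' b| * (b - a) * ((b - a)^2*(lam^2/2 - lam/4 + 1/16)) := by
    calc |∫ x in a..m, ((x - a) * ((x - a) - lam * (b - a)) / 2) * f'' x|
        ≤ ∫ x in a..m, |((x - a) * ((x - a) - lam * (b - a)) / 2) * f'' x| := by
          simpa only [Real.norm_eq_abs] using
            intervalIntegral.norm_integral_le_integral_norm (μ := volume)
              (f := fun x => ((x - a) * ((x - a) - lam * (b - a)) / 2) * f'' x) ham.le
      _ ≤ ∫ x in a..m, (|f'' a| * (b - a) * ((x - a)*|x - a - lam*(b - a)|/(2*(b - x)))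
            + |f'' b| * (b - a) * (|x - a - lam*(b - a)|/2)) :=
          intervalIntegral.integral_mono_on ham.le intabs1 (iA1.add iB1) ptw1
      _ = |f'' a| * (b - a) * (∫ x in a..m, (x - a)*|x - a - lam*(b - a)|/(2*(b - x)))
            + |f'' b| * (b - a) * (∫ x in a..m, |x - a - lam*(b - a)|/2) := by
          rw [intervalIntegral.integral_add iA1 iB1,
            intervalIntegral.integral_const_mul, intervalIntegral.integral_const_mul]
      _ = _ := by rw [IT1, IT2]
  have S2 : |∫ x in m..b, ((b - x) * ((b - x) - lam * (b - a)) / 2) * f'' x|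
      ≤ |f'' a| * (b - a) * ((b - a)^2*(lam^2/2 - lam/4 + 1/16))
        + |f'' b| * (b - a) * ((b - a)^2*(5*lam/4 - lam^2/2 - 5/16)
          + (b - a)^2*(1 - lam)/2*(Real.log 2 + 2*Real.log (1 - lam))) := by
    calc |∫ x in m..b, ((b - x) * ((b - x) - lam * (b - a)) / 2) * f'' x|
        ≤ ∫ x in m..b, |((b - x) * ((b - x) - lam * (b - a)) / 2) * f'' x| := by
          simpa only [Real.norm_eq_abs] using
            intervalIntegral.norm_integral_le_integral_norm (μ := volume)
              (f := fun x => ((b - x) * ((b - x) - lam * (b - a)) / 2) * f'' x) hmb.le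
      _ ≤ ∫ x in m..b, (|f'' a| * (b - a) * (|b - x - lam*(b - a)|/2)
            + |f'' b| * (b - a) * ((b - x)*|b - x - lam*(b - a)|/(2*(x - a)))) :=
          intervalIntegral.integral_mono_on hmb.le intabs2 (iA2.add iB2) ptw2
      _ = |f'' a| * (b - a) * (∫ x in m..b, |b - x - lam*(b - a)|/2)
            + |f'' b| * (b - a) * (∫ x in m..b, (b - x)*|b - x - lam*(b - a)|/(2*(x - a))) := by
          rw [intervalIntegral.integral_add iA2 iB2,
            intervalIntegral.integral_const_mul, intervalIntegral.integral_const_mul]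
      _ = _ := by rw [IT3, IT4]
  -- ### final assembly
  rw [key]
  have hlogR : Real.log (2*(1 - lam)^2) = Real.log 2 + 2*Real.log (1 - lam) := by
    rw [Real.log_mul two_ne_zero (pow_ne_zero 2 (ne_of_gt h1lam)), Real.log_pow]
    push_cast; ring
  rw [abs_mul, abs_of_pos (by positivity : (0:ℝ) < 1/(b - a))]
  apply le_trans (mul_le_mul_of_nonneg_left
    (le_trans (abs_add_le _ _) (add_le_add S1 S2)) (by positivity : (0:ℝ) ≤ 1/(b - a)))
  apply le_of_eq
  rw [hlogR]
  field_simp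
  ring
end

section
/- Let I ⊂ ℝ be an open interval, a, b ∈ I with a < b, f : I → ℝ a twice differentiable mapping such that f'' is integrable on [a,b], and suppose |f''| belongs to the Godunova-Levin class Q(I). If 1/2 ≤ λ ≤ 1, then |(λ − 1)·f((a+b)/2) − λ·(f(a)+f(b))/2 + (1/(b−a))·∫ₐᵇ f(x) dx| ≤ ((b−a)²/2) · [(λ−1)·ln 2 + 1/2] · (|f''(a)| + |f''(b)|). -/
open MeasureTheory Set Real

set_option maxHeartbeats 2000000 in
theorem godunova_levin_corollary_second_case
    (I : Set ℝ) (hI : IsOpen I) (hI' : I.OrdConnected)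
    (a b : ℝ) (ha : a ∈ I) (hb : b ∈ I) (hab : a < b)
    (f f' f'' : ℝ → ℝ)
    (hf' : ∀ x ∈ I, HasDerivAt f (f' x) x)
    (hf'' : ∀ x ∈ I, HasDerivAt f' (f'' x) x)
    (hint : IntervalIntegrable f'' volume a b)
    (hQ : GodunovaLevin I (fun x => |f'' x|))
    (lam : ℝ) (hlam0 : 1 / 2 ≤ lam) (hlam1 : lam ≤ 1) :
    |(lam - 1) * f ((a + b) / 2) - lam * (f a + f b) / 2
        + (1 / (b - a)) * ∫ x in a..b, f x|
      ≤ ((b - a) ^ 2 / 2) * ((lam - 1) * Real.log 2 + 1 / 2) *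
          (|f'' a| + |f'' b|) := by
  have hba : (0:ℝ) < b - a := sub_pos.mpr hab
  have hm1 : a < (a+b)/2 := by linarith
  have hm2 : (a+b)/2 < b := by linarith
  have hsub : Icc a b ⊆ I := hI'.out ha hb
  have huab : uIcc a b = Icc a b := uIcc_of_le hab.le
  have huIcc1 : uIcc a ((a+b)/2) = Icc a ((a+b)/2) := uIcc_of_le hm1.le
  have huIcc2 : uIcc ((a+b)/2) b = Icc ((a+b)/2) b := uIcc_of_le hm2.le
  have hsub1 : uIcc a ((a+b)/2) ⊆ uIcc a b := by
    rw [huIcc1, huab]; exact Icc_subset_Icc le_rfl hm2.le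
  have hsub2 : uIcc ((a+b)/2) b ⊆ uIcc a b := by
    rw [huIcc2, huab]; exact Icc_subset_Icc hm1.le le_rfl
  have hfc : ContinuousOn f (uIcc a b) := fun x hx =>
    ((hf' x (hsub (huab ▸ hx))).continuousAt).continuousWithinAt
  have hfint1 : IntervalIntegrable f volume a ((a+b)/2) :=
    (hfc.mono hsub1).intervalIntegrable
  have hfint2 : IntervalIntegrable f volume ((a+b)/2) b :=
    (hfc.mono hsub2).intervalIntegrable
  have hint1 : IntervalIntegrable f'' volume a ((a+b)/2) := hint.mono_set hsub1
  have hint2 : IntervalIntegrable f'' volume ((a+b)/2) b := hint.mono_set hsub2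
  have hK1int : IntervalIntegrable (fun x => (x-a)*((x-a)-lam*(b-a))/2 * f'' x)
      volume a ((a+b)/2) := hint1.continuousOn_mul (by fun_prop)
  have hK2int : IntervalIntegrable (fun x => (b-x)*((b-x)-lam*(b-a))/2 * f'' x)
      volume ((a+b)/2) b := hint2.continuousOn_mul (by fun_prop)
  -- Step 1: integral identities via FTC (the kernels have second derivative 1).
  have hS1 : ∫ x in a..(a+b)/2, (x-a)*((x-a)-lam*(b-a))/2 * f'' x
      = ((((a+b)/2)-a)*((((a+b)/2)-a)-lam*(b-a))/2 * f' ((a+b)/2)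
          - ((((a+b)/2)-a)-lam*(b-a)/2) * f ((a+b)/2))
        - ((a-a)*((a-a)-lam*(b-a))/2 * f' a - ((a-a)-lam*(b-a)/2) * f a)
        + ∫ x in a..(a+b)/2, f x := by
    have hftc : ∫ x in a..(a+b)/2, ((x-a)*((x-a)-lam*(b-a))/2 * f'' x - f x)
        = ((((a+b)/2)-a)*((((a+b)/2)-a)-lam*(b-a))/2 * f' ((a+b)/2)
            - ((((a+b)/2)-a)-lam*(b-a)/2) * f ((a+b)/2))
          - ((a-a)*((a-a)-lam*(b-a))/2 * f' a - ((a-a)-lam*(b-a)/2) * f a) := by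
      apply intervalIntegral.integral_eq_sub_of_hasDerivAt
        (f := fun x => (x-a)*((x-a)-lam*(b-a))/2 * f' x - ((x-a)-lam*(b-a)/2) * f x)
      · intro x hx
        have hxI : x ∈ I := hsub (huab ▸ hsub1 hx)
        have hK1 : HasDerivAt (fun x : ℝ => (x-a)*((x-a)-lam*(b-a))/2)
            ((x-a) - lam*(b-a)/2) x := by
          have := (((hasDerivAt_id x).sub_const a).mul
            (((hasDerivAt_id x).sub_const a).sub_const (lam*(b-a)))).div_const 2
          exact this.congr_deriv (by simp only [id_eq]; ring)
        have hK1' : HasDerivAt (fun x : ℝ => (x-a)-lam*(b-a)/2) 1 x := by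
          simpa using ((hasDerivAt_id x).sub_const a).sub_const (lam*(b-a)/2)
        have h1 := hK1.mul (hf'' x hxI)
        have h2 := hK1'.mul (hf' x hxI)
        convert h1.sub h2 using 1
        · rfl
        ring
      · exact hK1int.sub hfint1
    rw [← hftc, intervalIntegral.integral_sub hK1int hfint1]; ring
  have hS2 : ∫ x in ((a+b)/2)..b, (b-x)*((b-x)-lam*(b-a))/2 * f'' x
      = ((b-b)*((b-b)-lam*(b-a))/2 * f' b - (-(b-b)+lam*(b-a)/2) * f b)
        - ((b-(a+b)/2)*((b-(a+b)/2)-lam*(b-a))/2 * f' ((a+b)/2)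
            - (-(b-(a+b)/2)+lam*(b-a)/2) * f ((a+b)/2))
        + ∫ x in ((a+b)/2)..b, f x := by
    have hftc : ∫ x in ((a+b)/2)..b, ((b-x)*((b-x)-lam*(b-a))/2 * f'' x - f x)
        = ((b-b)*((b-b)-lam*(b-a))/2 * f' b - (-(b-b)+lam*(b-a)/2) * f b)
          - ((b-(a+b)/2)*((b-(a+b)/2)-lam*(b-a))/2 * f' ((a+b)/2)
              - (-(b-(a+b)/2)+lam*(b-a)/2) * f ((a+b)/2)) := by
      apply intervalIntegral.integral_eq_sub_of_hasDerivAt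
        (f := fun x => (b-x)*((b-x)-lam*(b-a))/2 * f' x - (-(b-x)+lam*(b-a)/2) * f x)
      · intro x hx
        have hxI : x ∈ I := hsub (huab ▸ hsub2 hx)
        have hK2 : HasDerivAt (fun x : ℝ => (b-x)*((b-x)-lam*(b-a))/2)
            (-(b-x) + lam*(b-a)/2) x := by
          have := ((((hasDerivAt_id x).const_sub b)).mul
            ((((hasDerivAt_id x).const_sub b)).sub_const (lam*(b-a)))).div_const 2
          exact this.congr_deriv (by simp only [id_eq]; ring)
        have hK2' : HasDerivAt (fun x : ℝ => -(b-x)+lam*(b-a)/2) 1 x := by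
          simpa using (((hasDerivAt_id x).const_sub b).neg).add_const (lam*(b-a)/2)
        have h1 := hK2.mul (hf'' x hxI)
        have h2 := hK2'.mul (hf' x hxI)
        convert h1.sub h2 using 1
        · rfl
        ring
      · exact hK2int.sub hfint2
    rw [← hftc, intervalIntegral.integral_sub hK2int hfint2]; ring
  have hsplit : (∫ x in a..(a+b)/2, f x) + ∫ x in ((a+b)/2)..b, f x = ∫ x in a..b, f x :=
    intervalIntegral.integral_add_adjacent_intervals hfint1 hfint2
  have hsum : (∫ x in a..(a+b)/2, (x-a)*((x-a)-lam*(b-a))/2 * f'' x)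
      + (∫ x in ((a+b)/2)..b, (b-x)*((b-x)-lam*(b-a))/2 * f'' x)
      = (b-a)*((lam-1)*f ((a+b)/2) - lam*(f a + f b)/2) + ∫ x in a..b, f x := by
    rw [hS1, hS2]; linear_combination hsplit
  -- Step 2: pointwise bound via the Godunova-Levin property.
  have hGLbd : ∀ x, a < x → x < b →
      |f'' x| ≤ |f'' a| * (b-a)/(b-x) + |f'' b| * (b-a)/(x-a) := by
    intro x hax hxb
    have ht0 : 0 < (b-x)/(b-a) := div_pos (by linarith) hba
    have ht1 : (b-x)/(b-a) < 1 := (div_lt_one hba).mpr (by linarith)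
    have hGL := hQ.2 a ha b hb _ ht0 ht1
    have hxe : (b-x)/(b-a) * a + (1 - (b-x)/(b-a)) * b = x := by
      field_simp; ring
    rw [hxe] at hGL
    have h1t : 1 - (b-x)/(b-a) = (x-a)/(b-a) := by field_simp; ring
    rw [h1t] at hGL
    calc |f'' x| ≤ |f'' a| / ((b-x)/(b-a)) + |f'' b| / ((x-a)/(b-a)) := hGL
      _ = |f'' a| * (b-a)/(b-x) + |f'' b| * (b-a)/(x-a) := by
          rw [div_div_eq_mul_div, div_div_eq_mul_div]
  have hptw1 : ∀ x ∈ Icc a ((a+b)/2),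
      |(x-a)*((x-a)-lam*(b-a))/2 * f'' x|
        ≤ |f'' a| *(b-a)*((x-a)*(lam*(b-a)-(x-a))/(2*(b-x)))
          + |f'' b| *(b-a)*((lam*(b-a)-(x-a))/2) := by
    intro x hx
    obtain ⟨hx1, hx2⟩ := hx
    rcases eq_or_lt_of_le hx1 with heq | hax
    · rw [← heq]
      have e0 : (a-a)*((a-a)-lam*(b-a))/2 * f'' a = 0 := by ring
      have e1 : |f'' a| * (b-a)*((a-a)*(lam*(b-a)-(a-a))/(2*(b-a))) = 0 := by ring
      rw [e0, abs_zero, e1, zero_add]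
      have h3 : (0:ℝ) ≤ lam*(b-a) := by nlinarith
      have h4 := mul_nonneg (mul_nonneg (abs_nonneg (f'' b)) hba.le) h3
      nlinarith [h4]
    · have hxb : x < b := lt_of_le_of_lt hx2 hm2
      have hbd := hGLbd x hax hxb
      have h5 : x - a ≤ lam*(b-a) := by
        nlinarith [mul_nonneg (by linarith : (0:ℝ) ≤ lam - 1/2) hba.le]
      have h7 := mul_nonneg (sub_pos.mpr hax).le (by linarith : (0:ℝ) ≤ lam*(b-a)-(x-a))
      have hKnn : 0 ≤ (x-a)*(lam*(b-a)-(x-a))/2 := by nlinarith [h7]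
      have h6 : (x-a)*((x-a)-lam*(b-a))/2 ≤ 0 := by nlinarith [h7]
      calc |(x-a)*((x-a)-lam*(b-a))/2 * f'' x|
          = (x-a)*(lam*(b-a)-(x-a))/2 * |f'' x| := by
            rw [abs_mul, abs_of_nonpos h6]; ring
        _ ≤ (x-a)*(lam*(b-a)-(x-a))/2
              * (|f'' a| * (b-a)/(b-x) + |f'' b| * (b-a)/(x-a)) :=
            mul_le_mul_of_nonneg_left hbd hKnn
        _ = |f'' a| *(b-a)*((x-a)*(lam*(b-a)-(x-a))/(2*(b-x)))
              + |f'' b| *(b-a)*((lam*(b-a)-(x-a))/2) := by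
            have h1 : b - x ≠ 0 := ne_of_gt (by linarith)
            have h2 : x - a ≠ 0 := ne_of_gt (by linarith)
            field_simp
  have hptw2 : ∀ x ∈ Icc ((a+b)/2) b,
      |(b-x)*((b-x)-lam*(b-a))/2 * f'' x|
        ≤ |f'' a| * (b-a)*((lam*(b-a)-(b-x))/2)
          + |f'' b| * (b-a)*((b-x)*(lam*(b-a)-(b-x))/(2*(x-a))) := by
    intro x hx
    obtain ⟨hx1, hx2⟩ := hx
    rcases eq_or_lt_of_le hx2 with heq | hxb
    · rw [heq]
      have e0 : (b-b)*((b-b)-lam*(b-a))/2 * f'' b = 0 := by ring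
      have e1 : |f'' b| * (b-a)*((b-b)*(lam*(b-a)-(b-b))/(2*(b-a))) = 0 := by ring
      rw [e0, abs_zero, e1, add_zero]
      have h3 : (0:ℝ) ≤ lam*(b-a) := by nlinarith
      have h4 := mul_nonneg (mul_nonneg (abs_nonneg (f'' a)) hba.le) h3
      nlinarith [h4]
    · have hax : a < x := lt_of_lt_of_le hm1 hx1
      have hbd := hGLbd x hax hxb
      have h5 : b - x ≤ lam*(b-a) := by
        nlinarith [mul_nonneg (by linarith : (0:ℝ) ≤ lam - 1/2) hba.le]
      have h7 := mul_nonneg (sub_pos.mpr hxb).le (by linarith : (0:ℝ) ≤ lam*(b-a)-(b-x))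
      have hKnn : 0 ≤ (b-x)*(lam*(b-a)-(b-x))/2 := by nlinarith [h7]
      have h6 : (b-x)*((b-x)-lam*(b-a))/2 ≤ 0 := by nlinarith [h7]
      calc |(b-x)*((b-x)-lam*(b-a))/2 * f'' x|
          = (b-x)*(lam*(b-a)-(b-x))/2 * |f'' x| := by
            rw [abs_mul, abs_of_nonpos h6]; ring
        _ ≤ (b-x)*(lam*(b-a)-(b-x))/2
              * (|f'' a| * (b-a)/(b-x) + |f'' b| * (b-a)/(x-a)) :=
            mul_le_mul_of_nonneg_left hbd hKnn
        _ = |f'' a| * (b-a)*((lam*(b-a)-(b-x))/2)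
              + |f'' b| * (b-a)*((b-x)*(lam*(b-a)-(b-x))/(2*(x-a))) := by
            have h1 : b - x ≠ 0 := ne_of_gt (by linarith)
            have h2 : x - a ≠ 0 := ne_of_gt (by linarith)
            field_simp
  -- integrability of the comparison functions
  have hr1c : ContinuousOn (fun x => |f'' a| * (b-a)*((x-a)*(lam*(b-a)-(x-a))/(2*(b-x)))
      + |f'' b| * (b-a)*((lam*(b-a)-(x-a))/2)) (uIcc a ((a+b)/2)) := by
    apply ContinuousOn.add
    · apply continuousOn_const.mul
      apply ContinuousOn.div (by fun_prop) (by fun_prop)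
      intro x hx
      rw [huIcc1] at hx
      have : x < b := lt_of_le_of_lt hx.2 hm2
      exact ne_of_gt (by linarith)
    · fun_prop
  have hr2c : ContinuousOn (fun x => |f'' a| * (b-a)*((lam*(b-a)-(b-x))/2)
      + |f'' b| * (b-a)*((b-x)*(lam*(b-a)-(b-x))/(2*(x-a)))) (uIcc ((a+b)/2) b) := by
    apply ContinuousOn.add
    · fun_prop
    · apply continuousOn_const.mul
      apply ContinuousOn.div (by fun_prop) (by fun_prop)
      intro x hx
      rw [huIcc2] at hx
      have : a < x := lt_of_lt_of_le hm1 hx.1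
      exact ne_of_gt (by linarith)
  have hmono1 : ∫ x in a..(a+b)/2, |(x-a)*((x-a)-lam*(b-a))/2 * f'' x|
      ≤ ∫ x in a..(a+b)/2, (|f'' a| * (b-a)*((x-a)*(lam*(b-a)-(x-a))/(2*(b-x)))
          + |f'' b| * (b-a)*((lam*(b-a)-(x-a))/2)) :=
    intervalIntegral.integral_mono_on hm1.le hK1int.abs hr1c.intervalIntegrable hptw1
  have hmono2 : ∫ x in ((a+b)/2)..b, |(b-x)*((b-x)-lam*(b-a))/2 * f'' x|
      ≤ ∫ x in ((a+b)/2)..b, (|f'' a| * (b-a)*((lam*(b-a)-(b-x))/2)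
          + |f'' b| * (b-a)*((b-x)*(lam*(b-a)-(b-x))/(2*(x-a)))) :=
    intervalIntegral.integral_mono_on hm2.le hK2int.abs hr2c.intervalIntegrable hptw2
  -- explicit computation of the comparison integrals (they involve logarithms)
  have hlogm1 : Real.log (b - (a+b)/2) = Real.log (b-a) - Real.log 2 := by
    rw [show b - (a+b)/2 = (b-a)/2 by ring, Real.log_div (ne_of_gt hba) two_ne_zero]
  have hlogm2 : Real.log ((a+b)/2 - a) = Real.log (b-a) - Real.log 2 := by
    rw [show (a+b)/2 - a = (b-a)/2 by ring, Real.log_div (ne_of_gt hba) two_ne_zero]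
  have hFTC1 : ∫ x in a..(a+b)/2, (|f'' a| * (b-a)*((x-a)*(lam*(b-a)-(x-a))/(2*(b-x)))
      + |f'' b| * (b-a)*((lam*(b-a)-(x-a))/2))
      = |f'' a| * (b-a)^3*((lam-1)*Real.log 2/2 + (2-lam)/4 - 3/16)
        + |f'' b| * (b-a)^3*((4*lam-1)/16) := by
    have hftc : ∫ x in a..(a+b)/2, (|f'' a| * (b-a)*((x-a)*(lam*(b-a)-(x-a))/(2*(b-x)))
        + |f'' b| * (b-a)*((lam*(b-a)-(x-a))/2))
        = (|f'' a| * (b-a) * (-((lam-1)*(b-a)^2/2) * Real.log (b-((a+b)/2))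
              + (2-lam)*(b-a)*((a+b)/2)/2 + (b-((a+b)/2))^2/4)
            + |f'' b| * (b-a) * (lam*(b-a)*((a+b)/2)/2 - (((a+b)/2)-a)^2/4))
          - (|f'' a| * (b-a) * (-((lam-1)*(b-a)^2/2) * Real.log (b-a)
              + (2-lam)*(b-a)*a/2 + (b-a)^2/4)
            + |f'' b| * (b-a) * (lam*(b-a)*a/2 - (a-a)^2/4)) := by
      apply intervalIntegral.integral_eq_sub_of_hasDerivAt
        (f := fun x => |f'' a| * (b-a) * (-((lam-1)*(b-a)^2/2) * Real.log (b-x)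
              + (2-lam)*(b-a)*x/2 + (b-x)^2/4)
            + |f'' b| * (b-a) * (lam*(b-a)*x/2 - (x-a)^2/4))
      · intro x hx
        rw [huIcc1] at hx
        have hxb : x < b := lt_of_le_of_lt hx.2 hm2
        have hbx : b - x ≠ 0 := ne_of_gt (by linarith)
        have hlog : HasDerivAt (fun y : ℝ => Real.log (b - y)) ((0-1)/(b-x)) x :=
          HasDerivAt.log ((hasDerivAt_const x b).sub (hasDerivAt_id' (x := x))) hbx
        have h1 := ((hlog.const_mul (-((lam-1)*(b-a)^2/2))).add
            (((hasDerivAt_id' (x := x)).const_mul ((2-lam)*(b-a))).div_const 2)).add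
            ((((hasDerivAt_const x b).sub (hasDerivAt_id' (x := x))).pow 2).div_const 4)
        have h2 := (((hasDerivAt_id' (x := x)).const_mul (lam*(b-a))).div_const 2).sub
            ((((hasDerivAt_id' (x := x)).sub_const a).pow 2).div_const 4)
        have h3 := (h1.const_mul (|f'' a| * (b-a))).add (h2.const_mul (|f'' b| * (b-a)))
        convert h3 using 1
        · rfl
        simp only [Pi.sub_apply]
        field_simp
        ring
      · exact hr1c.intervalIntegrable
    rw [hftc, hlogm1]
    ring
  have hFTC2 : ∫ x in ((a+b)/2)..b, (|f'' a| * (b-a)*((lam*(b-a)-(b-x))/2)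
      + |f'' b| * (b-a)*((b-x)*(lam*(b-a)-(b-x))/(2*(x-a))))
      = |f'' a| * (b-a)^3*((4*lam-1)/16)
        + |f'' b| * (b-a)^3*((lam-1)*Real.log 2/2 + (2-lam)/4 - 3/16) := by
    have hftc : ∫ x in ((a+b)/2)..b, (|f'' a| * (b-a)*((lam*(b-a)-(b-x))/2)
        + |f'' b| * (b-a)*((b-x)*(lam*(b-a)-(b-x))/(2*(x-a))))
        = (|f'' a| * (b-a) * (lam*(b-a)*b/2 + (b-b)^2/4)
            + |f'' b| * (b-a) * ((lam-1)*(b-a)^2/2 * Real.log (b-a)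
              + (2-lam)*(b-a)*b/2 - (b-a)^2/4))
          - (|f'' a| * (b-a) * (lam*(b-a)*((a+b)/2)/2 + (b-((a+b)/2))^2/4)
            + |f'' b| * (b-a) * ((lam-1)*(b-a)^2/2 * Real.log (((a+b)/2)-a)
              + (2-lam)*(b-a)*((a+b)/2)/2 - (((a+b)/2)-a)^2/4)) := by
      apply intervalIntegral.integral_eq_sub_of_hasDerivAt
        (f := fun x => |f'' a| * (b-a) * (lam*(b-a)*x/2 + (b-x)^2/4)
            + |f'' b| * (b-a) * ((lam-1)*(b-a)^2/2 * Real.log (x-a)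
              + (2-lam)*(b-a)*x/2 - (x-a)^2/4))
      · intro x hx
        rw [huIcc2] at hx
        have hax : a < x := lt_of_lt_of_le hm1 hx.1
        have hxa : x - a ≠ 0 := ne_of_gt (by linarith)
        have hlog : HasDerivAt (fun y : ℝ => Real.log (y - a)) ((1-0)/(x-a)) x :=
          HasDerivAt.log ((hasDerivAt_id' (x := x)).sub (hasDerivAt_const x a)) hxa
        have h1 := (((hasDerivAt_id' (x := x)).const_mul (lam*(b-a))).div_const 2).add
            ((((hasDerivAt_const x b).sub (hasDerivAt_id' (x := x))).pow 2).div_const 4)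
        have h2 := ((hlog.const_mul ((lam-1)*(b-a)^2/2)).add
            (((hasDerivAt_id' (x := x)).const_mul ((2-lam)*(b-a))).div_const 2)).sub
            ((((hasDerivAt_id' (x := x)).sub_const a).pow 2).div_const 4)
        have h3 := (h1.const_mul (|f'' a| * (b-a))).add (h2.const_mul (|f'' b| * (b-a)))
        convert h3 using 1
        · rfl
        simp only [Pi.sub_apply]
        field_simp
        ring
      · exact hr2c.intervalIntegrable
    rw [hftc, hlogm2]
    ring
  -- assemble everything
  have hA1 : |∫ x in a..(a+b)/2, (x-a)*((x-a)-lam*(b-a))/2 * f'' x|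
      ≤ |f'' a| * (b-a)^3*((lam-1)*Real.log 2/2 + (2-lam)/4 - 3/16)
        + |f'' b| * (b-a)^3*((4*lam-1)/16) :=
    (intervalIntegral.abs_integral_le_integral_abs hm1.le).trans
      (hmono1.trans (le_of_eq hFTC1))
  have hA2 : |∫ x in ((a+b)/2)..b, (b-x)*((b-x)-lam*(b-a))/2 * f'' x|
      ≤ |f'' a| * (b-a)^3*((4*lam-1)/16)
        + |f'' b| * (b-a)^3*((lam-1)*Real.log 2/2 + (2-lam)/4 - 3/16) :=
    (intervalIntegral.abs_integral_le_integral_abs hm2.le).trans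
      (hmono2.trans (le_of_eq hFTC2))
  have hrepr : (lam - 1) * f ((a + b) / 2) - lam * (f a + f b) / 2
      + (1 / (b - a)) * ∫ x in a..b, f x
      = ((∫ x in a..(a+b)/2, (x-a)*((x-a)-lam*(b-a))/2 * f'' x)
          + ∫ x in ((a+b)/2)..b, (b-x)*((b-x)-lam*(b-a))/2 * f'' x) / (b-a) := by
    rw [eq_div_iff (ne_of_gt hba), hsum]
    field_simp
  rw [hrepr, abs_div, abs_of_pos hba]
  have habs_sum := (abs_add_le (∫ x in a..(a+b)/2, (x-a)*((x-a)-lam*(b-a))/2 * f'' x)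
      (∫ x in ((a+b)/2)..b, (b-x)*((b-x)-lam*(b-a))/2 * f'' x)).trans (add_le_add hA1 hA2)
  calc _ ≤ ((|f'' a| * (b-a)^3*((lam-1)*Real.log 2/2 + (2-lam)/4 - 3/16)
        + |f'' b| * (b-a)^3*((4*lam-1)/16))
      + (|f'' a| * (b-a)^3*((4*lam-1)/16)
        + |f'' b| * (b-a)^3*((lam-1)*Real.log 2/2 + (2-lam)/4 - 3/16))) / (b-a) :=
      (div_le_div_iff_of_pos_right hba).mpr habs_sum
    _ = (b - a) ^ 2 / 2 * ((lam - 1) * Real.log 2 + 1 / 2) * (|f'' a| + |f'' b|) := by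
      field_simp
      ring
end

section
/- Let I ⊂ ℝ be an open interval, a, b ∈ I with a < b, f : I → ℝ a twice differentiable mapping such that f'' is integrable on [a,b], and suppose |f''| belongs to the Godunova-Levin class Q(I). Then |(1/(b−a))·∫ₐᵇ f(x) dx − f((a+b)/2)| ≤ ((b−a)²/4) · ln(4/e) · (|f''(a)| + |f''(b)|). -/
open MeasureTheory Set Real

lemma int_aux1 (a b : ℝ) (hab : a < b) :
    ∫ x in a..(a+b)/2, (x-a)^2/(b-x) = (b-a)^2 * (Real.log 2 - 5/8) := by
  have ham : a ≤ (a+b)/2 := by linarith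
  have hmb : (a+b)/2 < b := by linarith
  have hicc : Set.uIcc a ((a+b)/2) = Set.Icc a ((a+b)/2) := Set.uIcc_of_le ham
  have hne : ∀ x ∈ Set.uIcc a ((a+b)/2), b - x ≠ 0 := by
    intro x hx
    rw [hicc] at hx
    intro h; nlinarith [hx.2]
  have key : ∀ x ∈ Set.uIcc a ((a+b)/2),
      HasDerivAt (fun x => -(b-x)^2/2 - 2*(b-a)*x - (b-a)^2 * Real.log (b-x))
        ((x-a)^2/(b-x)) x := by
    intro x hx
    have hbx : b - x ≠ 0 := hne x hx
    have h1 : HasDerivAt (fun x : ℝ => b - x) (-1) x := by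
      simpa using (hasDerivAt_id x).const_sub b
    have h2 : HasDerivAt (fun x : ℝ => -(b-x)^2/2 - 2*(b-a)*x - (b-a)^2 * Real.log (b-x))
        (-(2*(b-x)*(-1))/2 - 2*(b-a) - (b-a)^2 * ((-1)/(b-x))) x := by
      exact ((((h1.pow 2).neg.div_const 2).sub (by simpa using (hasDerivAt_id x).const_mul (2*(b-a)) : HasDerivAt (fun y : ℝ => 2*(b-a)*y) (2*(b-a)) x)).sub
        ((h1.log hbx).const_mul ((b-a)^2))).congr_deriv (by push_cast; ring)
    convert h2 using 1
    field_simp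
    ring
  have hcont : IntervalIntegrable (fun x => (x-a)^2/(b-x)) volume a ((a+b)/2) := by
    apply ContinuousOn.intervalIntegrable
    exact (ContinuousOn.div (by fun_prop) (by fun_prop) hne)
  rw [intervalIntegral.integral_eq_sub_of_hasDerivAt key hcont]
  have h1 : b - (a+b)/2 = (b-a)/2 := by ring
  rw [h1, Real.log_div (by linarith) (by norm_num)]
  ring

lemma int_aux2 (a b : ℝ) (hab : a < b) :
    ∫ x in ((a+b)/2)..b, (b-x)^2/(x-a) = (b-a)^2 * (Real.log 2 - 5/8) := by
  have hmb : (a+b)/2 ≤ b := by linarith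
  have hicc : Set.uIcc ((a+b)/2) b = Set.Icc ((a+b)/2) b := Set.uIcc_of_le hmb
  have hne : ∀ x ∈ Set.uIcc ((a+b)/2) b, x - a ≠ 0 := by
    intro x hx
    rw [hicc] at hx
    intro h; nlinarith [hx.1]
  have key : ∀ x ∈ Set.uIcc ((a+b)/2) b,
      HasDerivAt (fun x => (x-a)^2/2 - 2*(b-a)*x + (b-a)^2 * Real.log (x-a))
        ((b-x)^2/(x-a)) x := by
    intro x hx
    have hxa : x - a ≠ 0 := hne x hx
    have h1 : HasDerivAt (fun x : ℝ => x - a) 1 x := by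
      simpa using (hasDerivAt_id x).sub_const a
    have h2 : HasDerivAt (fun x : ℝ => (x-a)^2/2 - 2*(b-a)*x + (b-a)^2 * Real.log (x-a))
        ((2*(x-a)*1)/2 - 2*(b-a) + (b-a)^2 * (1/(x-a))) x := by
      exact ((((h1.pow 2).div_const 2).sub (by simpa using (hasDerivAt_id x).const_mul (2*(b-a)) : HasDerivAt (fun y : ℝ => 2*(b-a)*y) (2*(b-a)) x)).add
        ((h1.log hxa).const_mul ((b-a)^2))).congr_deriv (by push_cast; ring)
    convert h2 using 1
    field_simp
    ring
  have hcont : IntervalIntegrable (fun x => (b-x)^2/(x-a)) volume ((a+b)/2) b := by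
    apply ContinuousOn.intervalIntegrable
    exact (ContinuousOn.div (by fun_prop) (by fun_prop) hne)
  rw [intervalIntegral.integral_eq_sub_of_hasDerivAt key hcont]
  have h1 : (a+b)/2 - a = (b-a)/2 := by ring
  rw [h1, Real.log_div (by linarith) (by norm_num)]
  ring

lemma int_aux3 (a b : ℝ) :
    ∫ x in a..(a+b)/2, (x-a) = (b-a)^2/8 := by
  have key : ∀ x ∈ Set.uIcc a ((a+b)/2),
      HasDerivAt (fun x => (x-a)^2/2) (x-a) x := by
    intro x hx
    have h1 : HasDerivAt (fun x : ℝ => x - a) 1 x := by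
      simpa using (hasDerivAt_id x).sub_const a
    simpa using (h1.pow 2).div_const 2
  rw [intervalIntegral.integral_eq_sub_of_hasDerivAt key
    (ContinuousOn.intervalIntegrable (by fun_prop))]
  ring

lemma int_aux4 (a b : ℝ) :
    ∫ x in ((a+b)/2)..b, (b-x) = (b-a)^2/8 := by
  have key : ∀ x ∈ Set.uIcc ((a+b)/2) b,
      HasDerivAt (fun x => -(b-x)^2/2) (b-x) x := by
    intro x hx
    have h1 : HasDerivAt (fun x : ℝ => b - x) (-1) x := by
      simpa using (hasDerivAt_id x).const_sub b
    have := ((h1.pow 2).neg.div_const 2)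
    exact this.congr_deriv (by push_cast; ring)
  rw [intervalIntegral.integral_eq_sub_of_hasDerivAt key
    (ContinuousOn.intervalIntegrable (by fun_prop))]
  ring

set_option maxHeartbeats 1000000 in
theorem godunova_levin_midpoint_ineq
    (I : Set ℝ) (hI : IsOpen I) (hI' : I.OrdConnected)
    (a b : ℝ) (ha : a ∈ I) (hb : b ∈ I) (hab : a < b)
    (f f' f'' : ℝ → ℝ)
    (hf' : ∀ x ∈ I, HasDerivAt f (f' x) x)
    (hf'' : ∀ x ∈ I, HasDerivAt f' (f'' x) x)
    (hint : IntervalIntegrable f'' volume a b)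
    (hQ : GodunovaLevin I (fun x => |f'' x|)) :
    |(1 / (b - a)) * (∫ x in a..b, f x) - f ((a + b) / 2)|
      ≤ ((b - a) ^ 2 / 4) * Real.log (4 / Real.exp 1) * (|f'' a| + |f'' b|) := by
  have hba : (0:ℝ) < b - a := by linarith
  have ham : a ≤ (a+b)/2 := by linarith
  have hmb : (a+b)/2 ≤ b := by linarith
  have hsub : Set.Icc a b ⊆ I := hI'.out ha hb
  have hu1 : Set.uIcc a ((a+b)/2) ⊆ Set.Icc a b := by
    rw [Set.uIcc_of_le ham]; exact Set.Icc_subset_Icc le_rfl hmb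
  have hu2 : Set.uIcc ((a+b)/2) b ⊆ Set.Icc a b := by
    rw [Set.uIcc_of_le hmb]; exact Set.Icc_subset_Icc ham le_rfl
  have huab : Set.uIcc a b = Set.Icc a b := Set.uIcc_of_le hab.le
  have hfc : ContinuousOn f (Set.Icc a b) :=
    fun x hx => ((hf' x (hsub hx)).continuousAt).continuousWithinAt
  have hf'c : ContinuousOn f' (Set.Icc a b) :=
    fun x hx => ((hf'' x (hsub hx)).continuousAt).continuousWithinAt
  -- integrability on subintervals
  have hint1 : IntervalIntegrable f'' volume a ((a+b)/2) :=
    hint.mono_set (huab ▸ hu1)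
  have hint2 : IntervalIntegrable f'' volume ((a+b)/2) b :=
    hint.mono_set (huab ▸ hu2)
  have hf'i1 : IntervalIntegrable f' volume a ((a+b)/2) :=
    (hf'c.mono hu1).intervalIntegrable
  have hf'i2 : IntervalIntegrable f' volume ((a+b)/2) b :=
    (hf'c.mono hu2).intervalIntegrable
  -- integration by parts, four times
  have ibp1 : ∫ x in a..(a+b)/2, (x - a) * f' x
      = ((a+b)/2 - a) * f ((a+b)/2) - (a - a) * f a - ∫ x in a..(a+b)/2, 1 * f x := by
    apply intervalIntegral.integral_mul_deriv_eq_deriv_mul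
    · intro x hx; simpa using (hasDerivAt_id x).sub_const a
    · intro x hx; exact hf' x (hsub (hu1 hx))
    · exact intervalIntegrable_const
    · exact hf'i1
  have ibp2 : ∫ x in a..(a+b)/2, (x - a)^2/2 * f'' x
      = ((a+b)/2 - a)^2/2 * f' ((a+b)/2) - (a - a)^2/2 * f' a
        - ∫ x in a..(a+b)/2, (x - a) * f' x := by
    apply intervalIntegral.integral_mul_deriv_eq_deriv_mul
    · intro x hx
      have h1 : HasDerivAt (fun x : ℝ => x - a) 1 x := by
        simpa using (hasDerivAt_id x).sub_const a
      simpa using (h1.pow 2).div_const 2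
    · intro x hx; exact hf'' x (hsub (hu1 hx))
    · exact ContinuousOn.intervalIntegrable (by fun_prop)
    · exact hint1
  have ibp3 : ∫ x in ((a+b)/2)..b, (x - b) * f' x
      = (b - b) * f b - ((a+b)/2 - b) * f ((a+b)/2) - ∫ x in ((a+b)/2)..b, 1 * f x := by
    apply intervalIntegral.integral_mul_deriv_eq_deriv_mul
    · intro x hx; simpa using (hasDerivAt_id x).sub_const b
    · intro x hx; exact hf' x (hsub (hu2 hx))
    · exact intervalIntegrable_const
    · exact hf'i2
  have ibp4 : ∫ x in ((a+b)/2)..b, (x - b)^2/2 * f'' x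
      = (b - b)^2/2 * f' b - ((a+b)/2 - b)^2/2 * f' ((a+b)/2)
        - ∫ x in ((a+b)/2)..b, (x - b) * f' x := by
    apply intervalIntegral.integral_mul_deriv_eq_deriv_mul
    · intro x hx
      have h1 : HasDerivAt (fun x : ℝ => x - b) 1 x := by
        simpa using (hasDerivAt_id x).sub_const b
      simpa using (h1.pow 2).div_const 2
    · intro x hx; exact hf'' x (hsub (hu2 hx))
    · exact ContinuousOn.intervalIntegrable (by fun_prop)
    · exact hint2
  have hadd : (∫ x in a..(a+b)/2, f x) + (∫ x in ((a+b)/2)..b, f x) = ∫ x in a..b, f x :=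
    intervalIntegral.integral_add_adjacent_intervals
      ((hfc.mono hu1).intervalIntegrable) ((hfc.mono hu2).intervalIntegrable)
  have h1f : (∫ x in a..(a+b)/2, 1 * f x) = ∫ x in a..(a+b)/2, f x := by simp
  have h2f : (∫ x in ((a+b)/2)..b, 1 * f x) = ∫ x in ((a+b)/2)..b, f x := by simp
  -- the key identity
  have ident : ∫ x in a..b, f x
      = (b - a) * f ((a+b)/2) + (∫ x in a..(a+b)/2, (x - a)^2/2 * f'' x)
        + ∫ x in ((a+b)/2)..b, (x - b)^2/2 * f'' x := by
    rw [h1f] at ibp1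
    rw [h2f] at ibp3
    have := hadd
    nlinarith [ibp1, ibp2, ibp3, ibp4, hadd]
  set A := |f'' a| with hA
  set B := |f'' b| with hB
  set J1 := ∫ x in a..(a+b)/2, (x - a)^2/2 * f'' x with hJ1
  set J2 := ∫ x in ((a+b)/2)..b, (x - b)^2/2 * f'' x with hJ2
  -- pointwise bound from Godunova-Levin
  have hGL : ∀ x, a < x → x < b → |f'' x| ≤ A * (b-a)/(b-x) + B * (b-a)/(x-a) := by
    intro x hax hxb
    have hl0 : 0 < (b-x)/(b-a) := div_pos (by linarith) hba
    have hl1 : (b-x)/(b-a) < 1 := by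
      rw [div_lt_one hba]; linarith
    have hxeq : (b-x)/(b-a) * a + (1 - (b-x)/(b-a)) * b = x := by
      field_simp
      ring
    have := hQ.2 a ha b hb ((b-x)/(b-a)) hl0 hl1
    rw [hxeq] at this
    calc |f'' x| ≤ A / ((b-x)/(b-a)) + B / (1 - (b-x)/(b-a)) := this
      _ = A * (b-a)/(b-x) + B * (b-a)/(x-a) := by
          rw [div_div_eq_mul_div, show (1 - (b-x)/(b-a)) = (x-a)/(b-a) by field_simp; ring,
            div_div_eq_mul_div]
  -- bound J1
  have hb1 : |J1| ≤ (A*(b-a)/2) * ((b-a)^2 * (Real.log 2 - 5/8)) + (B*(b-a)/2) * ((b-a)^2/8) := by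
    have habs : |J1| ≤ ∫ x in a..(a+b)/2, |(x - a)^2/2 * f'' x| :=
      intervalIntegral.abs_integral_le_integral_abs ham
    have hmono : (∫ x in a..(a+b)/2, |(x - a)^2/2 * f'' x|)
        ≤ ∫ x in a..(a+b)/2, ((A*(b-a)/2) * ((x-a)^2/(b-x)) + (B*(b-a)/2) * (x-a)) := by
      apply intervalIntegral.integral_mono_on ham
      · exact (hint1.continuousOn_mul (by fun_prop)).abs
      · apply ContinuousOn.intervalIntegrable
        apply ContinuousOn.add
        · apply ContinuousOn.mul (by fun_prop)
          apply ContinuousOn.div (by fun_prop) (by fun_prop)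
          intro x hx
          rw [Set.uIcc_of_le ham] at hx
          intro h; nlinarith [hx.2]
        · fun_prop
      · intro x hx
        rcases eq_or_lt_of_le hx.1 with rfl | hax
        · simp
        · have hxb : x < b := by nlinarith [hx.2]
          have h0 : |(x - a)^2/2 * f'' x| = (x-a)^2/2 * |f'' x| := by
            rw [abs_mul, abs_of_nonneg (by positivity)]
          rw [h0]
          calc (x-a)^2/2 * |f'' x| ≤ (x-a)^2/2 * (A * (b-a)/(b-x) + B * (b-a)/(x-a)) := by
                apply mul_le_mul_of_nonneg_left (hGL x hax hxb) (by positivity)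
            _ = (A*(b-a)/2) * ((x-a)^2/(b-x)) + (B*(b-a)/2) * (x-a) := by
                have hn1 : b - x ≠ 0 := by linarith
                have hn2 : x - a ≠ 0 := by linarith
                field_simp
    have hsplit : (∫ x in a..(a+b)/2, ((A*(b-a)/2) * ((x-a)^2/(b-x)) + (B*(b-a)/2) * (x-a)))
        = (A*(b-a)/2) * ((b-a)^2 * (Real.log 2 - 5/8)) + (B*(b-a)/2) * ((b-a)^2/8) := by
      rw [← int_aux1 a b hab, ← int_aux3 a b, ← intervalIntegral.integral_const_mul,
        ← intervalIntegral.integral_const_mul, ← intervalIntegral.integral_add]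
      · apply ContinuousOn.intervalIntegrable
        apply ContinuousOn.mul (by fun_prop)
        apply ContinuousOn.div (by fun_prop) (by fun_prop)
        intro x hx
        rw [Set.uIcc_of_le ham] at hx
        intro h; nlinarith [hx.2]
      · exact ContinuousOn.intervalIntegrable (by fun_prop)
    linarith [habs.trans (hmono.trans_eq hsplit)]
  -- bound J2
  have hb2 : |J2| ≤ (A*(b-a)/2) * ((b-a)^2/8) + (B*(b-a)/2) * ((b-a)^2 * (Real.log 2 - 5/8)) := by
    have habs : |J2| ≤ ∫ x in ((a+b)/2)..b, |(x - b)^2/2 * f'' x| :=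
      intervalIntegral.abs_integral_le_integral_abs hmb
    have hmono : (∫ x in ((a+b)/2)..b, |(x - b)^2/2 * f'' x|)
        ≤ ∫ x in ((a+b)/2)..b, ((A*(b-a)/2) * (b-x) + (B*(b-a)/2) * ((b-x)^2/(x-a))) := by
      apply intervalIntegral.integral_mono_on hmb
      · exact (hint2.continuousOn_mul (by fun_prop)).abs
      · apply ContinuousOn.intervalIntegrable
        apply ContinuousOn.add (by fun_prop)
        apply ContinuousOn.mul (by fun_prop)
        apply ContinuousOn.div (by fun_prop) (by fun_prop)
        intro x hx
        rw [Set.uIcc_of_le hmb] at hx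
        intro h; nlinarith [hx.1]
      · intro x hx
        rcases eq_or_lt_of_le hx.2 with rfl | hxb
        · simp
        · have hax : a < x := by nlinarith [hx.1]
          have h0 : |(x - b)^2/2 * f'' x| = (b-x)^2/2 * |f'' x| := by
            rw [abs_mul, abs_of_nonneg (by positivity), show (x-b)^2 = (b-x)^2 by ring]
          rw [h0]
          calc (b-x)^2/2 * |f'' x| ≤ (b-x)^2/2 * (A * (b-a)/(b-x) + B * (b-a)/(x-a)) := by
                apply mul_le_mul_of_nonneg_left (hGL x hax hxb) (by positivity)
            _ = (A*(b-a)/2) * (b-x) + (B*(b-a)/2) * ((b-x)^2/(x-a)) := by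
                have hn1 : b - x ≠ 0 := by linarith
                have hn2 : x - a ≠ 0 := by linarith
                field_simp
    have hsplit : (∫ x in ((a+b)/2)..b, ((A*(b-a)/2) * (b-x) + (B*(b-a)/2) * ((b-x)^2/(x-a))))
        = (A*(b-a)/2) * ((b-a)^2/8) + (B*(b-a)/2) * ((b-a)^2 * (Real.log 2 - 5/8)) := by
      rw [← int_aux2 a b hab, ← int_aux4 a b, ← intervalIntegral.integral_const_mul,
        ← intervalIntegral.integral_const_mul, ← intervalIntegral.integral_add]
      · exact ContinuousOn.intervalIntegrable (by fun_prop)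
      · apply ContinuousOn.intervalIntegrable
        apply ContinuousOn.mul (by fun_prop)
        apply ContinuousOn.div (by fun_prop) (by fun_prop)
        intro x hx
        rw [Set.uIcc_of_le hmb] at hx
        intro h; nlinarith [hx.1]
    linarith [habs.trans (hmono.trans_eq hsplit)]
  -- assemble
  have hL : (1 / (b - a)) * (∫ x in a..b, f x) - f ((a + b) / 2) = (J1 + J2) / (b - a) := by
    rw [ident]
    field_simp
    ring
  rw [hL, abs_div, abs_of_pos hba]
  have hlog : Real.log (4 / Real.exp 1) = 2 * Real.log 2 - 1 := by
    rw [Real.log_div (by norm_num) (Real.exp_ne_zero 1), Real.log_exp,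
      show (4:ℝ) = 2^2 by norm_num, Real.log_pow]
    push_cast; ring
  rw [hlog]
  rw [div_le_iff₀ hba]
  calc |J1 + J2| ≤ |J1| + |J2| := abs_add_le _ _
    _ ≤ ((A*(b-a)/2) * ((b-a)^2 * (Real.log 2 - 5/8)) + (B*(b-a)/2) * ((b-a)^2/8))
        + ((A*(b-a)/2) * ((b-a)^2/8) + (B*(b-a)/2) * ((b-a)^2 * (Real.log 2 - 5/8))) :=
      add_le_add hb1 hb2
    _ = (b - a) ^ 2 / 4 * (2 * Real.log 2 - 1) * (A + B) * (b - a) := by ring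
end

section
/- Let I ⊂ ℝ be an open interval, a, b ∈ I with a < b, f : I → ℝ a twice differentiable mapping such that f'' is integrable on [a,b], and suppose |f''| belongs to the Godunova-Levin class Q(I). Then |(1/(b−a))·∫ₐᵇ f(x) dx − (f(a)+f(b))/2| ≤ ((b−a)²/2) · (1/2) · (|f''(a)| + |f''(b)|). -/
open MeasureTheory Set Real

set_option maxHeartbeats 1000000 in
theorem godunova_levin_trapezoid_ineq
    (I : Set ℝ) (hI : IsOpen I) (hI' : I.OrdConnected)
    (a b : ℝ) (ha : a ∈ I) (hb : b ∈ I) (hab : a < b)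
    (f f' f'' : ℝ → ℝ)
    (hf' : ∀ x ∈ I, HasDerivAt f (f' x) x)
    (hf'' : ∀ x ∈ I, HasDerivAt f' (f'' x) x)
    (hint : IntervalIntegrable f'' volume a b)
    (hQ : GodunovaLevin I (fun x => |f'' x|)) :
    |(1 / (b - a)) * (∫ x in a..b, f x) - (f a + f b) / 2|
      ≤ ((b - a) ^ 2 / 2) * (1 / 2) * (|f'' a| + |f'' b|) := by
  have hba : (0:ℝ) < b - a := sub_pos.mpr hab
  have hIcc : Set.Icc a b ⊆ I := hI'.out ha hb
  have huIcc : Set.uIcc a b ⊆ I := by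
    rw [Set.uIcc_of_le hab.le]; exact hIcc
  set A := |f'' a| with hA
  set B := |f'' b| with hB
  -- derivative of the auxiliary function
  have hG : ∀ x ∈ Set.uIcc a b,
      HasDerivAt (fun y => (y - a) * (b - y) * f' y - (a + b - 2 * y) * f y)
        ((x - a) * (b - x) * f'' x + 2 * f x) x := by
    intro x hx
    have hxI : x ∈ I := huIcc hx
    have h1 : HasDerivAt (fun y : ℝ => (y - a) * (b - y)) (a + b - 2 * x) x := by
      have := ((hasDerivAt_id x).sub_const a).mul
        ((hasDerivAt_const x b).sub (hasDerivAt_id x))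
      refine this.congr_deriv ?_
      simp; ring
    have h2 := h1.mul (hf'' x hxI)
    have h3 : HasDerivAt (fun y : ℝ => a + b - 2 * y) (-2) x := by
      have := (hasDerivAt_const x (a + b)).sub ((hasDerivAt_id x).const_mul 2)
      refine this.congr_deriv ?_
      norm_num
    have h4 := h3.mul (hf' x hxI)
    refine (h2.sub h4).congr_deriv ?_
    ring
  -- continuity facts
  have hfc : ContinuousOn f (Set.uIcc a b) := fun x hx =>
    (hf' x (huIcc hx)).continuousAt.continuousWithinAt
  have hu : Continuous fun x : ℝ => (x - a) * (b - x) := by continuity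
  have hintu : IntervalIntegrable (fun x => (x - a) * (b - x) * f'' x) volume a b :=
    hint.continuousOn_mul (hu.continuousOn)
  have h2f : IntervalIntegrable (fun x => 2 * f x) volume a b :=
    (continuousOn_const.mul hfc).intervalIntegrable
  have key := intervalIntegral.integral_eq_sub_of_hasDerivAt hG (hintu.add h2f)
  rw [intervalIntegral.integral_add hintu h2f, intervalIntegral.integral_const_mul] at key
  have hId : (∫ x in a..b, (x - a) * (b - x) * f'' x)
      = (b - a) * (f a + f b) - 2 * ∫ x in a..b, f x := by
    have hGb : ((b - a) * (b - b) * f' b - (a + b - 2 * b) * f b)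
        - ((a - a) * (b - a) * f' a - (a + b - 2 * a) * f a)
        = (b - a) * (f a + f b) := by ring
    linarith [key, hGb]
  have hL : (1 / (b - a)) * (∫ x in a..b, f x) - (f a + f b) / 2
      = -(1 / (2 * (b - a))) * ∫ x in a..b, (x - a) * (b - x) * f'' x := by
    rw [hId]; field_simp; ring
  -- pointwise bound
  have hpt : ∀ x ∈ Set.Icc a b,
      |(x - a) * (b - x) * f'' x| ≤ (b - a) * ((x - a) * A + (b - x) * B) := by
    intro x hx
    have hxa : 0 ≤ x - a := sub_nonneg.mpr hx.1
    have hbx : 0 ≤ b - x := sub_nonneg.mpr hx.2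
    rw [abs_mul, abs_of_nonneg (mul_nonneg hxa hbx)]
    have hAnn : 0 ≤ A := abs_nonneg _
    have hBnn : 0 ≤ B := abs_nonneg _
    rcases eq_or_lt_of_le hx.1 with h1 | h1
    · simp [← h1]
      positivity
    rcases eq_or_lt_of_le hx.2 with h2 | h2
    · simp [h2]
      positivity
    · -- interior case
      have hxa' : 0 < x - a := sub_pos.mpr h1
      have hbx' : 0 < b - x := sub_pos.mpr h2
      set l : ℝ := (b - x) / (b - a) with hl
      have hl0 : 0 < l := div_pos hbx' hba
      have hl1 : l < 1 := (div_lt_one hba).mpr (by linarith)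
      have hx' : l * a + (1 - l) * b = x := by
        rw [hl]; field_simp; ring
      have := hQ.2 a ha b hb l hl0 hl1
      rw [hx'] at this
      have h1l : 1 - l = (x - a) / (b - a) := by
        rw [hl]; field_simp; ring
      have hbound : |f'' x| ≤ (b - a) * A / (b - x) + (b - a) * B / (x - a) := by
        calc |f'' x| ≤ A / l + B / (1 - l) := this
          _ = (b - a) * A / (b - x) + (b - a) * B / (x - a) := by
              rw [h1l, hl]
              field_simp
      calc (x - a) * (b - x) * |f'' x|
          ≤ (x - a) * (b - x) * ((b - a) * A / (b - x) + (b - a) * B / (x - a)) := by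
            apply mul_le_mul_of_nonneg_left hbound (by positivity)
        _ = (b - a) * ((x - a) * A + (b - x) * B) := by
            field_simp
  -- integrate the bound
  have hrc : Continuous fun x : ℝ => (b - a) * ((x - a) * A + (b - x) * B) := by continuity
  have habs_le : (∫ x in a..b, |(x - a) * (b - x) * f'' x|)
      ≤ ∫ x in a..b, (b - a) * ((x - a) * A + (b - x) * B) :=
    intervalIntegral.integral_mono_on hab.le hintu.abs
      (hrc.intervalIntegrable a b) hpt
  have hRint : (∫ x in a..b, (b - a) * ((x - a) * A + (b - x) * B))
      = (b - a) * ((b - a) ^ 2 / 2 * (A + B)) := by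
    have hP : ∀ x ∈ Set.uIcc a b,
        HasDerivAt (fun y => (b - a) * ((y - a) ^ 2 / 2 * A - (b - y) ^ 2 / 2 * B))
          ((b - a) * ((x - a) * A + (b - x) * B)) x := by
      intro x _
      have h1 : HasDerivAt (fun y : ℝ => (y - a) ^ 2 / 2 * A - (b - y) ^ 2 / 2 * B)
          ((x - a) * A + (b - x) * B) x := by
        have ha1 : HasDerivAt (fun y : ℝ => (y - a) ^ 2) (2 * (x - a)) x := by
          have := ((hasDerivAt_id x).sub_const a).pow 2
          refine this.congr_deriv ?_
          simp
        have hb1 : HasDerivAt (fun y : ℝ => (b - y) ^ 2) (2 * (b - x) * (-1)) x := by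
          have := ((hasDerivAt_const x b).sub (hasDerivAt_id x)).pow 2
          refine this.congr_deriv ?_
          simp
        have := ((ha1.div_const 2).mul_const A).sub ((hb1.div_const 2).mul_const B)
        refine this.congr_deriv ?_
        ring
      exact h1.const_mul (b - a)
    rw [intervalIntegral.integral_eq_sub_of_hasDerivAt hP
      ((hrc.intervalIntegrable a b))]
    ring
  have h3 : |∫ x in a..b, (x - a) * (b - x) * f'' x|
      ≤ (b - a) * ((b - a) ^ 2 / 2 * (A + B)) := by
    calc |∫ x in a..b, (x - a) * (b - x) * f'' x|
        ≤ ∫ x in a..b, |(x - a) * (b - x) * f'' x| :=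
          intervalIntegral.abs_integral_le_integral_abs hab.le
      _ ≤ _ := habs_le.trans_eq hRint
  rw [hL, abs_mul, abs_neg, abs_of_pos (by positivity : (0:ℝ) < 1 / (2 * (b - a)))]
  calc 1 / (2 * (b - a)) * |∫ x in a..b, (x - a) * (b - x) * f'' x|
      ≤ 1 / (2 * (b - a)) * ((b - a) * ((b - a) ^ 2 / 2 * (A + B))) := by
        apply mul_le_mul_of_nonneg_left h3 (by positivity)
    _ = ((b - a) ^ 2 / 2) * (1 / 2) * (A + B) := by
        field_simp
end

section
/- Let I ⊂ ℝ be an open interval, a, b ∈ I with a < b, f : I → ℝ a twice differentiable mapping such that f'' is integrable on [a,b], and suppose |f''| belongs to the Godunova-Levin class Q(I). Then |(1/6)·(f(a) + 4·f((a+b)/2) + f(b)) − (1/(b−a))·∫ₐᵇ f(x) dx| ≤ ((b−a)²/2) · [(2/3)·ln(8/9) + 1/6] · (|f''(a)| + |f''(b)|). -/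
open MeasureTheory Set Real

open intervalIntegral

noncomputable def G1 (a b x : ℝ) : ℝ :=
  (x - a)^2/4 + (b - a)*(x - a)/3 + (b - a)^2/3 * Real.log ((b - x)/(b - a))

lemma contOn_rat (a b u v : ℝ) (hv : v < b) (hu : u ≤ v) :
    ContinuousOn (fun x : ℝ => (x - a)*((2*a+b)/3 - x)/(2*(b - x))) (Set.uIcc u v) := by
  apply ContinuousOn.div
  · fun_prop
  · fun_prop
  · intro x hx
    rw [Set.uIcc_of_le hu] at hx
    have : x < b := lt_of_le_of_lt hx.2 hv
    intro h
    nlinarith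

lemma ftcA (a b u v : ℝ) (hab : a < b) (huv : u ≤ v) (hv : v < b) :
    ∫ x in u..v, (x - a)*((2*a+b)/3 - x)/(2*(b - x)) = G1 a b v - G1 a b u := by
  have hba : b - a ≠ 0 := by linarith
  apply integral_eq_sub_of_hasDerivAt
  · intro x hx
    rw [Set.uIcc_of_le huv] at hx
    have hxb : x < b := lt_of_le_of_lt hx.2 hv
    have hbx : b - x ≠ 0 := by linarith
    have harg : (b - x)/(b - a) ≠ 0 := div_ne_zero hbx hba
    have d1 : HasDerivAt (fun x : ℝ => (b - x)/(b - a)) (-1/(b - a)) x := by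
      have := ((hasDerivAt_id x).const_sub b).div_const (b - a)
      simpa using this
    have d2 : HasDerivAt (fun x : ℝ => Real.log ((b - x)/(b - a)))
        ((-1/(b - a)) / ((b - x)/(b - a))) x := d1.log harg
    have d3 := ((((hasDerivAt_id x).sub_const a).pow 2 |>.div_const 4).add
        ((((hasDerivAt_id x).sub_const a).const_mul (b-a)).div_const 3)).add
        (d2.const_mul ((b-a)^2/3))
    refine d3.congr_deriv ?_
    simp only [id_eq, Nat.cast_ofNat, pow_one]
    field_simp
    ring
  · exact (contOn_rat a b u v hv huv).intervalIntegrable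


lemma contOn_abs_rat (a b u v : ℝ) (hv : v < b) (hu : u ≤ v) :
    ContinuousOn (fun x : ℝ => (x - a)*|x - (2*a+b)/3|/(2*(b - x))) (Set.uIcc u v) := by
  apply ContinuousOn.div
  · fun_prop
  · fun_prop
  · intro x hx
    rw [Set.uIcc_of_le hu] at hx
    have : x < b := lt_of_le_of_lt hx.2 hv
    intro h
    nlinarith

lemma abs_int1 (a b : ℝ) (hab : a < b) :
    ∫ x in a..(a+b)/2, (x - a)*|x - (2*a+b)/3|/(2*(b - x))
      = (b - a)^2*(7/144) + (b - a)^2/3 * Real.log (8/9) := by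
  have hba : b - a ≠ 0 := by linarith
  have hc1 : a ≤ (2*a+b)/3 := by linarith
  have hc2 : (2*a+b)/3 ≤ (a+b)/2 := by linarith
  have hm : (a+b)/2 < b := by linarith
  have hcb : (2*a+b)/3 < b := by linarith
  have split : (∫ x in a..(2*a+b)/3, (x - a)*|x - (2*a+b)/3|/(2*(b - x)))
      + (∫ x in ((2*a+b)/3)..((a+b)/2), (x - a)*|x - (2*a+b)/3|/(2*(b - x)))
      = ∫ x in a..(a+b)/2, (x - a)*|x - (2*a+b)/3|/(2*(b - x)) :=
    integral_add_adjacent_intervals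
      ((contOn_abs_rat a b a _ hcb hc1).intervalIntegrable)
      ((contOn_abs_rat a b _ _ hm hc2).intervalIntegrable)
  have e1 : (∫ x in a..(2*a+b)/3, (x - a)*|x - (2*a+b)/3|/(2*(b - x)))
      = G1 a b ((2*a+b)/3) - G1 a b a := by
    rw [← ftcA a b a ((2*a+b)/3) hab hc1 hcb]
    apply integral_congr
    intro x hx
    rw [Set.uIcc_of_le hc1] at hx
    dsimp only
    rw [abs_of_nonpos (by linarith [hx.2])]
    ring
  have e2 : (∫ x in ((2*a+b)/3)..((a+b)/2), (x - a)*|x - (2*a+b)/3|/(2*(b - x)))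
      = -(G1 a b ((a+b)/2) - G1 a b ((2*a+b)/3)) := by
    rw [← ftcA a b ((2*a+b)/3) ((a+b)/2) hab hc2 hm, ← intervalIntegral.integral_neg]
    apply integral_congr
    intro x hx
    rw [Set.uIcc_of_le hc2] at hx
    dsimp only
    rw [abs_of_nonneg (by linarith [hx.1])]
    ring
  rw [← split, e1, e2]
  unfold G1
  rw [show (b - (2*a+b)/3)/(b - a) = 2/3 by field_simp; ring,
      show (b - (a+b)/2)/(b - a) = 1/2 by field_simp; ring,
      show (b - a)/(b - a) = 1 from div_self hba]
  rw [Real.log_one]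
  have l1 : Real.log (2/3) = Real.log 2 - Real.log 3 := Real.log_div (by norm_num) (by norm_num)
  have l2 : Real.log (1/2 : ℝ) = -Real.log 2 := by
    rw [show (1/2 : ℝ) = 2⁻¹ by norm_num, Real.log_inv]
  have l3 : Real.log (8/9 : ℝ) = 3*Real.log 2 - 2*Real.log 3 := by
    rw [Real.log_div (by norm_num) (by norm_num),
        show (8:ℝ) = 2^3 by norm_num, show (9:ℝ) = 3^2 by norm_num,
        Real.log_pow, Real.log_pow]
    push_cast; ring
  rw [l1, l2, l3]
  ring

lemma abs_int2 (a b : ℝ) (hab : a < b) :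
    ∫ x in a..(a+b)/2, |x - (2*a+b)/3|/2 = (b - a)^2*(5/144) := by
  have hc1 : a ≤ (2*a+b)/3 := by linarith
  have hc2 : (2*a+b)/3 ≤ (a+b)/2 := by linarith
  have split : (∫ x in a..(2*a+b)/3, |x - (2*a+b)/3|/2)
      + (∫ x in ((2*a+b)/3)..((a+b)/2), |x - (2*a+b)/3|/2)
      = ∫ x in a..(a+b)/2, |x - (2*a+b)/3|/2 :=
    integral_add_adjacent_intervals
      ((Continuous.continuousOn (by fun_prop)).intervalIntegrable)
      ((Continuous.continuousOn (by fun_prop)).intervalIntegrable)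
  have e1 : (∫ x in a..(2*a+b)/3, |x - (2*a+b)/3|/2)
      = (∫ x in a..(2*a+b)/3, ((2*a+b)/3 - x)/2) := by
    apply integral_congr
    intro x hx
    rw [Set.uIcc_of_le hc1] at hx
    dsimp only
    rw [abs_of_nonpos (by linarith [hx.2])]
    ring
  have e2 : (∫ x in ((2*a+b)/3)..((a+b)/2), |x - (2*a+b)/3|/2)
      = (∫ x in ((2*a+b)/3)..((a+b)/2), (x - (2*a+b)/3)/2) := by
    apply integral_congr
    intro x hx
    rw [Set.uIcc_of_le hc2] at hx
    dsimp only
    rw [abs_of_nonneg (by linarith [hx.1])]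
    try ring
  have f1 : (∫ x in a..(2*a+b)/3, ((2*a+b)/3 - x)/2)
      = -( ((2*a+b)/3 - (2*a+b)/3)^2/4) - -( ((2*a+b)/3 - a)^2/4) := by
    apply integral_eq_sub_of_hasDerivAt (f := fun x => -(((2*a+b)/3 - x)^2/4))
    · intro x hx
      have d := ((((hasDerivAt_id x).const_sub ((2*a+b)/3)).pow 2).div_const 4).neg
      refine d.congr_deriv ?_
      simp only [id_eq, Nat.cast_ofNat, pow_one]
      ring
    · exact (Continuous.continuousOn (by fun_prop)).intervalIntegrable
  have f2 : (∫ x in ((2*a+b)/3)..((a+b)/2), (x - (2*a+b)/3)/2)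
      = ((a+b)/2 - (2*a+b)/3)^2/4 - ((2*a+b)/3 - (2*a+b)/3)^2/4 := by
    apply integral_eq_sub_of_hasDerivAt (f := fun x => ((x - (2*a+b)/3)^2/4))
    · intro x hx
      have d := (((hasDerivAt_id x).sub_const ((2*a+b)/3)).pow 2).div_const 4
      refine d.congr_deriv ?_
      simp only [id_eq, Nat.cast_ofNat, pow_one]
      ring
    · exact (Continuous.continuousOn (by fun_prop)).intervalIntegrable
  rw [← split, e1, e2, f1, f2]
  ring

lemma contOn_abs_rat' (a b u v : ℝ) (hu : a < u) (huv : u ≤ v) :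
    ContinuousOn (fun x : ℝ => (b - x)*|x - (a+2*b)/3|/(2*(x - a))) (Set.uIcc u v) := by
  apply ContinuousOn.div
  · fun_prop
  · fun_prop
  · intro x hx
    rw [Set.uIcc_of_le huv] at hx
    have : a < x := lt_of_lt_of_le hu hx.1
    intro h
    nlinarith




lemma half_est (a b A B : ℝ) (hab : a < b) :
    ∫ x in a..(a+b)/2, (A * ((x - a)*|x - (2*a+b)/3|/(2*(b - x))) + B * (|x - (2*a+b)/3|/2))
      = A * ((b - a)^2*(7/144) + (b - a)^2/3 * Real.log (8/9)) + B * ((b - a)^2*(5/144)) := by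
  have hm : (a+b)/2 < b := by linarith
  have ham : a ≤ (a+b)/2 := by linarith
  have i1 : IntervalIntegrable (fun x : ℝ => (x - a)*|x - (2*a+b)/3|/(2*(b - x)))
      volume a ((a+b)/2) := (contOn_abs_rat a b a _ hm ham).intervalIntegrable
  have i2 : IntervalIntegrable (fun x : ℝ => |x - (2*a+b)/3|/2) volume a ((a+b)/2) :=
    (Continuous.continuousOn (by fun_prop)).intervalIntegrable
  rw [integral_add (i1.const_mul A) (i2.const_mul B), intervalIntegral.integral_const_mul, intervalIntegral.integral_const_mul,
      abs_int1 a b hab, abs_int2 a b hab]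

lemma half_est' (a b A B : ℝ) (hab : a < b) :
    ∫ x in ((a+b)/2)..b, (A * (|x - (a+2*b)/3|/2) + B * ((b - x)*|x - (a+2*b)/3|/(2*(x - a))))
      = A * ((b - a)^2*(5/144)) + B * ((b - a)^2*(7/144) + (b - a)^2/3 * Real.log (8/9)) := by
  have key := integral_comp_sub_left (a := a) (b := (a+b)/2)
    (fun x => A * (|x - (a+2*b)/3|/2) + B * ((b - x)*|x - (a+2*b)/3|/(2*(x - a)))) (a+b)
  rw [show a+b-(a+b)/2 = (a+b)/2 by ring, show a+b-a = b by ring] at key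
  rw [← key]
  have congr1 : ∀ x : ℝ,
      A * (|a+b-x - (a+2*b)/3|/2) + B * ((b - (a+b-x))*|a+b-x - (a+2*b)/3|/(2*(a+b-x - a)))
      = B * ((x - a)*|x - (2*a+b)/3|/(2*(b - x))) + A * (|x - (2*a+b)/3|/2) := by
    intro x
    rw [show a+b-x - (a+2*b)/3 = -(x - (2*a+b)/3) by ring, abs_neg,
        show b - (a+b-x) = x - a by ring, show a+b-x-a = b - x by ring]
    ring
  simp only [congr1]
  rw [half_est a b B A hab]
  ring






set_option maxHeartbeats 2000000 in
theorem godunova_levin_simpson_ineq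
    (I : Set ℝ) (hI : IsOpen I) (hI' : I.OrdConnected)
    (a b : ℝ) (ha : a ∈ I) (hb : b ∈ I) (hab : a < b)
    (f f' f'' : ℝ → ℝ)
    (hf' : ∀ x ∈ I, HasDerivAt f (f' x) x)
    (hf'' : ∀ x ∈ I, HasDerivAt f' (f'' x) x)
    (hint : IntervalIntegrable f'' volume a b)
    (hQ : GodunovaLevin I (fun x => |f'' x|)) :
    |(1 / 6) * (f a + 4 * f ((a + b) / 2) + f b) - (1 / (b - a)) * ∫ x in a..b, f x|
      ≤ ((b - a) ^ 2 / 2) * ((2 / 3) * Real.log (8 / 9) + 1 / 6) *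
          (|f'' a| + |f'' b|) := by
  have hba : (0:ℝ) < b - a := by linarith
  have hba' : b - a ≠ 0 := ne_of_gt hba
  have hsub : Icc a b ⊆ I := hI'.out ha hb
  have ham : a ≤ (a+b)/2 := by linarith
  have hmb : (a+b)/2 ≤ b := by linarith
  have hm : (a+b)/2 < b := by linarith
  have ham' : a < (a+b)/2 := by linarith
  -- continuity of f, f'
  have cf : ContinuousOn f (Icc a b) := fun x hx =>
    ((hf' x (hsub hx)).continuousAt).continuousWithinAt
  have fInt1 : IntervalIntegrable f volume a ((a+b)/2) :=
    (cf.mono (by rw [uIcc_of_le ham]; exact Icc_subset_Icc le_rfl hmb)).intervalIntegrable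
  have fInt2 : IntervalIntegrable f volume ((a+b)/2) b :=
    (cf.mono (by rw [uIcc_of_le hmb]; exact Icc_subset_Icc ham le_rfl)).intervalIntegrable
  have hsplit : (∫ x in a..(a+b)/2, f x) + (∫ x in ((a+b)/2)..b, f x) = ∫ x in a..b, f x :=
    integral_add_adjacent_intervals fInt1 fInt2
  have hint1 : IntervalIntegrable f'' volume a ((a+b)/2) :=
    hint.mono_set (by rw [uIcc_of_le ham, uIcc_of_le (le_of_lt hab)]; exact Icc_subset_Icc le_rfl hmb)
  have hint2 : IntervalIntegrable f'' volume ((a+b)/2) b :=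
    hint.mono_set (by rw [uIcc_of_le hmb, uIcc_of_le (le_of_lt hab)]; exact Icc_subset_Icc ham le_rfl)
  have cK1 : Continuous (fun x : ℝ => (x - a)*((2*a+b)/3 - x)/(2*(b - a))) := by fun_prop
  have cK2 : Continuous (fun x : ℝ => (b - x)*(x - (a+2*b)/3)/(2*(b - a))) := by fun_prop
  have K1fInt : IntervalIntegrable (fun x => (x - a)*((2*a+b)/3 - x)/(2*(b - a)) * f'' x)
      volume a ((a+b)/2) := hint1.continuousOn_mul cK1.continuousOn
  have K2fInt : IntervalIntegrable (fun x => (b - x)*(x - (a+2*b)/3)/(2*(b - a)) * f'' x)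
      volume ((a+b)/2) b := hint2.continuousOn_mul cK2.continuousOn
  -- the identity
  have id1 : ∫ x in a..(a+b)/2, ((x - a)*((2*a+b)/3 - x)/(2*(b - a)) * f'' x + (1/(b - a)) * f x)
      = (((a+b)/2 - a)*((2*a+b)/3 - (a+b)/2)/(2*(b - a)) * f' ((a+b)/2)
          - (a + (2*a+b)/3 - 2*((a+b)/2))/(2*(b - a)) * f ((a+b)/2))
        - ((a - a)*((2*a+b)/3 - a)/(2*(b - a)) * f' a
          - (a + (2*a+b)/3 - 2*a)/(2*(b - a)) * f a) := by
    apply integral_eq_sub_of_hasDerivAt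
        (f := fun x => (x - a)*((2*a+b)/3 - x)/(2*(b - a)) * f' x
          - (a + (2*a+b)/3 - 2*x)/(2*(b - a)) * f x)
    · intro x hx
      rw [uIcc_of_le ham] at hx
      have hxI : x ∈ I := hsub ⟨hx.1, le_trans hx.2 hmb⟩
      have dK : HasDerivAt (fun x : ℝ => (x - a)*((2*a+b)/3 - x)/(2*(b - a)))
          ((a + (2*a+b)/3 - 2*x)/(2*(b - a))) x := by
        have := (((hasDerivAt_id x).sub_const a).mul
          ((hasDerivAt_const x ((2*a+b)/3)).sub (hasDerivAt_id x))).div_const (2*(b - a))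
        refine this.congr_deriv ?_
        try simp only [id_eq, Pi.sub_apply]
        ring
      have dK' : HasDerivAt (fun x : ℝ => (a + (2*a+b)/3 - 2*x)/(2*(b - a)))
          (-2/(2*(b - a))) x := by
        have := (((hasDerivAt_id x).const_mul 2).const_sub (a + (2*a+b)/3)).div_const (2*(b - a))
        refine this.congr_deriv ?_
        try simp only [id_eq, Pi.sub_apply]
        ring
      have d := (dK.mul (hf'' x hxI)).sub (dK'.mul (hf' x hxI))
      refine d.congr_deriv ?_
      field_simp
      ring
    · exact K1fInt.add (fInt1.const_mul (1/(b - a)))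
  have id2 : ∫ x in ((a+b)/2)..b, ((b - x)*(x - (a+2*b)/3)/(2*(b - a)) * f'' x + (1/(b - a)) * f x)
      = ((b - b)*(b - (a+2*b)/3)/(2*(b - a)) * f' b
          - (b + (a+2*b)/3 - 2*b)/(2*(b - a)) * f b)
        - ((b - (a+b)/2)*((a+b)/2 - (a+2*b)/3)/(2*(b - a)) * f' ((a+b)/2)
          - (b + (a+2*b)/3 - 2*((a+b)/2))/(2*(b - a)) * f ((a+b)/2)) := by
    apply integral_eq_sub_of_hasDerivAt
        (f := fun x => (b - x)*(x - (a+2*b)/3)/(2*(b - a)) * f' x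
          - (b + (a+2*b)/3 - 2*x)/(2*(b - a)) * f x)
    · intro x hx
      rw [uIcc_of_le hmb] at hx
      have hxI : x ∈ I := hsub ⟨le_trans ham hx.1, hx.2⟩
      have dK : HasDerivAt (fun x : ℝ => (b - x)*(x - (a+2*b)/3)/(2*(b - a)))
          ((b + (a+2*b)/3 - 2*x)/(2*(b - a))) x := by
        have := (((hasDerivAt_id x).const_sub b).mul
          ((hasDerivAt_id x).sub_const ((a+2*b)/3))).div_const (2*(b - a))
        refine this.congr_deriv ?_
        try simp only [id_eq, Pi.sub_apply]
        ring
      have dK' : HasDerivAt (fun x : ℝ => (b + (a+2*b)/3 - 2*x)/(2*(b - a)))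
          (-2/(2*(b - a))) x := by
        have := (((hasDerivAt_id x).const_mul 2).const_sub (b + (a+2*b)/3)).div_const (2*(b - a))
        refine this.congr_deriv ?_
        try simp only [id_eq, Pi.sub_apply]
        ring
      have d := (dK.mul (hf'' x hxI)).sub (dK'.mul (hf' x hxI))
      refine d.congr_deriv ?_
      field_simp
      ring
    · exact K2fInt.add (fInt2.const_mul (1/(b - a)))
  rw [integral_add K1fInt (fInt1.const_mul (1/(b - a))), intervalIntegral.integral_const_mul] at id1
  rw [integral_add K2fInt (fInt2.const_mul (1/(b - a))), intervalIntegral.integral_const_mul] at id2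
  have hS : (1 / 6) * (f a + 4 * f ((a + b) / 2) + f b) - (1 / (b - a)) * ∫ x in a..b, f x
      = (∫ x in a..(a+b)/2, (x - a)*((2*a+b)/3 - x)/(2*(b - a)) * f'' x)
        + (∫ x in ((a+b)/2)..b, (b - x)*(x - (a+2*b)/3)/(2*(b - a)) * f'' x) := by
    rw [← hsplit]
    have e1 : (∫ x in a..(a+b)/2, (x - a)*((2*a+b)/3 - x)/(2*(b - a)) * f'' x)
        = (((a+b)/2 - a)*((2*a+b)/3 - (a+b)/2)/(2*(b - a)) * f' ((a+b)/2)
          - (a + (2*a+b)/3 - 2*((a+b)/2))/(2*(b - a)) * f ((a+b)/2))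
        - ((a - a)*((2*a+b)/3 - a)/(2*(b - a)) * f' a
          - (a + (2*a+b)/3 - 2*a)/(2*(b - a)) * f a)
        - (1/(b - a)) * ∫ x in a..(a+b)/2, f x := by linarith
    have e2 : (∫ x in ((a+b)/2)..b, (b - x)*(x - (a+2*b)/3)/(2*(b - a)) * f'' x)
        = ((b - b)*(b - (a+2*b)/3)/(2*(b - a)) * f' b
          - (b + (a+2*b)/3 - 2*b)/(2*(b - a)) * f b)
        - ((b - (a+b)/2)*((a+b)/2 - (a+2*b)/3)/(2*(b - a)) * f' ((a+b)/2)
          - (b + (a+2*b)/3 - 2*((a+b)/2))/(2*(b - a)) * f ((a+b)/2))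
        - (1/(b - a)) * ∫ x in ((a+b)/2)..b, f x := by linarith
    rw [e1, e2]
    field_simp
    ring
  -- Godunova-Levin pointwise bound
  have glb : ∀ x, a < x → x < b →
      |f'' x| ≤ |f'' a| * ((b - a)/(b - x)) + |f'' b| * ((b - a)/(x - a)) := by
    intro x h1 h2
    have hbx : (0:ℝ) < b - x := by linarith
    have hxa : (0:ℝ) < x - a := by linarith
    have hl : 0 < (b - x)/(b - a) := div_pos hbx hba
    have hl' : (b - x)/(b - a) < 1 := by
      rw [div_lt_one hba]; linarith
    have h := hQ.2 a ha b hb ((b - x)/(b - a)) hl hl'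
    rw [show (b - x)/(b - a)*a + (1 - (b - x)/(b - a))*b = x by field_simp; ring] at h
    calc |f'' x| ≤ |f'' a| / ((b - x)/(b - a)) + |f'' b| / (1 - (b - x)/(b - a)) := h
      _ = |f'' a| * ((b - a)/(b - x)) + |f'' b| * ((b - a)/(x - a)) := by
          rw [show 1 - (b - x)/(b - a) = (x - a)/(b - a) by field_simp; ring]
          rw [div_div_eq_mul_div, div_div_eq_mul_div]
          ring
  -- a.e. bounds on each half
  have habs1 : IntervalIntegrable (fun x => |(x - a)*((2*a+b)/3 - x)/(2*(b - a)) * f'' x|)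
      volume a ((a+b)/2) := K1fInt.abs
  have habs2 : IntervalIntegrable (fun x => |(b - x)*(x - (a+2*b)/3)/(2*(b - a)) * f'' x|)
      volume ((a+b)/2) b := K2fInt.abs
  have hg1int : IntervalIntegrable (fun x => |f'' a| * ((x - a)*|x - (2*a+b)/3|/(2*(b - x)))
      + |f'' b| * (|x - (2*a+b)/3|/2)) volume a ((a+b)/2) :=
    ((continuousOn_const.mul (contOn_abs_rat a b a _ hm ham)).add
      (continuousOn_const.mul (Continuous.continuousOn (by fun_prop)))).intervalIntegrable
  have hg2int : IntervalIntegrable (fun x => |f'' a| * (|x - (a+2*b)/3|/2)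
      + |f'' b| * ((b - x)*|x - (a+2*b)/3|/(2*(x - a)))) volume ((a+b)/2) b :=
    ((continuousOn_const.mul (Continuous.continuousOn (by fun_prop))).add
      (continuousOn_const.mul (contOn_abs_rat' a b _ b ham' hmb))).intervalIntegrable
  have hne1 : ∀ᵐ (x:ℝ) ∂(volume.restrict (Icc a ((a+b)/2))), x ≠ a := by
    refine Filter.Eventually.filter_mono (MeasureTheory.ae_mono Measure.restrict_le_self) ?_
    rw [MeasureTheory.ae_iff]
    simp only [not_not, setOf_eq_eq_singleton]
    exact Real.volume_singleton
  have hne2 : ∀ᵐ (x:ℝ) ∂(volume.restrict (Icc ((a+b)/2) b)), x ≠ b := by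
    refine Filter.Eventually.filter_mono (MeasureTheory.ae_mono Measure.restrict_le_self) ?_
    rw [MeasureTheory.ae_iff]
    simp only [not_not, setOf_eq_eq_singleton]
    exact Real.volume_singleton
  have m1 : (∫ x in a..(a+b)/2, |(x - a)*((2*a+b)/3 - x)/(2*(b - a)) * f'' x|)
      ≤ ∫ x in a..(a+b)/2, (|f'' a| * ((x - a)*|x - (2*a+b)/3|/(2*(b - x)))
          + |f'' b| * (|x - (2*a+b)/3|/2)) := by
    apply integral_mono_ae_restrict ham habs1 hg1int
    filter_upwards [hne1, ae_restrict_mem measurableSet_Icc] with x hxa hx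
    have h1 : a < x := lt_of_le_of_ne hx.1 (Ne.symm hxa)
    have h2 : x < b := lt_of_le_of_lt hx.2 hm
    have hbx : (0:ℝ) < b - x := by linarith
    have hxa' : (0:ℝ) < x - a := by linarith
    have hK : |(x - a)*((2*a+b)/3 - x)/(2*(b - a))|
        = (x - a)*|x - (2*a+b)/3|/(2*(b - a)) := by
      rw [abs_div, abs_mul, abs_of_pos hxa', abs_of_pos (by linarith : (0:ℝ) < 2*(b - a)),
        abs_sub_comm]
    calc |(x - a)*((2*a+b)/3 - x)/(2*(b - a)) * f'' x|
        = |(x - a)*((2*a+b)/3 - x)/(2*(b - a))| * |f'' x| := abs_mul _ _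
      _ ≤ |(x - a)*((2*a+b)/3 - x)/(2*(b - a))| *
            (|f'' a| * ((b - a)/(b - x)) + |f'' b| * ((b - a)/(x - a))) :=
          mul_le_mul_of_nonneg_left (glb x h1 h2) (abs_nonneg _)
      _ = |f'' a| * ((x - a)*|x - (2*a+b)/3|/(2*(b - x)))
          + |f'' b| * (|x - (2*a+b)/3|/2) := by
          rw [hK]
          field_simp
  have m2 : (∫ x in ((a+b)/2)..b, |(b - x)*(x - (a+2*b)/3)/(2*(b - a)) * f'' x|)
      ≤ ∫ x in ((a+b)/2)..b, (|f'' a| * (|x - (a+2*b)/3|/2)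
          + |f'' b| * ((b - x)*|x - (a+2*b)/3|/(2*(x - a)))) := by
    apply integral_mono_ae_restrict hmb habs2 hg2int
    filter_upwards [hne2, ae_restrict_mem measurableSet_Icc] with x hxb hx
    have h2 : x < b := lt_of_le_of_ne hx.2 hxb
    have h1 : a < x := lt_of_lt_of_le ham' hx.1
    have hbx : (0:ℝ) < b - x := by linarith
    have hxa' : (0:ℝ) < x - a := by linarith
    have hK : |(b - x)*(x - (a+2*b)/3)/(2*(b - a))|
        = (b - x)*|x - (a+2*b)/3|/(2*(b - a)) := by
      rw [abs_div, abs_mul, abs_of_pos hbx, abs_of_pos (by linarith : (0:ℝ) < 2*(b - a))]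
    calc |(b - x)*(x - (a+2*b)/3)/(2*(b - a)) * f'' x|
        = |(b - x)*(x - (a+2*b)/3)/(2*(b - a))| * |f'' x| := abs_mul _ _
      _ ≤ |(b - x)*(x - (a+2*b)/3)/(2*(b - a))| *
            (|f'' a| * ((b - a)/(b - x)) + |f'' b| * ((b - a)/(x - a))) :=
          mul_le_mul_of_nonneg_left (glb x h1 h2) (abs_nonneg _)
      _ = |f'' a| * (|x - (a+2*b)/3|/2)
          + |f'' b| * ((b - x)*|x - (a+2*b)/3|/(2*(x - a))) := by
          rw [hK]
          field_simp
  rw [hS]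
  calc |(∫ x in a..(a+b)/2, (x - a)*((2*a+b)/3 - x)/(2*(b - a)) * f'' x)
        + (∫ x in ((a+b)/2)..b, (b - x)*(x - (a+2*b)/3)/(2*(b - a)) * f'' x)|
      ≤ |∫ x in a..(a+b)/2, (x - a)*((2*a+b)/3 - x)/(2*(b - a)) * f'' x|
        + |∫ x in ((a+b)/2)..b, (b - x)*(x - (a+2*b)/3)/(2*(b - a)) * f'' x| := abs_add_le _ _
    _ ≤ (∫ x in a..(a+b)/2, |(x - a)*((2*a+b)/3 - x)/(2*(b - a)) * f'' x|)
        + (∫ x in ((a+b)/2)..b, |(b - x)*(x - (a+2*b)/3)/(2*(b - a)) * f'' x|) :=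
        add_le_add (abs_integral_le_integral_abs ham) (abs_integral_le_integral_abs hmb)
    _ ≤ (∫ x in a..(a+b)/2, (|f'' a| * ((x - a)*|x - (2*a+b)/3|/(2*(b - x)))
          + |f'' b| * (|x - (2*a+b)/3|/2)))
        + (∫ x in ((a+b)/2)..b, (|f'' a| * (|x - (a+2*b)/3|/2)
          + |f'' b| * ((b - x)*|x - (a+2*b)/3|/(2*(x - a))))) := add_le_add m1 m2
    _ = ((b - a) ^ 2 / 2) * ((2 / 3) * Real.log (8 / 9) + 1 / 6) * (|f'' a| + |f'' b|) := by
        rw [half_est a b (|f'' a|) (|f'' b|) hab, half_est' a b (|f'' a|) (|f'' b|) hab]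
        ring
end
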